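/- arXiv:2507.02728 — 10 statements merged into one kernel-verified Lean document; each statement's English description precedes it below -/
import Mathlib

section
/- Let Σ = {c_1, …, c_σ} be a finite ordered alphabet, let n ≥ 1, and let n_1, …, n_σ be nonnegative integers with n_1 + … + n_σ = n − 1. Then the number of tries over Σ with n nodes in which exactly n_i edges are labeled c_i for each i (equivalently, the number of prefix-closed sets S of strings over Σ with |S| = n such that exactly n_i elements of S are nonempty strings ending with c_i) equals (1/n) · ∏_{i=1}^{σ} C(n, n_i), where C(n, m) denotes the binomial coefficient. -/
open Finset

namespace TrieAux

variable {σ : ℕ}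

abbrev Str (σ : ℕ) := List (Fin σ)

/-- basic lex fact: a proper extension is larger -/
lemma lt_append (s t : Str σ) (h : t ≠ []) : s < s ++ t := by
  induction s with
  | nil => rcases t with _|⟨a,u⟩
           · exact absurd rfl h
           · exact List.Lex.nil
  | cons a s ih => exact List.Lex.cons ih

lemma nil_le (l : Str σ) : [] ≤ l := by
  rcases l with _|⟨a,t⟩
  · exact le_refl _
  · exact le_of_lt List.Lex.nil

lemma concat_inj {s t : Str σ} {c d : Fin σ} (h : s ++ [c] = t ++ [d]) :
    s = t ∧ c = d := by
  have := List.append_inj' h rfl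
  exact ⟨this.1, by simpa using this.2⟩

/-- word with given column counts -/
def IsWord (n : ℕ) (nd : Fin σ → ℕ) (f : Fin n → Finset (Fin σ)) : Prop :=
  ∀ i, (univ.filter (fun j => i ∈ f j)).card = nd i

/-- prefix sums -/
def pref {n : ℕ} (f : Fin n → Finset (Fin σ)) (k : ℕ) : ℕ :=
  ∑ m ∈ range k, if h : m < n then (f ⟨m, h⟩).card else 0

def Dom {n : ℕ} (f : Fin n → Finset (Fin σ)) : Prop :=
  ∀ k, k < n → k ≤ pref f k

/-- total count of a word -/
lemma sum_card_of_isWord {n : ℕ} {nd : Fin σ → ℕ} {f : Fin n → Finset (Fin σ)}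
    (hf : IsWord n nd f) : ∑ j, (f j).card = ∑ i, nd i := by
  have : ∀ j, (f j).card = (univ.filter (fun i => i ∈ f j)).card := by
    intro j; congr 1; ext i; simp
  simp_rw [this, Finset.card_filter]
  rw [Finset.sum_comm]
  simp_rw [← Finset.card_filter]
  exact Finset.sum_congr rfl fun i _ => hf i

/-- number of words -/
lemma ncard_words (n : ℕ) (nd : Fin σ → ℕ) :
    {f : Fin n → Finset (Fin σ) | IsWord n nd f}.ncard = ∏ i, n.choose (nd i) := by
  classical
  rw [← Nat.card_coe_set_eq]
  have e : {f : Fin n → Finset (Fin σ) | IsWord n nd f} ≃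
      (Π i : Fin σ, {P : Finset (Fin n) // P.card = nd i}) := by
    refine Equiv.mk
      (fun f => fun i => ⟨univ.filter (fun j => i ∈ f.1 j), f.2 i⟩)
      (fun P => ⟨fun j => univ.filter (fun i => j ∈ (P i).1), ?_⟩) ?_ ?_
    · intro i
      rw [← (P i).2]
      congr 1; ext j; simp
    · intro f; ext j i; simp
    · intro P; ext i j; simp
  rw [Nat.card_congr e, Nat.card_pi]
  refine Finset.prod_congr rfl fun i _ => ?_
  rw [Nat.card_eq_fintype_card, Fintype.card_subtype]
  have : (filter (fun x : Finset (Fin n) => #x = nd i) univ) = Finset.powersetCard (nd i) univ := by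
    ext P; simp [Finset.mem_powersetCard_univ]
  rw [this, Finset.card_powersetCard, Finset.card_univ, Fintype.card_fin]

/-- The cycle lemma: a periodic sequence with window sum `n-1` has exactly one
rotation that dominates. -/
lemma cycle (n : ℕ) (hn : 0 < n) (a : ℕ → ℕ) (hper : ∀ m, a (m + n) = a m)
    (hsum : (∑ j ∈ range n, a j) + 1 = n) :
    ∃! r : ℕ, r < n ∧ ∀ k, k < n → (k : ℤ) ≤ ∑ j ∈ range k, (a (r + j) : ℤ) := by
  set g : ℕ → ℤ := fun m => (∑ j ∈ range m, (a j : ℤ)) - m with hg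
  have hwin : ∀ r k, ∑ j ∈ range k, (a (r + j) : ℤ) =
      (∑ j ∈ range (r + k), (a j : ℤ)) - ∑ j ∈ range r, (a j : ℤ) := by
    intro r k
    induction k with
    | zero => simp
    | succ k ih => rw [sum_range_succ, ih, ← add_assoc, sum_range_succ]; ring
  have hshiftsum : ∀ m, ∑ j ∈ range n, (a (m + j) : ℤ) = ∑ j ∈ range n, (a j : ℤ) := by
    intro m
    induction m with
    | zero => simp
    | succ m ih =>
      have h1 : ∑ j ∈ range (n+1), (a (m + j) : ℤ)
          = (∑ j ∈ range n, (a (m + (j+1)) : ℤ)) + a (m + 0) := Finset.sum_range_succ' _ n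
      have h2 : ∑ j ∈ range (n+1), (a (m + j) : ℤ)
          = (∑ j ∈ range n, (a (m + j) : ℤ)) + a (m + n) := Finset.sum_range_succ _ n
      have h3 : (∑ j ∈ range n, (a (m + (j+1)) : ℤ)) = ∑ j ∈ range n, (a ((m+1) + j) : ℤ) := by
        apply Finset.sum_congr rfl; intro j _; congr 2; omega
      have h4 : (a (m + n) : ℤ) = a (m + 0) := by rw [hper]; simp
      rw [h3] at h1
      rw [← ih]
      linarith [h1, h2, h4]
  have hsn : (∑ j ∈ range n, (a j : ℤ)) = (n : ℤ) - 1 := by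
    have hc : ((∑ j ∈ range n, a j : ℕ) : ℤ) = ∑ j ∈ range n, (a j : ℤ) := Nat.cast_sum _ _
    omega
  have gshift : ∀ m, g (m + n) = g m - 1 := by
    intro m
    have : ∑ j ∈ range (m + n), (a j : ℤ)
        = (∑ j ∈ range m, (a j : ℤ)) + ∑ j ∈ range n, (a (m + j) : ℤ) := by
      rw [Finset.sum_range_add]
    rw [hg]
    simp only []
    rw [this, hshiftsum, hsn]
    push_cast
    ring
  -- domination at r iff g stays above g r on the window
  have hdom : ∀ r, (∀ k, k < n → (k : ℤ) ≤ ∑ j ∈ range k, (a (r + j) : ℤ)) ↔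
      (∀ k, k < n → g r ≤ g (r + k)) := by
    intro r
    have : ∀ k, (∑ j ∈ range k, (a (r + j) : ℤ)) = g (r + k) - g r + k := by
      intro k; rw [hwin, hg]; push_cast; ring
    constructor
    · intro h k hk; have h2 := h k hk; rw [this k] at h2; omega
    · intro h k hk; rw [this k]; have h2 := h k hk; omega
  -- choose least argmin
  obtain ⟨μ, hμmem, hμmin⟩ :
      ∃ μ, (∃ m < n, g m = μ) ∧ ∀ m < n, μ ≤ g m := by
    have hne : (range n).Nonempty := ⟨0, mem_range.2 hn⟩
    refine ⟨(range n).inf' hne g, ?_, ?_⟩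
    · obtain ⟨m, hm, hmeq⟩ := Finset.exists_mem_eq_inf' hne g
      exact ⟨m, mem_range.1 hm, hmeq.symm⟩
    · intro m hm; exact Finset.inf'_le g (mem_range.2 hm)
  have hex : ∃ r, r < n ∧ g r = μ := hμmem
  set r := Nat.find hex with hr
  obtain ⟨hrn, hrμ⟩ : r < n ∧ g r = μ := Nat.find_spec hex
  have hlow : ∀ m, m < r → μ + 1 ≤ g m := by
    intro m hm
    have h1 : ¬(m < n ∧ g m = μ) := Nat.find_min hex hm
    have h2 : m < n := lt_trans hm hrn
    have := hμmin m h2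
    have : g m ≠ μ := fun h => h1 ⟨h2, h⟩
    omega
  have key : ∀ k, k < n → g r ≤ g (r + k) := by
    intro k hk
    rcases lt_or_ge (r + k) n with h | h
    · rw [hrμ]; exact hμmin _ h
    · have hmr : r + k - n < r := by omega
      have h5 := gshift (r + k - n)
      have h6 : r + k - n + n = r + k := by omega
      rw [h6] at h5
      rw [hrμ, h5]
      have := hlow _ hmr
      omega
  refine ⟨r, ⟨hrn, (hdom r).2 key⟩, ?_⟩
  rintro r' ⟨hr'n, hdr'⟩
  rw [hdom r'] at hdr'
  by_contra hne
  rcases lt_or_gt_of_ne hne with h | h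
  -- r' < r
  · have h1 : μ + 1 ≤ g r' := hlow _ h
    have h2 : g r' ≤ g (r' + (r - r')) := hdr' _ (by omega)
    have : r' + (r - r') = r := by omega
    rw [this, hrμ] at h2
    omega
  -- r < r'
  · have hk : r + n - r' < n := by omega
    have h2 : g r' ≤ g (r' + (r + n - r')) := hdr' _ hk
    have : r' + (r + n - r') = r + n := by omega
    rw [this, gshift, hrμ] at h2
    have := hμmin r' hr'n
    omega

section Rot
variable {n : ℕ}

def rot [NeZero n] (r : Fin n) (f : Fin n → Finset (Fin σ)) : Fin n → Finset (Fin σ) :=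
  fun j => f (j + r)

lemma rot_rot [NeZero n] (s t : Fin n) (f : Fin n → Finset (Fin σ)) :
    rot s (rot t f) = rot (s + t) f := by
  funext j; simp [rot, add_assoc]

lemma rot_zero [NeZero n] (f : Fin n → Finset (Fin σ)) : rot 0 f = f := by
  funext j; simp [rot]

lemma isWord_rot [NeZero n] {nd : Fin σ → ℕ} (r : Fin n) {f} (hf : IsWord n nd f) :
    IsWord n nd (rot r f) := by
  intro i
  rw [← hf i]
  apply Finset.card_bij (fun j _ => j + r)
  · intro j hj
    simp only [mem_filter, mem_univ, true_and, rot] at hj ⊢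
    exact (Finset.mem_filter.1 hj).2
  · intro j _ j' _ h
    exact add_right_cancel h
  · intro b hb
    refine ⟨b - r, ?_, by simp⟩
    simp only [mem_filter, mem_univ, true_and, rot] at hb ⊢
    exact Finset.mem_filter.2 ⟨mem_univ _, by simpa [rot] using hb⟩

lemma existsUnique_rot_dom [NeZero n] {f : Fin n → Finset (Fin σ)}
    (hsum : (∑ j, (f j).card) + 1 = n) : ∃! r : Fin n, Dom (rot r f) := by
  have hn : 0 < n := Nat.pos_of_neZero n
  set a : ℕ → ℕ := fun m => (f ⟨m % n, Nat.mod_lt _ hn⟩).card with ha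
  have hper : ∀ m, a (m + n) = a m := by intro m; simp [ha, Nat.add_mod_right]
  have hA : ∑ j ∈ range n, a j = ∑ j, (f j).card := by
    rw [← Fin.sum_univ_eq_sum_range]
    apply Finset.sum_congr rfl; intro j _
    have hj : (⟨(j : ℕ) % n, Nat.mod_lt _ hn⟩ : Fin n) = j :=
      Fin.ext (by simp [Nat.mod_eq_of_lt j.isLt])
    simp [ha, hj]
  have hsum' : (∑ j ∈ range n, a j) + 1 = n := by omega
  have hpref : ∀ (r : Fin n) (k : ℕ), k ≤ n →
      pref (rot r f) k = ∑ m ∈ range k, a ((r : ℕ) + m) := by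
    intro r k hk
    unfold pref
    apply Finset.sum_congr rfl
    intro m hm
    have hmn : m < n := lt_of_lt_of_le (mem_range.1 hm) hk
    rw [dif_pos hmn]
    show (f (⟨m, hmn⟩ + r)).card = a ((r : ℕ) + m)
    congr 2
    apply Fin.ext
    rw [Fin.val_add]
    simp [Nat.add_comm]
  have hkey : ∀ r : Fin n, Dom (rot r f) ↔
      ((r : ℕ) < n ∧ ∀ k, k < n → (k : ℤ) ≤ ∑ j ∈ range k, (a ((r : ℕ) + j) : ℤ)) := by
    intro r
    constructor
    · intro hD
      refine ⟨r.isLt, fun k hk => ?_⟩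
      have := hD k hk
      rw [hpref r k hk.le] at this
      have hc : ((∑ m ∈ range k, a ((r : ℕ) + m) : ℕ) : ℤ)
          = ∑ j ∈ range k, (a ((r : ℕ) + j) : ℤ) := Nat.cast_sum _ _
      omega
    · rintro ⟨-, h⟩ k hk
      have := h k hk
      rw [hpref r k hk.le]
      have hc : ((∑ m ∈ range k, a ((r : ℕ) + m) : ℕ) : ℤ)
          = ∑ j ∈ range k, (a ((r : ℕ) + j) : ℤ) := Nat.cast_sum _ _
      omega
  obtain ⟨r₀, hr₀, hru⟩ := cycle n hn a hper hsum'
  refine ⟨⟨r₀, hr₀.1⟩, (hkey _).2 (by simpa using hr₀), ?_⟩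
  intro r' hr'
  have : (r' : ℕ) = r₀ := hru (r' : ℕ) ((hkey r').1 hr')
  exact Fin.ext this

lemma ncard_words_eq_mul (hn : 0 < n) {nd : Fin σ → ℕ} (hsum : (∑ i, nd i) + 1 = n) :
    {f : Fin n → Finset (Fin σ) | IsWord n nd f}.ncard
      = n * {f : Fin n → Finset (Fin σ) | IsWord n nd f ∧ Dom f}.ncard := by
  haveI : NeZero n := ⟨hn.ne'⟩
  have hsumf : ∀ {f : Fin n → Finset (Fin σ)}, IsWord n nd f → (∑ j, (f j).card) + 1 = n :=
    fun hf => by rw [sum_card_of_isWord hf]; exact hsum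
  have e : Fin n × {f : Fin n → Finset (Fin σ) | IsWord n nd f ∧ Dom f} ≃
      {f : Fin n → Finset (Fin σ) | IsWord n nd f} := by
    refine Equiv.ofBijective
      (fun p => ⟨rot p.1 p.2.1, isWord_rot p.1 p.2.2.1⟩) ⟨?_, ?_⟩
    · rintro ⟨r, f, hf⟩ ⟨r', f', hf'⟩ h
      simp only [Subtype.mk.injEq] at h
      have h2 : rot (-r') (rot r f) = rot (-r') (rot r' f') := by rw [h]
      rw [rot_rot, rot_rot, neg_add_cancel, rot_zero] at h2
      obtain ⟨r₀, -, hu⟩ := existsUnique_rot_dom (hsumf hf.1)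
      have e1 : (-r' + r) = r₀ := hu _ (by show Dom (rot (-r' + r) f); rw [h2]; exact hf'.2)
      have e2 : (0 : Fin n) = r₀ := hu _ (by show Dom (rot 0 f); rw [rot_zero]; exact hf.2)
      have hrr : r = r' := by
        have : -r' + r = 0 := e1.trans e2.symm
        have := congrArg (fun x => r' + x) this
        simpa [← add_assoc] using this
      subst hrr
      have h3 : rot (-r) (rot r f) = rot (-r) (rot r f') := by rw [h]
      rw [rot_rot, rot_rot, neg_add_cancel, rot_zero, rot_zero] at h3
      simp [h3]
    · rintro ⟨g, hg⟩
      obtain ⟨r, hr, -⟩ := existsUnique_rot_dom (hsumf hg)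
      refine ⟨⟨-r, ⟨rot r g, isWord_rot r hg, hr⟩⟩, ?_⟩
      apply Subtype.ext
      show rot (-r) (rot r g) = g
      rw [rot_rot, neg_add_cancel, rot_zero]
  calc {f : Fin n → Finset (Fin σ) | IsWord n nd f}.ncard
      = Nat.card {f : Fin n → Finset (Fin σ) | IsWord n nd f} :=
        (Nat.card_coe_set_eq _).symm
    _ = Nat.card (Fin n × {f : Fin n → Finset (Fin σ) | IsWord n nd f ∧ Dom f}) :=
        (Nat.card_congr e).symm
    _ = n * {f : Fin n → Finset (Fin σ) | IsWord n nd f ∧ Dom f}.ncard := by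
        rw [Nat.card_prod, Nat.card_eq_fintype_card, Fintype.card_fin,
          Nat.card_coe_set_eq]

end Rot

section Enc

def IsTrie (n : ℕ) (nd : Fin σ → ℕ) (S : Finset (Str σ)) : Prop :=
  S.card = n ∧ ([] : Str σ) ∈ S ∧
    (∀ (s : Str σ) (c : Fin σ), s ++ [c] ∈ S → s ∈ S) ∧
    (∀ i : Fin σ, (S.filter (fun s => s.getLast? = some i)).card = nd i)

/-- the word encoding a trie: the `j`-th letter is the set of children of the
`j`-th node in lexicographic order -/
def enc (n : ℕ) (S : Finset (Str σ)) : Fin n → Finset (Fin σ) :=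
  if h : S.card = n then
    fun j => univ.filter (fun c => (S.orderEmbOfFin h j) ++ [c] ∈ S)
  else fun _ => ∅

variable {n : ℕ} {S : Finset (Str σ)}

lemma enc_apply (h : S.card = n) (j : Fin n) :
    enc n S j = univ.filter (fun c => (S.orderEmbOfFin h j) ++ [c] ∈ S) := by
  rw [enc, dif_pos h]

lemma mem_enc_iff (h : S.card = n) (j : Fin n) (c : Fin σ) :
    c ∈ enc n S j ↔ (S.orderEmbOfFin h j) ++ [c] ∈ S := by
  rw [enc_apply h, mem_filter]; simp

/-- index of an element of `S` -/
def idx (h : S.card = n) (t : Str σ) (ht : t ∈ S) : Fin n :=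
  (S.orderIsoOfFin h).symm ⟨t, ht⟩

lemma E_eq_iso (h : S.card = n) (j : Fin n) :
    S.orderEmbOfFin h j = ↑(S.orderIsoOfFin h j) := rfl

lemma E_idx (h : S.card = n) (t : Str σ) (ht : t ∈ S) :
    S.orderEmbOfFin h (idx h t ht) = t := by
  rw [E_eq_iso, idx, OrderIso.apply_symm_apply]

lemma idx_E (h : S.card = n) (j : Fin n) :
    idx h (S.orderEmbOfFin h j) (S.orderEmbOfFin_mem h j) = j := by
  have heq : (⟨S.orderEmbOfFin h j, S.orderEmbOfFin_mem h j⟩ : {x // x ∈ S})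
      = S.orderIsoOfFin h j := Subtype.ext (E_eq_iso h j).symm
  rw [idx, heq, OrderIso.symm_apply_apply]

lemma E_lt_E (h : S.card = n) {j j' : Fin n} :
    S.orderEmbOfFin h j < S.orderEmbOfFin h j' ↔ j < j' :=
  (S.orderEmbOfFin h).lt_iff_lt

lemma E_zero (h : S.card = n) (hnil : ([] : Str σ) ∈ S) (hn : 0 < n) :
    S.orderEmbOfFin h ⟨0, hn⟩ = [] := by
  have h1 : S.orderEmbOfFin h ⟨0, hn⟩ ≤ [] := by
    have := E_idx h [] hnil
    calc S.orderEmbOfFin h ⟨0, hn⟩ ≤ S.orderEmbOfFin h (idx h [] hnil) :=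
          (S.orderEmbOfFin h).monotone (by exact Fin.mk_le_of_le_val (Nat.zero_le _))
      _ = [] := this
  exact le_antisymm h1 (nil_le _)

lemma E_ne_nil (h : S.card = n) (hnil : ([] : Str σ) ∈ S) {j : Fin n} (hj : (j : ℕ) ≠ 0) :
    S.orderEmbOfFin h j ≠ [] := by
  have hn : 0 < n := lt_of_le_of_lt (Nat.zero_le _) j.isLt
  intro hcon
  have : S.orderEmbOfFin h ⟨0, hn⟩ < S.orderEmbOfFin h j :=
    (E_lt_E h).2 (by simp [Fin.lt_def]; omega)
  rw [hcon, E_zero h hnil hn] at this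
  exact absurd this (by simpa using not_lt_of_ge (nil_le _))

/-- parent data for a nonempty node -/
lemma parent_spec (hcl : ∀ (s : Str σ) (c : Fin σ), s ++ [c] ∈ S → s ∈ S)
    {t : Str σ} (ht : t ∈ S) (hne : t ≠ []) :
    t.dropLast ∈ S ∧ t.dropLast ++ [t.getLast hne] = t ∧ t.dropLast < t := by
  have h1 : t.dropLast ++ [t.getLast hne] = t := List.dropLast_append_getLast hne
  have h2 : t.dropLast ∈ S := hcl _ _ (h1.symm ▸ ht)
  refine ⟨h2, h1, ?_⟩
  conv_rhs => rw [← h1]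
  exact lt_append _ _ (by simp)

/-- content of the encoding: the letter `i` appears in exactly as many positions
as there are nodes ending with `i` -/
lemma enc_content (h : S.card = n) (hnil : ([] : Str σ) ∈ S)
    (hcl : ∀ (s : Str σ) (c : Fin σ), s ++ [c] ∈ S → s ∈ S) (i : Fin σ) :
    (univ.filter (fun j : Fin n => i ∈ enc n S j)).card
      = (S.filter (fun s => s.getLast? = some i)).card := by
  apply Finset.card_bij (fun j _ => S.orderEmbOfFin h j ++ [i])
  · intro j hj
    rw [mem_filter] at hj ⊢
    rw [mem_enc_iff h] at hj
    exact ⟨hj.2, List.getLast?_concat⟩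
  · intro j _ j' _ hjj
    have := (concat_inj hjj).1
    exact (S.orderEmbOfFin h).injective this
  · intro t ht
    rw [mem_filter] at ht
    have hne : t ≠ [] := by rintro rfl; simp at ht
    obtain ⟨hp, hpc, -⟩ := parent_spec hcl ht.1 hne
    have hlast : t.getLast hne = i := by
      have := List.getLast?_eq_getLast hne
      rw [ht.2] at this
      exact (Option.some_injective _ this.symm)
    refine ⟨idx h t.dropLast hp, ?_, ?_⟩
    · rw [mem_filter]
      refine ⟨mem_univ _, ?_⟩
      rw [mem_enc_iff h, E_idx, ← hlast]
      rw [hpc]; exact ht.1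
    · rw [E_idx, ← hlast, hpc]

/-- the encoding of a trie is dominating -/
lemma enc_dom (h : S.card = n) (hnil : ([] : Str σ) ∈ S)
    (hcl : ∀ (s : Str σ) (c : Fin σ), s ++ [c] ∈ S → s ∈ S) :
    Dom (enc n S) := by
  intro k hk
  set T : Finset (Σ _ : ℕ, Fin σ) :=
    (range k).sigma (fun m => if hm : m < n then enc n S ⟨m, hm⟩ else ∅) with hT
  have hcardT : T.card = pref (enc n S) k := by
    rw [hT, Finset.card_sigma]
    apply Finset.sum_congr rfl
    intro m _
    by_cases hm : m < n <;> simp [hm, pref]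
  rw [← hcardT, ← Finset.card_range k]
  -- σ is positive if k ≥ 1
  rcases Nat.eq_zero_or_pos k with rfl | hk1
  · simp
  have hσ : 0 < σ := by
    have h1 : (1 : ℕ) < n := by omega
    have hne := E_ne_nil h hnil (j := ⟨1, h1⟩) (by simp)
    rcases hE : S.orderEmbOfFin h ⟨1, h1⟩ with _ | ⟨c, _⟩
    · exact absurd hE hne
    · exact c.pos
  have cdef : Fin σ := ⟨0, hσ⟩
  apply Finset.card_le_card_of_injOn
    (f := fun m =>
      if hm : m + 1 < n then
        (⟨(if hp : (S.orderEmbOfFin h ⟨m+1, hm⟩).dropLast ∈ S then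
            ((idx h _ hp : Fin n) : ℕ) else 0),
          (S.orderEmbOfFin h ⟨m+1, hm⟩).getLast?.getD cdef⟩ : Σ _ : ℕ, Fin σ)
      else ⟨0, cdef⟩)
  · intro m hm
    rw [Finset.mem_coe, mem_range] at hm
    have hm1 : m + 1 < n := by omega
    simp only [Finset.mem_coe]
    rw [dif_pos hm1]
    set t := S.orderEmbOfFin h ⟨m+1, hm1⟩ with hdt
    have htS : t ∈ S := S.orderEmbOfFin_mem h _
    have hne : t ≠ [] := E_ne_nil h hnil (by simp)
    obtain ⟨hp, hpc, hplt⟩ := parent_spec hcl htS hne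
    rw [dif_pos hp]
    have hidxlt : (idx h t.dropLast hp : ℕ) < k := by
      have : S.orderEmbOfFin h (idx h t.dropLast hp) < S.orderEmbOfFin h ⟨m+1, hm1⟩ := by
        rw [E_idx]; exact hplt
      have := (E_lt_E h).1 this
      rw [Fin.lt_def] at this
      simp only [] at this
      omega
    have hglast : t.getLast?.getD cdef = t.getLast hne := by
      rw [List.getLast?_eq_getLast hne]; rfl
    rw [Finset.mem_sigma]
    constructor
    · rw [mem_range]; exact hidxlt
    · have hlt_n : (idx h t.dropLast hp : ℕ) < n := (idx h t.dropLast hp).isLt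
      rw [dif_pos hlt_n]
      rw [hglast]
      have : (⟨(idx h t.dropLast hp : ℕ), hlt_n⟩ : Fin n) = idx h t.dropLast hp := by
        apply Fin.ext; rfl
      rw [this, mem_enc_iff h, E_idx, hpc]
      exact htS
  · intro m hm m' hm' heq
    simp only [Finset.coe_range, Set.mem_Iio] at hm hm'
    have hm1 : m + 1 < n := by omega
    have hm1' : m' + 1 < n := by omega
    simp only [dif_pos hm1, dif_pos hm1'] at heq
    set t := S.orderEmbOfFin h ⟨m+1, hm1⟩ with hdt
    set t' := S.orderEmbOfFin h ⟨m'+1, hm1'⟩ with hdt'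
    have htS : t ∈ S := S.orderEmbOfFin_mem h _
    have htS' : t' ∈ S := S.orderEmbOfFin_mem h _
    have hne : t ≠ [] := E_ne_nil h hnil (by simp)
    have hne' : t' ≠ [] := E_ne_nil h hnil (by simp)
    obtain ⟨hp, hpc, -⟩ := parent_spec hcl htS hne
    obtain ⟨hp', hpc', -⟩ := parent_spec hcl htS' hne'
    rw [dif_pos hp, dif_pos hp'] at heq
    rw [Sigma.mk.inj_iff] at heq
    obtain ⟨h1, h2⟩ := heq
    have h2' := eq_of_heq h2
    have hpp : t.dropLast = t'.dropLast := by
      have : idx h t.dropLast hp = idx h t'.dropLast hp' := Fin.ext h1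
      have := congrArg (S.orderEmbOfFin h) this
      rwa [E_idx, E_idx] at this
    have hglast : t.getLast?.getD cdef = t.getLast hne := by
      rw [List.getLast?_eq_getLast hne]; rfl
    have hglast' : t'.getLast?.getD cdef = t'.getLast hne' := by
      rw [List.getLast?_eq_getLast hne']; rfl
    rw [hglast, hglast'] at h2'
    have htt : t = t' := by
      rw [← hpc, ← hpc', hpp, h2']
    have : (⟨m+1, hm1⟩ : Fin n) = ⟨m'+1, hm1'⟩ := (S.orderEmbOfFin h).injective htt
    have := Fin.mk.inj_iff.1 this
    omega

end Enc

section Dec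

variable {n : ℕ}

/-- candidate extensions, given the list of already-built nodes -/
def cand (n : ℕ) (f : Fin n → Finset (Fin σ)) (prev : List (Str σ)) : Finset (Str σ) :=
  (((range prev.length).sigma fun m => if h : m < n then f ⟨m, h⟩ else ∅).image
    fun p => prev.getD p.1 [] ++ [p.2]) \ prev.toFinset

def nxt (n : ℕ) (f : Fin n → Finset (Fin σ)) (prev : List (Str σ)) : Str σ :=
  if h : (cand n f prev).Nonempty then (cand n f prev).min' h else []

def decList (n : ℕ) (f : Fin n → Finset (Fin σ)) : ℕ → List (Str σ)
  | 0 => []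
  | j+1 => decList n f j ++ [nxt n f (decList n f j)]

lemma mem_cand {f : Fin n → Finset (Fin σ)} {prev : List (Str σ)} {u : Str σ} :
    u ∈ cand n f prev ↔
      ((∃ m : ℕ, ∃ hm : m < n, m < prev.length ∧ ∃ c ∈ f ⟨m, hm⟩,
        u = prev.getD m [] ++ [c]) ∧ u ∉ prev) := by
  unfold cand
  rw [mem_sdiff, mem_image, List.mem_toFinset]
  constructor
  · rintro ⟨⟨p, hp, rfl⟩, hnm⟩
    rw [mem_sigma, mem_range] at hp
    have h1 := hp.1
    have h2 := hp.2
    by_cases hmn : p.1 < n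
    · rw [dif_pos hmn] at h2; exact ⟨⟨p.1, hmn, h1, p.2, h2, rfl⟩, hnm⟩
    · rw [dif_neg hmn] at h2; simp at h2
  · rintro ⟨⟨m, hmn, hml, c, hc, rfl⟩, hnm⟩
    refine ⟨⟨⟨m, c⟩, ?_, rfl⟩, hnm⟩
    rw [mem_sigma, mem_range, dif_pos hmn]
    exact ⟨hml, hc⟩

lemma decList_length (f : Fin n → Finset (Fin σ)) : ∀ j, (decList n f j).length = j := by
  intro j
  induction j with
  | zero => rfl
  | succ j ih => simp [decList, ih]

lemma decList_prefix (f : Fin n → Finset (Fin σ)) {j k : ℕ} (h : j ≤ k) :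
    decList n f j <+: decList n f k := by
  induction k with
  | zero => have : j = 0 := by omega
            subst this; exact List.prefix_rfl
  | succ k ih =>
    rcases Nat.eq_or_lt_of_le h with rfl | hlt
    · exact List.prefix_rfl
    · exact (ih (by omega)).trans (List.prefix_append _ _)

lemma decList_getD (f : Fin n → Finset (Fin σ)) {m j k : ℕ} (hm : m < j) (hjk : j ≤ k) :
    (decList n f k).getD m [] = (decList n f j).getD m [] := by
  have hp := decList_prefix f hjk
  have h1 : m < (decList n f j).length := by rw [decList_length]; exact hm
  have h2 : m < (decList n f k).length := by rw [decList_length]; omega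
  rw [List.getD_eq_getElem _ _ h1, List.getD_eq_getElem _ _ h2]
  exact (hp.getElem h1).symm

lemma nil_mem_decList (f : Fin n → Finset (Fin σ)) {j : ℕ} (hj : 1 ≤ j) :
    ([] : Str σ) ∈ decList n f j := by
  have h1 : decList n f 1 = [[]] := by
    show decList n f 0 ++ [nxt n f (decList n f 0)] = [[]]
    have : cand n f ([] : List (Str σ)) = ∅ := by
      ext u
      simp only [Finset.notMem_empty, iff_false]
      rw [mem_cand]
      rintro ⟨⟨m, hm, hml, -⟩, -⟩
      simp at hml
    show ([] : List (Str σ)) ++ [nxt n f []] = [[]]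
    simp [nxt, this]
  have := decList_prefix f hj
  rw [h1] at this
  exact this.mem (by simp)

lemma cand_nonempty {f : Fin n → Finset (Fin σ)} (hdom : Dom f) {j : ℕ}
    (hj1 : 1 ≤ j) (hjn : j < n) (hnd : (decList n f j).Nodup) :
    (cand n f (decList n f j)).Nonempty := by
  set prev := decList n f j with hprev
  have hlen : prev.length = j := decList_length f j
  set Sg : Finset (Σ _ : ℕ, Fin σ) :=
    (range prev.length).sigma fun m => if h : m < n then f ⟨m, h⟩ else ∅ with hSg
  set I : Finset (Str σ) := Sg.image fun p => prev.getD p.1 [] ++ [p.2] with hI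
  have hcandI : cand n f prev = I \ prev.toFinset := rfl
  have hinj : Set.InjOn (fun p : Σ _ : ℕ, Fin σ => prev.getD p.1 [] ++ [p.2]) Sg := by
    intro p hp q hq hpq
    rw [Finset.mem_coe, hSg, mem_sigma, mem_range] at hp
    rw [Finset.mem_coe, hSg, mem_sigma, mem_range] at hq
    obtain ⟨he, hc⟩ := concat_inj hpq
    have h1 : p.1 = q.1 := by
      have hp1 : p.1 < prev.length := hp.1
      have hq1 : q.1 < prev.length := hq.1
      rw [List.getD_eq_getElem _ _ hp1, List.getD_eq_getElem _ _ hq1] at he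
      exact (hnd.getElem_inj_iff).1 he
    exact Sigma.ext h1 (heq_of_eq hc)
  have hcardI : I.card = Sg.card := Finset.card_image_of_injOn hinj
  have hcardSg : j ≤ Sg.card := by
    rw [hSg, Finset.card_sigma]
    have : ∑ m ∈ range prev.length, (if h : m < n then f ⟨m, h⟩ else ∅).card
        = pref f j := by
      rw [hlen]
      apply Finset.sum_congr rfl
      intro m hm
      by_cases h : m < n <;> simp [h, pref]
    rw [this]
    exact hdom j hjn
  have hnilI : ([] : Str σ) ∉ I := by
    rw [hI]
    simp only [mem_image, not_exists]
    rintro p ⟨-, hp⟩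
    exact absurd hp (by simp)
  have hint : I ∩ prev.toFinset ⊆ prev.toFinset.erase [] := by
    intro u hu
    rw [mem_inter] at hu
    rw [Finset.mem_erase]
    exact ⟨fun h => hnilI (h ▸ hu.1), hu.2⟩
  have hnilprev : ([] : Str σ) ∈ prev.toFinset := by
    rw [List.mem_toFinset]; exact nil_mem_decList f hj1
  have hcardprev : prev.toFinset.card = j := by
    rw [List.toFinset_card_of_nodup hnd, hlen]
  have hcarderase : (prev.toFinset.erase []).card = j - 1 := by
    rw [Finset.card_erase_of_mem hnilprev, hcardprev]
  have hsd := Finset.card_sdiff_add_card_inter I prev.toFinset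
  have hile : (I ∩ prev.toFinset).card ≤ j - 1 := by
    rw [← hcarderase]; exact Finset.card_le_card hint
  rw [← Finset.card_pos, hcandI]
  omega

/-- main invariant of the decoding process -/
lemma dec_inv {f : Fin n → Finset (Fin σ)} (hdom : Dom f) :
    ∀ j, j ≤ n →
      List.Pairwise (· < ·) (decList n f j) ∧
      (∀ u ∈ cand n f (decList n f j), ∀ v ∈ decList n f j, v < u) := by
  intro j
  induction j with
  | zero =>
    intro _
    constructor
    · exact List.Pairwise.nil
    · intro u hu
      rw [mem_cand] at hu
      obtain ⟨⟨m, hm, hml, -⟩, -⟩ := hu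
      simp [decList] at hml
  | succ j ih =>
    intro hj1
    obtain ⟨hsort, hcand⟩ := ih (by omega)
    set prev := decList n f j with hprev
    set w := nxt n f prev with hw
    have hd : decList n f (j+1) = prev ++ [w] := rfl
    have hlen : prev.length = j := decList_length f j
    have hvw : ∀ v ∈ prev, v < w := by
      by_cases hne : (cand n f prev).Nonempty
      · intro v hv
        have hwc : w ∈ cand n f prev := by
          rw [hw, nxt, dif_pos hne]; exact Finset.min'_mem _ hne
        exact hcand _ hwc v hv
      · intro v hv
        exfalso
        rcases Nat.eq_zero_or_pos j with rfl | hj0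
        · simp [hprev, decList] at hv
        · exact hne (cand_nonempty hdom hj0 (by omega) hsort.nodup)
    have hsort' : List.Pairwise (· < ·) (decList n f (j+1)) := by
      rw [hd]
      rw [List.pairwise_append]
      exact ⟨hsort, List.pairwise_singleton _ _, fun a ha b hb => by
        rw [List.mem_singleton] at hb; subst hb; exact hvw a ha⟩
    refine ⟨hsort', ?_⟩
    intro u hu v hv
    rw [mem_cand] at hu
    obtain ⟨⟨m, hmn, hml, c, hc, hueq⟩, hnmem⟩ := hu
    rw [decList_length] at hml
    rcases Nat.lt_or_ge m j with hmj | hmj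
    · -- old candidate
      have hgd : (decList n f (j+1)).getD m [] = prev.getD m [] :=
        decList_getD f hmj (Nat.le_succ j)
      have hu' : u ∈ cand n f prev := by
        rw [mem_cand]
        refine ⟨⟨m, hmn, by omega, c, hc, by rw [hueq, hgd]⟩, ?_⟩
        intro hmem
        exact hnmem (by rw [hd]; exact List.mem_append_left _ hmem)
      have h1 : ∀ v' ∈ prev, v' < u := hcand u hu'
      have h2 : w < u := by
        have hne : (cand n f prev).Nonempty := ⟨u, hu'⟩
        have hwm : w = (cand n f prev).min' hne := by rw [hw, nxt, dif_pos hne]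
        have hle : w ≤ u := hwm ▸ Finset.min'_le _ _ hu'
        have hneq : w ≠ u := by
          rintro rfl
          exact hnmem (by rw [hd]; exact List.mem_append_right _ (by simp))
        exact lt_of_le_of_ne hle hneq
      rw [hd, List.mem_append] at hv
      rcases hv with hv | hv
      · exact h1 v hv
      · rw [List.mem_singleton] at hv; subst hv; exact h2
    · -- new candidate from position j
      have hmj' : m = j := by omega
      subst hmj'
      have hgd : (decList n f (m+1)).getD m [] = w := by
        rw [hd, List.getD_eq_getElem _ _ (by simp [hlen])]
        exact List.getElem_concat_length hlen.symm _
      have huw : u = w ++ [c] := by rw [hueq, hgd]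
      have hwu : w < u := by rw [huw]; exact lt_append _ _ (by simp)
      rw [hd, List.mem_append] at hv
      rcases hv with hv | hv
      · exact lt_trans (hvw v hv) hwu
      · rw [List.mem_singleton] at hv; subst hv; exact hwu

end Dec

section DecSpec

variable {n : ℕ}

def decF (n : ℕ) (f : Fin n → Finset (Fin σ)) : Finset (Str σ) :=
  (decList n f n).toFinset

lemma decList_step {f : Fin n → Finset (Fin σ)} (hdom : Dom f) {l : ℕ}
    (hl1 : 1 ≤ l) (hln : l < n) :
    ∃ m, ∃ hmn : m < n, m < l ∧ ∃ c ∈ f ⟨m, hmn⟩,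
      (decList n f n).getD l [] = (decList n f n).getD m [] ++ [c] := by
  have hsort := (dec_inv hdom l (le_of_lt hln)).1
  have hne : (cand n f (decList n f l)).Nonempty := cand_nonempty hdom hl1 hln hsort.nodup
  have hw : nxt n f (decList n f l) ∈ cand n f (decList n f l) := by
    rw [nxt, dif_pos hne]; exact Finset.min'_mem _ _
  rw [mem_cand] at hw
  obtain ⟨⟨m, hmn, hml, c, hc, hueq⟩, -⟩ := hw
  rw [decList_length] at hml
  have hgl : (decList n f n).getD l [] = nxt n f (decList n f l) := by
    have h1 : (decList n f (l+1)).getD l [] = nxt n f (decList n f l) := by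
      show (decList n f l ++ [nxt n f (decList n f l)]).getD l [] = _
      rw [List.getD_eq_getElem _ _ (by simp [decList_length])]
      exact List.getElem_concat_length (decList_length f l).symm _
    rw [decList_getD f (Nat.lt_succ_self l) hln, h1]
  have hgm : (decList n f n).getD m [] = (decList n f l).getD m [] :=
    decList_getD f hml (le_of_lt hln)
  exact ⟨m, hmn, hml, c, hc, by rw [hgl, hueq, hgm]⟩

theorem dec_spec {nd : Fin σ → ℕ} (hn : 0 < n) {f : Fin n → Finset (Fin σ)}
    (hword : IsWord n nd f) (hdom : Dom f) (hsum : (∑ i, nd i) + 1 = n) :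
    IsTrie n nd (decF n f) ∧ enc n (decF n f) = f := by
  set L := decList n f n with hL
  have hlen : L.length = n := decList_length f n
  have hsorted : List.Pairwise (· < ·) L := (dec_inv hdom n le_rfl).1
  have hnodup : L.Nodup := hsorted.nodup
  set S := decF n f with hS
  have hSL : S = L.toFinset := rfl
  have hcard : S.card = n := by rw [hSL, List.toFinset_card_of_nodup hnodup, hlen]
  have hnilL : ([] : Str σ) ∈ L := nil_mem_decList f hn
  have hnil : ([] : Str σ) ∈ S := by rw [hSL, List.mem_toFinset]; exact hnilL
  have hgetD_inj : ∀ a b : ℕ, a < n → b < n → L.getD a [] = L.getD b [] → a = b := by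
    intro a b ha hb hab
    rw [List.getD_eq_getElem _ _ (by omega : a < L.length),
      List.getD_eq_getElem _ _ (by omega : b < L.length)] at hab
    exact (hnodup.getElem_inj_iff).1 hab
  have hget0 : L.getD 0 [] = [] := by
    obtain ⟨i, hi, hieq⟩ := List.mem_iff_getElem.1 hnilL
    rcases Nat.eq_zero_or_pos i with rfl | hipos
    · rw [List.getD_eq_getElem _ _ hi, hieq]
    · exfalso
      have hpw := List.pairwise_iff_getElem.1 hsorted 0 i (by omega) hi hipos
      rw [hieq] at hpw
      exact absurd hpw (by simpa using not_lt_of_ge (nil_le _))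
  -- pair set
  set Pg : Finset (Σ _ : ℕ, Fin σ) :=
    (range n).sigma (fun m => if h : m < n then f ⟨m, h⟩ else ∅) with hPg
  set θ : (Σ _ : ℕ, Fin σ) → Str σ := fun p => L.getD p.1 [] ++ [p.2] with hθ
  have hPgcard : Pg.card + 1 = n := by
    rw [hPg, Finset.card_sigma]
    have h1 : ∑ m ∈ range n, (if h : m < n then f ⟨m, h⟩ else ∅).card
        = ∑ j, (f j).card := by
      rw [← Fin.sum_univ_eq_sum_range (fun m => (if h : m < n then f ⟨m, h⟩ else ∅).card) n]
      apply Finset.sum_congr rfl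
      intro j _
      rw [dif_pos j.isLt]
    rw [h1, sum_card_of_isWord hword, hsum]
  have hθinj : Set.InjOn θ Pg := by
    intro p hp q hq hpq
    rw [Finset.mem_coe, hPg, mem_sigma, mem_range] at hp
    rw [Finset.mem_coe, hPg, mem_sigma, mem_range] at hq
    obtain ⟨he, hc⟩ := concat_inj hpq
    exact Sigma.ext (hgetD_inj _ _ hp.1 hq.1 he) (heq_of_eq hc)
  have hsub : S.erase [] ⊆ Pg.image θ := by
    intro u hu
    rw [Finset.mem_erase] at hu
    obtain ⟨hune, huS⟩ := hu
    rw [hSL, List.mem_toFinset] at huS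
    obtain ⟨l, hl, hleq⟩ := List.mem_iff_getElem.1 huS
    rw [hlen] at hl
    have hl0 : 1 ≤ l := by
      rcases Nat.eq_zero_or_pos l with rfl | h
      · exfalso
        rw [List.getD_eq_getElem _ _ (by omega : 0 < L.length)] at hget0
        exact hune (by rw [← hleq, hget0])
      · exact h
    obtain ⟨m, hmn, hml, c, hc, heq⟩ := decList_step hdom hl0 hl
    rw [Finset.mem_image]
    refine ⟨⟨m, c⟩, ?_, ?_⟩
    · rw [hPg, mem_sigma, mem_range, dif_pos hmn]
      exact ⟨hmn, hc⟩
    · show L.getD m [] ++ [c] = u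
      rw [← heq, List.getD_eq_getElem _ _ (by omega : l < L.length), hleq]
  have himg : S.erase [] = Pg.image θ := by
    apply Finset.eq_of_subset_of_card_le hsub
    rw [Finset.card_image_of_injOn hθinj, Finset.card_erase_of_mem hnil, hcard]
    omega
  have hcl : ∀ (s : Str σ) (c : Fin σ), s ++ [c] ∈ S → s ∈ S := by
    intro s c hmem
    have h1 : s ++ [c] ∈ S.erase [] := Finset.mem_erase.2 ⟨by simp, hmem⟩
    rw [himg, Finset.mem_image] at h1
    obtain ⟨p, hp, hpeq⟩ := h1
    rw [hPg, mem_sigma, mem_range] at hp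
    have h2 : s = L.getD p.1 [] := ((concat_inj hpeq.symm).1)
    rw [hSL, List.mem_toFinset, h2]
    rw [List.getD_eq_getElem _ _ (by omega : p.1 < L.length)]
    exact List.getElem_mem _
  have hsort_eq : S.sort (· ≤ ·) = L :=
    List.Perm.eq_of_pairwise' (S.pairwise_sort _) (hsorted.imp le_of_lt)
      (List.perm_of_nodup_nodup_toFinset_eq (S.sort_nodup _) hnodup
        (by rw [Finset.sort_toFinset, hSL]))
  have hE : ∀ j : Fin n, S.orderEmbOfFin hcard j = L.getD (j : ℕ) [] := by
    intro j
    rw [Finset.orderEmbOfFin_apply, List.getD_eq_getElem _ _ (by rw [hlen]; exact j.isLt)]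
    exact List.getElem_of_eq hsort_eq _
  have hencf : enc n S = f := by
    funext j
    ext c
    rw [mem_enc_iff hcard, hE j]
    constructor
    · intro hmem
      have h1 : L.getD (j : ℕ) [] ++ [c] ∈ Pg.image θ := by
        rw [← himg]
        exact Finset.mem_erase.2 ⟨by simp, hmem⟩
      obtain ⟨p, hp, hpeq⟩ := Finset.mem_image.1 h1
      rw [hPg, mem_sigma, mem_range] at hp
      obtain ⟨he, hc2⟩ := concat_inj hpeq
      have h2 : p.1 = (j : ℕ) := hgetD_inj _ _ hp.1 j.isLt he
      have h3 := hp.2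
      rw [dif_pos hp.1] at h3
      have h4 : (⟨p.1, hp.1⟩ : Fin n) = j := Fin.ext h2
      rw [← h4, ← hc2]
      exact h3
    · intro hc
      have hp : (⟨(j : ℕ), c⟩ : Σ _ : ℕ, Fin σ) ∈ Pg := by
        rw [hPg, mem_sigma, mem_range, dif_pos j.isLt]
        refine ⟨j.isLt, ?_⟩
        have : (⟨(j : ℕ), j.isLt⟩ : Fin n) = j := Fin.ext rfl
        rw [this]; exact hc
      have h1 : θ ⟨(j : ℕ), c⟩ ∈ Pg.image θ := Finset.mem_image_of_mem _ hp
      rw [← himg] at h1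
      exact (Finset.mem_erase.1 h1).2
  have hcount : ∀ i, (S.filter (fun s => s.getLast? = some i)).card = nd i := by
    intro i
    rw [← enc_content hcard hnil hcl i]
    have : ∀ j : Fin n, (i ∈ enc n S j) = (i ∈ f j) := by intro j; rw [hencf]
    simp_rw [hencf]
    exact hword i
  exact ⟨⟨hcard, hnil, hcl, hcount⟩, hencf⟩

end DecSpec

section DecEnc

variable {n : ℕ}

theorem dec_enc {S : Finset (Str σ)} (hn : 0 < n) (hcard : S.card = n)
    (hnil : ([] : Str σ) ∈ S)
    (hcl : ∀ (s : Str σ) (c : Fin σ), s ++ [c] ∈ S → s ∈ S) :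
    decF n (enc n S) = S := by
  set f := enc n S with hf
  set L0 := S.sort (· ≤ ·) with hL0
  have hlen0 : L0.length = n := by rw [hL0, Finset.length_sort, hcard]
  have hsorted0 : List.Pairwise (· < ·) L0 := S.sortedLT_sort.pairwise
  have hnodup0 : L0.Nodup := hsorted0.nodup
  have hE : ∀ (j : ℕ) (hj : j < n), S.orderEmbOfFin hcard ⟨j, hj⟩ = L0.getD j [] := by
    intro j hj
    rw [Finset.orderEmbOfFin_apply, List.getD_eq_getElem _ _ (by rw [hlen0]; exact hj)]
    rfl
  have hgd_inj : ∀ a b : ℕ, a < n → b < n → L0.getD a [] = L0.getD b [] → a = b := by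
    intro a b ha hb hab
    rw [List.getD_eq_getElem _ _ (by rw [hlen0]; exact ha),
      List.getD_eq_getElem _ _ (by rw [hlen0]; exact hb)] at hab
    exact (hnodup0.getElem_inj_iff).1 hab
  have hlentake : ∀ j, j ≤ n → (L0.take j).length = j := by
    intro j hj; rw [List.length_take, hlen0]; omega
  have hgdtake : ∀ (m j : ℕ), m < j → j ≤ n → (L0.take j).getD m [] = L0.getD m [] := by
    intro m j hmj hjn
    rw [List.getD_eq_getElem _ _ (by rw [hlentake j hjn]; exact hmj),
      List.getD_eq_getElem _ _ (by rw [hlen0]; omega)]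
    exact List.getElem_take
  have hmemtake : ∀ (u : Str σ) (j : ℕ), j ≤ n → (u ∈ L0.take j ↔
      ∃ i < j, L0.getD i [] = u) := by
    intro u j hjn
    rw [List.mem_iff_getElem]
    constructor
    · rintro ⟨i, hi, hieq⟩
      rw [hlentake j hjn] at hi
      refine ⟨i, hi, ?_⟩
      rw [← hgdtake i j hi hjn,
        List.getD_eq_getElem _ _ (by rw [hlentake j hjn]; exact hi), hieq]
    · rintro ⟨i, hi, hieq⟩
      refine ⟨i, by rw [hlentake j hjn]; exact hi, ?_⟩
      rw [← List.getD_eq_getElem _ ([] : Str σ), hgdtake i j hi hjn, hieq]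
  have main : ∀ j, j ≤ n → decList n f j = L0.take j := by
    intro j
    induction j with
    | zero => intro _; rfl
    | succ j ih =>
      intro hj1
      have hjn : j < n := by omega
      have ihe := ih (by omega)
      have hstep : decList n f (j+1) = L0.take j ++ [nxt n f (L0.take j)] := by
        show decList n f j ++ [nxt n f (decList n f j)] = _
        rw [ihe]
      have htake : L0.take (j+1) = L0.take j ++ [L0.getD j []] := by
        rw [List.take_succ, List.getElem?_eq_getElem (by rw [hlen0]; exact hjn)]
        rw [List.getD_eq_getElem _ _ (by rw [hlen0]; exact hjn)]
        rfl
      rw [hstep, htake]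
      have hnxt : nxt n f (L0.take j) = L0.getD j [] := by
        rcases Nat.eq_zero_or_pos j with rfl | hj0
        · -- j = 0 : next node is the root
          have hc0 : cand n f (L0.take 0) = ∅ := by
            ext u
            simp only [Finset.notMem_empty, iff_false]
            rw [mem_cand]
            rintro ⟨⟨m, hm, hml, -⟩, -⟩
            simp at hml
          have h1 : nxt n f (L0.take 0) = [] := by
            rw [nxt, dif_neg]
            rw [hc0]
            simp
          rw [h1, ← hE 0 hn, E_zero hcard hnil hn]
        · -- j ≥ 1
          set t := L0.getD j [] with ht
          have htE : S.orderEmbOfFin hcard ⟨j, hjn⟩ = t := hE j hjn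
          have htS : t ∈ S := by rw [← htE]; exact S.orderEmbOfFin_mem hcard _
          have htne : t ≠ [] := by
            rw [← htE]; exact E_ne_nil hcard hnil (by simp; omega)
          obtain ⟨hp, hpc, hplt⟩ := parent_spec hcl htS htne
          set m : Fin n := idx hcard t.dropLast hp with hm
          have hmE : S.orderEmbOfFin hcard m = t.dropLast := E_idx hcard _ _
          have hmj : (m : ℕ) < j := by
            have h1 : S.orderEmbOfFin hcard m < S.orderEmbOfFin hcard ⟨j, hjn⟩ := by
              rw [hmE, htE]; exact hplt
            have h2 := (E_lt_E hcard).1 h1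
            rw [Fin.lt_def] at h2
            exact h2
          have hgdm : (L0.take j).getD (m : ℕ) [] = t.dropLast := by
            rw [hgdtake _ j hmj (le_of_lt hjn), ← hE (m : ℕ) m.isLt]
            rw [show (⟨(m : ℕ), m.isLt⟩ : Fin n) = m from Fin.ext rfl, hmE]
          have hcmem : t.getLast htne ∈ f ⟨(m : ℕ), m.isLt⟩ := by
            rw [hf, mem_enc_iff hcard]
            rw [show (⟨(m : ℕ), m.isLt⟩ : Fin n) = m from Fin.ext rfl, hmE, hpc]
            exact htS
          have hA : t ∈ cand n f (L0.take j) := by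
            rw [mem_cand]
            constructor
            · exact ⟨(m : ℕ), m.isLt, by rw [hlentake j (le_of_lt hjn)]; exact hmj,
                t.getLast htne, hcmem, by rw [hgdm, hpc]⟩
            · intro hmem
              rw [hmemtake t j (le_of_lt hjn)] at hmem
              obtain ⟨i, hij, hieq⟩ := hmem
              have : i = j := hgd_inj i j (by omega) hjn hieq
              omega
          have hB : ∀ u ∈ cand n f (L0.take j), t ≤ u := by
            intro u hu
            rw [mem_cand] at hu
            obtain ⟨⟨m', hm'n, hm'l, c, hc, hueq⟩, hnmem⟩ := hu
            rw [hlentake j (le_of_lt hjn)] at hm'l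
            have hgdm' : (L0.take j).getD m' [] = S.orderEmbOfFin hcard ⟨m', hm'n⟩ := by
              rw [hgdtake _ j hm'l (le_of_lt hjn), hE m' hm'n]
            have huS : u ∈ S := by
              rw [hueq, hgdm']
              rw [hf, mem_enc_iff hcard] at hc
              exact hc
            set iu : Fin n := idx hcard u huS with hiu
            have hiuE : S.orderEmbOfFin hcard iu = u := E_idx hcard _ _
            have hiuge : j ≤ (iu : ℕ) := by
              by_contra hlt
              push_neg at hlt
              apply hnmem
              rw [hmemtake u j (le_of_lt hjn)]
              exact ⟨(iu : ℕ), hlt, by rw [← hE (iu : ℕ) iu.isLt,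
                show (⟨(iu : ℕ), iu.isLt⟩ : Fin n) = iu from Fin.ext rfl, hiuE]⟩
            calc t = S.orderEmbOfFin hcard ⟨j, hjn⟩ := htE.symm
              _ ≤ S.orderEmbOfFin hcard iu :=
                  (S.orderEmbOfFin hcard).monotone (by rw [Fin.le_def]; exact hiuge)
              _ = u := hiuE
          have hne : (cand n f (L0.take j)).Nonempty := ⟨t, hA⟩
          rw [nxt, dif_pos hne]
          exact le_antisymm (Finset.min'_le _ _ hA) (Finset.le_min' _ _ _ hB)
      rw [hnxt]
  have hfin := main n le_rfl
  rw [decF, hfin, List.take_of_length_le (by rw [hlen0])]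
  rw [hL0, Finset.sort_toFinset]

end DecEnc

/-- Main counting theorem at the level of the auxiliary definitions. -/
theorem main_count {σ : ℕ} (n : ℕ) (hn : 0 < n) (nd : Fin σ → ℕ)
    (hsum : (∑ i, nd i) + 1 = n) :
    n * Set.ncard {S : Finset (Str σ) | IsTrie n nd S} = ∏ i, Nat.choose n (nd i) := by
  classical
  have hbij : Set.BijOn (enc n) {S : Finset (Str σ) | IsTrie n nd S}
      {f : Fin n → Finset (Fin σ) | IsWord n nd f ∧ Dom f} := by
    refine ⟨?_, ?_, ?_⟩
    · intro S hS
      obtain ⟨hcard, hnil, hcl, hcount⟩ := hS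
      exact ⟨fun i => (enc_content hcard hnil hcl i).trans (hcount i),
        enc_dom hcard hnil hcl⟩
    · intro S hS T hT hST
      obtain ⟨hcardS, hnilS, hclS, -⟩ := hS
      obtain ⟨hcardT, hnilT, hclT, -⟩ := hT
      calc S = decF n (enc n S) := (dec_enc hn hcardS hnilS hclS).symm
        _ = decF n (enc n T) := by rw [hST]
        _ = T := dec_enc hn hcardT hnilT hclT
    · intro g hg
      obtain ⟨hword, hdom⟩ := hg
      obtain ⟨htrie, hencg⟩ := dec_spec hn hword hdom hsum
      exact ⟨decF n g, htrie, hencg⟩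
  have h1 : {S : Finset (Str σ) | IsTrie n nd S}.ncard
      = {f : Fin n → Finset (Fin σ) | IsWord n nd f ∧ Dom f}.ncard := by
    rw [← hbij.image_eq]
    exact (Set.ncard_image_of_injOn hbij.injOn).symm
  rw [h1, ← ncard_words_eq_mul hn hsum, ncard_words]

end TrieAux

/-- A trie over the alphabet `Fin σ` is a finite set of strings containing the
empty string and closed under prefixes.  Its nodes are its elements; the symbol
distribution counts, for each character, the nonempty strings ending with it. -/
theorem stmt0 (σ n : ℕ) (hn : 1 ≤ n) (nd : Fin σ → ℕ)
    (hsum : ∑ i, nd i = n - 1) :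
    n * Set.ncard {S : Finset (List (Fin σ)) |
        S.card = n ∧ ([] : List (Fin σ)) ∈ S ∧
        (∀ (s : List (Fin σ)) (c : Fin σ), s ++ [c] ∈ S → s ∈ S) ∧
        (∀ i : Fin σ, (S.filter (fun s => s.getLast? = some i)).card = nd i)} =
      ∏ i, Nat.choose n (nd i) := by
  have hsum' : (∑ i, nd i) + 1 = n := by omega
  exact TrieAux.main_count n hn nd hsum'
end

section
/- Let n ≥ 1 and let n_1, …, n_σ be nonnegative integers with n_1 + … + n_σ = n − 1. The number of σ×n matrices M with entries in {0,1} such that row i contains exactly n_i ones and such that the associated sequence L (defined by L[j] = ∑_{t=1}^{j} ((number of ones in column t of M) − 1)) is a Łukasiewicz path equals (1/n) · ∏_{i=1}^{σ} C(n, n_i). -/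
/-- Number of ones in column `t` of the boolean matrix `M`. -/
def colOnes (σ n : ℕ) (M : Fin σ → Fin n → Bool) (t : Fin n) : ℕ :=
  (Finset.univ.filter fun i => M i t = true).card

/-- The sequence `L` associated with a matrix: `L j = ∑_{t=1}^{j} (colOnes t − 1)`
(here columns are 0-indexed, and `j` ranges over `0,…,n`). -/
def Lseq (σ n : ℕ) (M : Fin σ → Fin n → Bool) (j : ℕ) : ℤ :=
  ∑ t ∈ Finset.univ.filter (fun t : Fin n => (t : ℕ) < j),
    ((colOnes σ n M t : ℤ) - 1)

/-- `L[1..n]` (with `L 0 = 0` prepended for convenience) is a Łukasiewicz path: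
`L n = −1`, `L j ≥ 0` for `1 ≤ j ≤ n−1`, and consecutive differences are `≥ −1`. -/
def IsLukasiewicz (n : ℕ) (L : ℕ → ℤ) : Prop :=
  L n = -1 ∧ (∀ j, 1 ≤ j → j ≤ n - 1 → 0 ≤ L j) ∧
    (∀ j, 1 ≤ j → j ≤ n - 1 → -1 ≤ L (j + 1) - L j)

namespace LukAux

/-- Partial sum splitting. -/
lemma lukAux_sum_shift (D : ℕ → ℤ) (r j : ℕ) :
    ∑ t ∈ Finset.range (r + j), D t
      = (∑ t ∈ Finset.range r, D t) + ∑ t ∈ Finset.range j, D (r + t) := by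
  induction j with
  | zero => simp
  | succ j ih =>
    rw [show r + (j + 1) = (r + j) + 1 from rfl, Finset.sum_range_succ,
      Finset.sum_range_succ, ih]
    ring

/-- The cycle lemma: for a periodic sequence with period-sum `-1`, there is a unique
rotation whose proper prefix sums are nonnegative. -/
lemma lukAux_cycle (n : ℕ) (hn : 0 < n) (D : ℕ → ℤ)
    (hper : ∀ t, D (t + n) = D t)
    (hsum : ∑ t ∈ Finset.range n, D t = -1) :
    ∃! r, r < n ∧ ∀ j, 1 ≤ j → j ≤ n - 1 →
      0 ≤ ∑ t ∈ Finset.range j, D (r + t) := by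
  classical
  set S : ℕ → ℤ := fun j => ∑ t ∈ Finset.range j, D t with hSdef
  have hS : ∀ r j, ∑ t ∈ Finset.range j, D (r + t) = S (r + j) - S r := by
    intro r j
    have := lukAux_sum_shift D r j
    simp only [hSdef]
    linarith
  have hSper : ∀ k, S (n + k) = -1 + S k := by
    intro k
    have h1 := lukAux_sum_shift D n k
    have h2 : ∑ t ∈ Finset.range k, D (n + t) = ∑ t ∈ Finset.range k, D t := by
      apply Finset.sum_congr rfl
      intro t _
      rw [Nat.add_comm n t, hper]
    simp only [hSdef] at h1 h2 ⊢
    rw [h1, h2, hsum]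
  -- minimum of S over [1, n]
  obtain ⟨r1, hr1mem, hr1min⟩ :=
    Finset.exists_min_image (Finset.Icc 1 n) S ⟨1, Finset.mem_Icc.mpr ⟨le_rfl, hn⟩⟩
  set m : ℤ := S r1 with hm
  have hmin : ∀ k, 1 ≤ k → k ≤ n → m ≤ S k := by
    intro k h1 h2
    exact hr1min k (Finset.mem_Icc.mpr ⟨h1, h2⟩)
  -- least index attaining the minimum
  have hex : ∃ t, 1 ≤ t ∧ t ≤ n ∧ S t ≤ m := by
    refine ⟨r1, ?_, ?_, le_rfl⟩
    · exact (Finset.mem_Icc.mp hr1mem).1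
    · exact (Finset.mem_Icc.mp hr1mem).2
  set r0 := Nat.find hex with hr0def
  obtain ⟨hr01, hr0n, hr0le⟩ := Nat.find_spec hex
  have hr0eq : S r0 = m := le_antisymm hr0le (hmin _ hr01 hr0n)
  have hlt : ∀ k, 1 ≤ k → k < r0 → m < S k := by
    intro k h1 h2
    have hk := Nat.find_min hex h2
    push_neg at hk
    have := hk h1 (le_trans (le_of_lt h2) hr0n)
    have := hmin k h1 (le_trans (le_of_lt h2) hr0n)
    omega
  set r : ℕ := if r0 = n then 0 else r0 with hrdef
  have hrn : r < n := by
    rw [hrdef]; split <;> omega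
  have hSn : S n = -1 := hsum
  have hgood : ∀ j, 1 ≤ j → j ≤ n - 1 → 0 ≤ ∑ t ∈ Finset.range j, D (r + t) := by
    intro j hj1 hjn
    rw [hS]
    by_cases hcase : r0 = n
    · -- r = 0, m = -1
      have hm1 : m = -1 := by rw [← hr0eq, hcase]; exact hSn
      have hjlt : m < S j := hlt j hj1 (by omega)
      have hr : r = 0 := by rw [hrdef, if_pos hcase]
      have hS0 : S 0 = 0 := by simp [hSdef]
      rw [hr, Nat.zero_add]
      omega
    · have hr : r = r0 := by rw [hrdef, if_neg hcase]
      rw [hr, hr0eq]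
      by_cases hc : r0 + j ≤ n
      · have := hmin (r0 + j) (by omega) hc
        omega
      · have hk1 : 1 ≤ r0 + j - n := by omega
        have hkr : r0 + j - n < r0 := by omega
        have hklt : m < S (r0 + j - n) := hlt _ hk1 hkr
        have hps := hSper (r0 + j - n)
        rw [show n + (r0 + j - n) = r0 + j by omega] at hps
        omega
  -- uniqueness of good rotations
  have key : ∀ a b : ℕ, a < b → b < n →
      (∀ j, 1 ≤ j → j ≤ n - 1 → 0 ≤ ∑ t ∈ Finset.range j, D (a + t)) →
      (∀ j, 1 ≤ j → j ≤ n - 1 → 0 ≤ ∑ t ∈ Finset.range j, D (b + t)) → False := by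
    intro a b hab hbn ga gb
    have h1 := ga (b - a) (by omega) (by omega)
    have h2 := gb (n + a - b) (by omega) (by omega)
    rw [hS] at h1 h2
    rw [show a + (b - a) = b by omega] at h1
    rw [show b + (n + a - b) = n + a by omega, hSper a] at h2
    linarith
  refine ⟨r, ⟨hrn, hgood⟩, ?_⟩
  rintro r' ⟨hr'n, hr'good⟩
  rcases lt_trichotomy r' r with h | h | h
  · exact absurd (key r' r h hrn hr'good hgood) (fun x => x)
  · exact h
  · exact absurd (key r r' h hr'n hgood hr'good) (fun x => x)

variable {σ n : ℕ}


variable {σ n : ℕ}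

/-- Cyclic shift of the columns of a matrix. -/
def shiftN (hn : 0 < n) (s : ℕ) (M : Fin σ → Fin n → Bool) : Fin σ → Fin n → Bool :=
  fun i j => M i ⟨((j : ℕ) + s) % n, Nat.mod_lt _ hn⟩

/-- The step sequence of a matrix, extended periodically to `ℕ`. -/
def Dm (hn : 0 < n) (M : Fin σ → Fin n → Bool) (t : ℕ) : ℤ :=
  (colOnes σ n M ⟨t % n, Nat.mod_lt _ hn⟩ : ℤ) - 1

lemma shiftN_shiftN (hn : 0 < n) (a b : ℕ) (M : Fin σ → Fin n → Bool) :
    shiftN hn a (shiftN hn b M) = shiftN hn (a + b) M := by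
  funext i j
  simp only [shiftN]
  congr 1
  apply Fin.ext
  simp only [Nat.mod_add_mod]
  congr 1
  omega

lemma shiftN_zero (hn : 0 < n) (M : Fin σ → Fin n → Bool) : shiftN hn 0 M = M := by
  funext i j
  simp only [shiftN, Nat.add_zero]
  congr 1
  exact Fin.ext (Nat.mod_eq_of_lt j.isLt)

lemma shiftN_n (hn : 0 < n) (M : Fin σ → Fin n → Bool) : shiftN hn n M = M := by
  funext i j
  simp only [shiftN]
  congr 1
  apply Fin.ext
  simp only []
  rw [Nat.add_mod_right]
  exact Nat.mod_eq_of_lt j.isLt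

lemma shiftN_mod (hn : 0 < n) (s : ℕ) (M : Fin σ → Fin n → Bool) :
    shiftN hn (s % n) M = shiftN hn s M := by
  funext i j
  simp only [shiftN]
  congr 1
  apply Fin.ext
  simp only []
  rw [Nat.add_comm _ (s % n), Nat.mod_add_mod, Nat.add_comm]

lemma Dm_per (hn : 0 < n) (M : Fin σ → Fin n → Bool) (t : ℕ) :
    Dm hn M (t + n) = Dm hn M t := by
  simp only [Dm, Nat.add_mod_right]

lemma Dm_shift (hn : 0 < n) (s : ℕ) (M : Fin σ → Fin n → Bool) (t : ℕ) :
    Dm hn (shiftN hn s M) t = Dm hn M (t + s) := by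
  simp only [Dm, colOnes, shiftN, Nat.mod_add_mod]

/-- Row counts are preserved by column shifts. -/
lemma rowcount_shiftN (hn : 0 < n) (s : ℕ) (M : Fin σ → Fin n → Bool) (i : Fin σ) :
    (Finset.univ.filter fun j => shiftN hn s M i j = true).card
      = (Finset.univ.filter fun j => M i j = true).card := by
  classical
  set e : Fin n → Fin n := fun j => ⟨((j : ℕ) + s) % n, Nat.mod_lt _ hn⟩ with he
  have einj : Function.Injective e := by
    intro a b h
    have h' : ((a : ℕ) + s) % n = ((b : ℕ) + s) % n := congrArg Fin.val h
    have := Nat.ModEq.add_right_cancel' s h'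
    apply Fin.ext
    calc (a : ℕ) = (a : ℕ) % n := (Nat.mod_eq_of_lt a.isLt).symm
      _ = (b : ℕ) % n := this
      _ = (b : ℕ) := Nat.mod_eq_of_lt b.isLt
  have ebij : Function.Bijective e := Finite.injective_iff_bijective.mp einj
  calc (Finset.univ.filter fun j => shiftN hn s M i j = true).card
      = Fintype.card {j : Fin n // M i (e j) = true} := (Fintype.card_subtype _).symm
    _ = Fintype.card {j : Fin n // M i j = true} :=
        Fintype.card_congr (Equiv.subtypeEquiv (Equiv.ofBijective e ebij) (fun a => Iff.rfl))
    _ = (Finset.univ.filter fun j => M i j = true).card := Fintype.card_subtype _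

/-- For `j ≤ n`, `Lseq` is the partial sum of `Dm`. -/
lemma Lseq_eq (hn : 0 < n) (M : Fin σ → Fin n → Bool) (j : ℕ) (hj : j ≤ n) :
    Lseq σ n M j = ∑ t ∈ Finset.range j, Dm hn M t := by
  classical
  unfold Lseq
  refine Finset.sum_nbij' (fun t => (t : ℕ))
    (fun t => ⟨t % n, Nat.mod_lt _ hn⟩) ?_ ?_ ?_ ?_ ?_
  · intro a ha
    simp only [Finset.mem_filter] at ha
    exact Finset.mem_range.mpr ha.2
  · intro a ha
    simp only [Finset.mem_filter, Finset.mem_univ, true_and]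
    have := Finset.mem_range.mp ha
    show a % n < j
    rw [Nat.mod_eq_of_lt (lt_of_lt_of_le this hj)]
    exact this
  · intro a _
    exact Fin.ext (Nat.mod_eq_of_lt a.isLt)
  · intro a ha
    exact Nat.mod_eq_of_lt (lt_of_lt_of_le (Finset.mem_range.mp ha) hj)
  · intro a ha
    simp only [Dm]
    congr 2
    simp [Fin.ext_iff, Nat.mod_eq_of_lt a.isLt]

/-- Double counting: column sums total equals the row sums total. -/
lemma col_total (M : Fin σ → Fin n → Bool) :
    ∑ t : Fin n, colOnes σ n M t
      = ∑ i : Fin σ, (Finset.univ.filter fun j => M i j = true).card := by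
  classical
  simp only [colOnes, Finset.card_filter]
  exact Finset.sum_comm

/-- Total step sum is `-1` for matrices with the prescribed row counts. -/
lemma Dm_total (hn : 0 < n) (M : Fin σ → Fin n → Bool) (nd : Fin σ → ℕ)
    (hrow : ∀ i, (Finset.univ.filter fun j => M i j = true).card = nd i)
    (hsum : ∑ i, nd i = n - 1) :
    ∑ t ∈ Finset.range n, Dm hn M t = -1 := by
  classical
  have h1 : ∑ t ∈ Finset.range n, Dm hn M t
      = (∑ t : Fin n, ((colOnes σ n M t : ℤ) - 1)) := by
    rw [← Fin.sum_univ_eq_sum_range (fun t => Dm hn M t) n]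
    apply Finset.sum_congr rfl
    intro t _
    simp only [Dm]
    congr 2
    simp [Fin.ext_iff, Nat.mod_eq_of_lt t.isLt]
  rw [h1, Finset.sum_sub_distrib]
  have h2 : ∑ t : Fin n, (colOnes σ n M t : ℤ) = ((n : ℤ) - 1) := by
    rw [← Nat.cast_sum, col_total]
    have : ∑ i : Fin σ, (Finset.univ.filter fun j => M i j = true).card = n - 1 := by
      rw [← hsum]; exact Finset.sum_congr rfl (fun i _ => hrow i)
    rw [this]
    omega
  rw [h2]
  simp


lemma Dm_mod (hn : 0 < n) (M : Fin σ → Fin n → Bool) (a t : ℕ) :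
    Dm hn M (a % n + t) = Dm hn M (a + t) := by
  simp only [Dm, Nat.mod_add_mod]

/-- Bridge: the shifted matrix is Łukasiewicz iff the rotation is "good". -/
lemma lukas_iff (hn : 0 < n) (M : Fin σ → Fin n → Bool) (nd : Fin σ → ℕ)
    (hrow : ∀ i, (Finset.univ.filter fun j => M i j = true).card = nd i)
    (hsum : ∑ i, nd i = n - 1) (s : ℕ) :
    IsLukasiewicz n (Lseq σ n (shiftN hn s M)) ↔
      ∀ j, 1 ≤ j → j ≤ n - 1 → 0 ≤ ∑ t ∈ Finset.range j, Dm hn M (s + t) := by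
  have hrow' : ∀ i, (Finset.univ.filter fun j => shiftN hn s M i j = true).card = nd i :=
    fun i => by rw [rowcount_shiftN]; exact hrow i
  have hL : ∀ j, j ≤ n → Lseq σ n (shiftN hn s M) j
      = ∑ t ∈ Finset.range j, Dm hn M (s + t) := by
    intro j hj
    rw [Lseq_eq hn _ j hj]
    exact Finset.sum_congr rfl fun t _ => by rw [Dm_shift, Nat.add_comm]
  constructor
  · intro h j h1 h2
    rw [← hL j (by omega)]
    exact h.2.1 j h1 h2
  · intro h
    refine ⟨?_, ?_, ?_⟩
    · rw [Lseq_eq hn _ n le_rfl]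
      exact Dm_total hn _ nd hrow' hsum
    · intro j h1 h2
      rw [hL j (by omega)]
      exact h j h1 h2
    · intro j h1 h2
      rw [Lseq_eq hn _ (j + 1) (by omega), Lseq_eq hn _ j (by omega),
        Finset.sum_range_succ]
      have hc : (0 : ℤ) ≤ (colOnes σ n (shiftN hn s M)
          ⟨j % n, Nat.mod_lt _ hn⟩ : ℤ) := Int.natCast_nonneg _
      simp only [Dm]
      linarith


lemma inj_aux (hn : 0 < n) (nd : Fin σ → ℕ) (hsum : ∑ i, nd i = n - 1)
    (r r' : Fin n) (M M' : Fin σ → Fin n → Bool)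
    (hMP : ∀ i, (Finset.univ.filter fun j => M i j = true).card = nd i)
    (hML : IsLukasiewicz n (Lseq σ n M))
    (hM'P : ∀ i, (Finset.univ.filter fun j => M' i j = true).card = nd i)
    (hM'L : IsLukasiewicz n (Lseq σ n M'))
    (h0 : shiftN hn r.val M = shiftN hn r'.val M') : r = r' ∧ M = M' := by
  obtain ⟨rr, -, hu⟩ := lukAux_cycle n hn (Dm hn M) (Dm_per hn M)
    (Dm_total hn M nd hMP hsum)
  have g0 : (0 : ℕ) = rr := by
    refine hu 0 ⟨hn, ?_⟩
    exact (lukas_iff hn M nd hMP hsum 0).mp (by rw [shiftN_zero]; exact hML)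
  have hr1 : r'.val < n := r'.isLt
  have hr2 : r.val < n := r.isLt
  have hM'eq : shiftN hn (n - r'.val + r.val) M = M' := by
    rw [← shiftN_shiftN hn (n - r'.val) r.val M, h0,
      shiftN_shiftN hn (n - r'.val) r'.val M',
      show n - r'.val + r'.val = n from by omega, shiftN_n]
  have gs : (n - r'.val + r.val) % n = rr := by
    refine hu _ ⟨Nat.mod_lt _ hn, ?_⟩
    have hluk : IsLukasiewicz n (Lseq σ n (shiftN hn (n - r'.val + r.val) M)) := by
      rw [hM'eq]; exact hM'L
    have hg := (lukas_iff hn M nd hMP hsum _).mp hluk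
    intro j h1 h2
    have h3 := hg j h1 h2
    refine le_trans h3
      (le_of_eq (Finset.sum_congr rfl fun t _ => (Dm_mod hn M _ t).symm))
  have hdvd : n ∣ (n - r'.val + r.val) :=
    Nat.dvd_of_mod_eq_zero (by rw [gs, ← g0])
  have hval : r.val = r'.val := by
    obtain ⟨k, hk⟩ := hdvd
    rcases k with - | - | k
    · omega
    · omega
    · exfalso
      have hlt : n * (k + 1 + 1) < n * 2 := by omega
      have := Nat.lt_of_mul_lt_mul_left hlt
      omega
  have hrr' : r = r' := Fin.ext hval
  subst hrr'
  refine ⟨rfl, ?_⟩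
  have h2 := congrArg (shiftN hn (n - r.val)) h0
  rwa [shiftN_shiftN, shiftN_shiftN,
    show n - r.val + r.val = n from by omega, shiftN_n, shiftN_n] at h2

lemma surj_aux (hn : 0 < n) (nd : Fin σ → ℕ) (hsum : ∑ i, nd i = n - 1)
    (M' : Fin σ → Fin n → Bool)
    (hM'P : ∀ i, (Finset.univ.filter fun j => M' i j = true).card = nd i) :
    ∃ (r : Fin n) (M : Fin σ → Fin n → Bool),
      (∀ i, (Finset.univ.filter fun j => M i j = true).card = nd i) ∧
      IsLukasiewicz n (Lseq σ n M) ∧ shiftN hn r.val M = M' := by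
  obtain ⟨r, ⟨hrn, hrgood⟩, -⟩ := lukAux_cycle n hn (Dm hn M') (Dm_per hn M')
    (Dm_total hn M' nd hM'P hsum)
  refine ⟨⟨(n - r) % n, Nat.mod_lt _ hn⟩, shiftN hn r M', ?_, ?_, ?_⟩
  · intro i; rw [rowcount_shiftN]; exact hM'P i
  · exact (lukas_iff hn M' nd hM'P hsum r).mpr hrgood
  · show shiftN hn ((n - r) % n) (shiftN hn r M') = M'
    rw [shiftN_mod, shiftN_shiftN, show n - r + r = n from by omega, shiftN_n]

end LukAux

open LukAux in
/-- The number of `σ × n` binary matrices whose `i`-th row contains exactly `nd i`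
ones and whose associated sequence `L` is a Łukasiewicz path equals
`(1/n) ∏ᵢ C(n, nd i)`. -/
theorem stmt1 (σ n : ℕ) (hn : 1 ≤ n) (nd : Fin σ → ℕ)
    (hsum : ∑ i, nd i = n - 1) :
    n * Set.ncard {M : Fin σ → Fin n → Bool |
        (∀ i, (Finset.univ.filter fun j => M i j = true).card = nd i) ∧
        IsLukasiewicz n (Lseq σ n M)} =
      ∏ i, Nat.choose n (nd i) := by
  classical
  have hn0 : 0 < n := hn
  set Good : Set (Fin σ → Fin n → Bool) := {M : Fin σ → Fin n → Bool |
      (∀ i, (Finset.univ.filter fun j => M i j = true).card = nd i) ∧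
      IsLukasiewicz n (Lseq σ n M)} with hGoodDef
  -- number of matrices with the prescribed row counts
  have hA : Nat.card {M : Fin σ → Fin n → Bool //
      ∀ i, (Finset.univ.filter fun j => M i j = true).card = nd i}
      = ∏ i, Nat.choose n (nd i) := by
    rw [Nat.card_congr (Equiv.subtypePiEquivPi
      (p := fun i (f : Fin n → Bool) =>
        (Finset.univ.filter fun j => f j = true).card = nd i)), Nat.card_pi]
    apply Finset.prod_congr rfl
    intro i _
    have e2 : {f : Fin n → Bool // (Finset.univ.filter fun j => f j = true).card = nd i}
        ≃ {s : Finset (Fin n) // s.card = nd i} :=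
      { toFun := fun f => ⟨Finset.univ.filter fun j => f.1 j = true, f.2⟩
        invFun := fun s => ⟨fun j => decide (j ∈ s.1), by
          have hfe : (Finset.univ.filter fun j => decide (j ∈ s.1) = true) = s.1 := by
            ext j; simp
          rw [hfe]; exact s.2⟩
        left_inv := fun f => Subtype.ext (funext fun j => by
          by_cases h : f.1 j = true <;> simp [h])
        right_inv := fun s => Subtype.ext (by ext j; simp) }
    rw [Nat.card_congr e2, Nat.card_eq_fintype_card, Fintype.card_finset_len,
      Fintype.card_fin]
  -- the shifting bijection
  let Φ : Fin n × {M : Fin σ → Fin n → Bool // M ∈ Good} →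
      {M : Fin σ → Fin n → Bool //
        ∀ i, (Finset.univ.filter fun j => M i j = true).card = nd i} :=
    fun p => ⟨shiftN hn0 p.1.val p.2.1,
      fun i => by rw [rowcount_shiftN]; exact p.2.2.1 i⟩
  have hΦ : Function.Bijective Φ := by
    constructor
    · rintro ⟨r, M, hMP, hML⟩ ⟨r', M', hM'P, hM'L⟩ h
      have h0 : shiftN hn0 r.val M = shiftN hn0 r'.val M' := congrArg Subtype.val h
      obtain ⟨h1, h2⟩ := inj_aux hn0 nd hsum r r' M M' hMP hML hM'P hM'L h0
      subst h1
      exact congrArg (Prod.mk r) (Subtype.ext h2)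
    · rintro ⟨M', hM'P⟩
      obtain ⟨r, M, hMP, hML, hshift⟩ := surj_aux hn0 nd hsum M' hM'P
      exact ⟨⟨r, M, hMP, hML⟩, Subtype.ext hshift⟩
  have hcard := Nat.card_eq_of_bijective Φ hΦ
  rw [Nat.card_prod, Nat.card_eq_fintype_card (α := Fin n), Fintype.card_fin] at hcard
  rw [← Nat.card_coe_set_eq, hcard, hA]
end

section
/- Let A = (a_1, …, a_n) be a sequence of integers with a_1 + … + a_n = −1. Then (i) all n cyclic permutations of A are pairwise distinct as sequences, and (ii) there exists exactly one cyclic permutation A' = (a'_1, …, a'_n) of A such that a'_1 + … + a'_j ≥ 0 for every j ∈ [n−1]. -/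
namespace Stmt3Aux

variable {n : ℕ}

/-- prefix sums of the periodized sequence -/
def pf (hn : 0 < n) (A : Fin n → ℤ) (k : ℕ) : ℤ :=
  ∑ i ∈ Finset.range k, A ⟨i % n, Nat.mod_lt i hn⟩

lemma pf_succ (hn : 0 < n) (A : Fin n → ℤ) (k : ℕ) :
    pf hn A (k + 1) = pf hn A k + A ⟨k % n, Nat.mod_lt k hn⟩ :=
  Finset.sum_range_succ _ _

lemma pf_n (hn : 0 < n) (A : Fin n → ℤ) : pf hn A n = ∑ t, A t := by
  rw [pf, ← Fin.sum_univ_eq_sum_range (fun i => A ⟨i % n, Nat.mod_lt i hn⟩) n]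
  apply Finset.sum_congr rfl
  intro t _
  congr 1
  exact Fin.ext (Nat.mod_eq_of_lt t.isLt)

lemma pf_shift (hn : 0 < n) (A : Fin n → ℤ) (k : ℕ) :
    pf hn A (k + n) = pf hn A k + ∑ t, A t := by
  induction k with
  | zero => simpa [pf] using pf_n hn A
  | succ k ih =>
      have h1 : k + 1 + n = (k + n) + 1 := by omega
      rw [h1, pf_succ, ih, pf_succ]
      have h2 : (⟨(k + n) % n, Nat.mod_lt _ hn⟩ : Fin n)
          = ⟨k % n, Nat.mod_lt k hn⟩ := Fin.ext (Nat.add_mod_right k n)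
      rw [h2]; ring

lemma sum_filter_eq (hn : 0 < n) (A : Fin n → ℤ) (r : Fin n) :
    ∀ j : ℕ, j ≤ n → ∑ t ∈ Finset.univ.filter (fun t : Fin n => (t : ℕ) < j), A (t + r)
      = pf hn A (r.val + j) - pf hn A r.val := by
  intro j
  induction j with
  | zero => intro _; simp
  | succ j ih =>
      intro hj
      have hjn : j < n := hj
      have hset : Finset.univ.filter (fun t : Fin n => (t : ℕ) < j + 1)
          = insert (⟨j, hjn⟩ : Fin n) (Finset.univ.filter (fun t : Fin n => (t : ℕ) < j)) := by
        ext t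
        simp [Nat.lt_succ_iff_lt_or_eq, Fin.ext_iff, or_comm]
        omega
      have key : (⟨j, hjn⟩ + r : Fin n) = ⟨(r.val + j) % n, Nat.mod_lt _ hn⟩ := by
        apply Fin.ext
        simp [Fin.add_def, Nat.add_comm]
      rw [hset, Finset.sum_insert (by simp), ih hjn.le, key,
        show r.val + (j + 1) = (r.val + j) + 1 from rfl, pf_succ]
      ring

end Stmt3Aux

/-- Let `A` be a sequence of `n` integers summing to `−1`.  The `r`-th cyclic
permutation of `A` is `t ↦ A (t + r)` (indices in `Fin n`, addition mod `n`).
Then (i) all `n` cyclic permutations of `A` are pairwise distinct, and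
(ii) there is exactly one cyclic permutation whose first `j` entries sum to a
nonnegative number for every `j ∈ [n−1]`. -/
theorem stmt3 (n : ℕ) (A : Fin n → ℤ) (hsum : ∑ t, A t = -1) :
    Function.Injective (fun r : Fin n => fun t : Fin n => A (t + r)) ∧
    ∃! r : Fin n, ∀ j : ℕ, 1 ≤ j → j ≤ n - 1 →
      0 ≤ ∑ t ∈ Finset.univ.filter (fun t : Fin n => (t : ℕ) < j), A (t + r) := by
  rcases Nat.eq_zero_or_pos n with rfl | hn
  · simp at hsum
  haveI : NeZero n := ⟨hn.ne'⟩
  set F := Stmt3Aux.pf hn A with hF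
  have fshift : ∀ k, F (k + n) = F k - 1 := by
    intro k; rw [hF, Stmt3Aux.pf_shift hn A k, hsum]; ring
  have hchar : ∀ (r : Fin n) (j : ℕ), j ≤ n - 1 →
      (∑ t ∈ Finset.univ.filter (fun t : Fin n => (t : ℕ) < j), A (t + r))
        = F (r.val + j) - F r.val :=
    fun r j hj => Stmt3Aux.sum_filter_eq hn A r j (by omega)
  -- two good rotations cannot differ
  have key : ∀ r r' : Fin n, (r : ℕ) < (r' : ℕ) →
      (∀ j : ℕ, 1 ≤ j → j ≤ n - 1 → F r.val ≤ F (r.val + j)) →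
      (∀ j : ℕ, 1 ≤ j → j ≤ n - 1 → F r'.val ≤ F (r'.val + j)) → False := by
    intro r r' hlt h h'
    have hr'n : (r' : ℕ) < n := r'.isLt
    have h1 := h ((r' : ℕ) - (r : ℕ)) (by omega) (by omega)
    have h2 := h' (n - ((r' : ℕ) - (r : ℕ))) (by omega) (by omega)
    rw [show (r : ℕ) + ((r' : ℕ) - (r : ℕ)) = (r' : ℕ) by omega] at h1
    rw [show (r' : ℕ) + (n - ((r' : ℕ) - (r : ℕ))) = (r : ℕ) + n by omega] at h2
    rw [fshift] at h2
    omega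
  -- existence: least index achieving the minimum of F on [0,n)
  have hS : (Finset.range n).Nonempty := ⟨0, Finset.mem_range.mpr hn⟩
  set m := ((Finset.range n).image F).min' (hS.image F) with hm
  have hmmem : m ∈ (Finset.range n).image F := Finset.min'_mem _ _
  obtain ⟨k₁, hk₁S, hk₁⟩ := Finset.mem_image.mp hmmem
  set T := (Finset.range n).filter (fun k => F k = m) with hT
  have hTne : T.Nonempty := ⟨k₁, Finset.mem_filter.mpr ⟨hk₁S, hk₁⟩⟩
  set k₀ := T.min' hTne with hk₀
  have hk₀T : k₀ ∈ T := T.min'_mem hTne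
  have hk₀n : k₀ < n := Finset.mem_range.mp (Finset.mem_filter.mp hk₀T).1
  have hfk₀ : F k₀ = m := (Finset.mem_filter.mp hk₀T).2
  have hmin : ∀ k, k < n → m ≤ F k := fun k hk =>
    Finset.min'_le _ _ (Finset.mem_image_of_mem F (Finset.mem_range.mpr hk))
  have hstrict : ∀ k, k < k₀ → m < F k := by
    intro k hk
    have h1 : m ≤ F k := hmin k (hk.trans hk₀n)
    rcases h1.lt_or_eq with h | h
    · exact h
    · exfalso
      have hmem : k ∈ T := Finset.mem_filter.mpr ⟨Finset.mem_range.mpr (hk.trans hk₀n), h.symm⟩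
      have := Finset.min'_le T k hmem
      omega
  set r₀ : Fin n := ⟨k₀, hk₀n⟩ with hr₀def
  have hr₀ : ∀ j : ℕ, 1 ≤ j → j ≤ n - 1 → F r₀.val ≤ F (r₀.val + j) := by
    intro j h1 h2
    have hval : (r₀ : ℕ) = k₀ := rfl
    rw [hval]
    by_cases hc : k₀ + j < n
    · rw [hfk₀] at *
      exact (hmin _ hc)
    · have hk' : k₀ + j = (k₀ + j - n) + n := by omega
      rw [hk', fshift]
      have := hstrict (k₀ + j - n) (by omega)
      omega
  have existsUnique : ∃! r : Fin n, ∀ j : ℕ, 1 ≤ j → j ≤ n - 1 →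
      0 ≤ ∑ t ∈ Finset.univ.filter (fun t : Fin n => (t : ℕ) < j), A (t + r) := by
    refine ⟨r₀, ?_, ?_⟩
    · intro j h1 h2
      rw [hchar r₀ j h2]
      have := hr₀ j h1 h2
      omega
    · intro r' hr'
      have hr'' : ∀ j : ℕ, 1 ≤ j → j ≤ n - 1 → F r'.val ≤ F (r'.val + j) := by
        intro j h1 h2
        have := hr' j h1 h2
        rw [hchar r' j h2] at this
        omega
      by_contra hne
      rcases Nat.lt_or_ge (r' : ℕ) (r₀ : ℕ) with h | h
      · exact key r' r₀ h hr'' hr₀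
      · have hlt : (r₀ : ℕ) < (r' : ℕ) :=
          lt_of_le_of_ne h (fun e => hne (Fin.ext e.symm))
        exact key r₀ r' hlt hr₀ hr''
  refine ⟨?_, existsUnique⟩
  intro r r' hrr'
  obtain ⟨s₀, hs₀, huniq⟩ := existsUnique
  have happ : ∀ u : Fin n, A (u + r) = A (u + r') := fun u => congrFun hrr' u
  set s := s₀ - r with hs
  have h1 : s + r = s₀ := by rw [hs]; abel
  have heq : ∀ t : Fin n, A (t + (s + r')) = A (t + (s + r)) := by
    intro t
    rw [← add_assoc, ← add_assoc]
    exact (happ (t + s)).symm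
  have h2 : ∀ j : ℕ, 1 ≤ j → j ≤ n - 1 →
      0 ≤ ∑ t ∈ Finset.univ.filter (fun t : Fin n => (t : ℕ) < j), A (t + (s + r')) := by
    intro j hj1 hj2
    have hsum2 := hs₀ j hj1 hj2
    rw [← h1] at hsum2
    calc (0 : ℤ) ≤ ∑ t ∈ Finset.univ.filter (fun t : Fin n => (t : ℕ) < j), A (t + (s + r)) :=
          hsum2
      _ = ∑ t ∈ Finset.univ.filter (fun t : Fin n => (t : ℕ) < j), A (t + (s + r')) :=
          Finset.sum_congr rfl (fun t _ => (heq t).symm)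
  have h3 : s + r' = s₀ := huniq (s + r') h2
  have : s + r' = s + r := by rw [h1, h3]
  exact (add_left_cancel this).symm
end

section
/- Let n ≥ 1 and let n_1, …, n_σ be nonnegative integers with n_1 + … + n_σ = n − 1, and let M ∈ 𝓜. Then the n rotations M^0, M^1, …, M^{n−1} of M are pairwise distinct, and exactly one of them has an associated sequence L that is a Łukasiewicz path. -/
/-- The `r`-th rotation of `M`: column `j` of `M^r` is column `(j + r) mod n` of `M`. -/
def rotM (σ n : ℕ) (M : Fin σ → Fin n → Bool) (r : Fin n) : Fin σ → Fin n → Bool :=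
  fun i j => M i (j + r)

set_option linter.unusedSectionVars false

open Fin.NatCast Fin.CommRing

section Aux
variable (σ n : ℕ) [NeZero n] (M : Fin σ → Fin n → Bool)

def aSeq (t : ℕ) : ℤ := (colOnes σ n M (t : Fin n) : ℤ) - 1

def Spart (k : ℕ) : ℤ := ∑ t ∈ Finset.range k, aSeq σ n M t

lemma aSeq_ge (t : ℕ) : -1 ≤ aSeq σ n M t := by
  have : (0:ℤ) ≤ (colOnes σ n M (t : Fin n) : ℤ) := Int.ofNat_nonneg _
  unfold aSeq; linarith

lemma aSeq_period (t : ℕ) : aSeq σ n M (t + n) = aSeq σ n M t := by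
  unfold aSeq; congr 2; push_cast; simp

lemma sum_colOnes : ∑ t : Fin n, colOnes σ n M t
    = ∑ i : Fin σ, (Finset.univ.filter fun j => M i j = true).card := by
  simp only [colOnes, Finset.card_filter]
  rw [Finset.sum_comm]

lemma Spart_n (hsum : ∑ t : Fin n, colOnes σ n M t = n - 1) :
    Spart σ n M n = -1 := by
  have h1 : 1 ≤ n := Nat.one_le_iff_ne_zero.mpr (NeZero.ne n)
  unfold Spart aSeq
  rw [Finset.sum_range fun t => ((colOnes σ n M (t : Fin n) : ℤ) - 1)]
  have : ∀ t : Fin n, ((colOnes σ n M ((t : ℕ) : Fin n) : ℤ) - 1)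
      = ((colOnes σ n M t : ℤ) - 1) := by
    intro t; rw [Fin.cast_val_eq_self]
  rw [Finset.sum_congr rfl fun t _ => this t, Finset.sum_sub_distrib]
  simp only [Finset.sum_const, Finset.card_univ, Fintype.card_fin, nsmul_eq_mul, mul_one]
  rw [← Nat.cast_sum, hsum]
  push_cast [h1]
  ring

lemma Spart_add_n (hsum : ∑ t : Fin n, colOnes σ n M t = n - 1) (k : ℕ) :
    Spart σ n M (k + n) = Spart σ n M k - 1 := by
  induction k with
  | zero => simpa [Spart] using Spart_n σ n M hsum
  | succ k ih =>
    have e1 : k + 1 + n = (k + n) + 1 := by ring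
    rw [e1]
    unfold Spart at *
    rw [Finset.sum_range_succ, Finset.sum_range_succ, aSeq_period, ih]
    ring

lemma sum_aSeq_shift (k j : ℕ) :
    ∑ t ∈ Finset.range j, aSeq σ n M (k + t) = Spart σ n M (k + j) - Spart σ n M k := by
  induction j with
  | zero => simp
  | succ j ih =>
    rw [Finset.sum_range_succ, ih]
    have : k + (j + 1) = (k + j) + 1 := by ring
    rw [this]
    unfold Spart
    rw [Finset.sum_range_succ]
    ring

end Aux

section Aux2
variable (σ n : ℕ) [NeZero n]

lemma Lseq_eq (M' : Fin σ → Fin n → Bool) (j : ℕ) (hj : j ≤ n) :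
    Lseq σ n M' j = ∑ t ∈ Finset.range j, ((colOnes σ n M' (t : Fin n) : ℤ) - 1) := by
  unfold Lseq
  refine Finset.sum_nbij' (fun i => (i : ℕ)) (fun t => (t : Fin n)) ?_ ?_ ?_ ?_ ?_
  · intro a ha; simp at ha ⊢; omega
  · intro a ha; simp at ha ⊢; exact lt_of_le_of_lt (Nat.mod_le a n) ha
  · intro a _; exact Fin.cast_val_eq_self a
  · intro a ha; simp at ha; exact Fin.val_cast_of_lt (by omega)
  · intro a _; rw [Fin.cast_val_eq_self a]

lemma colOnes_rot (M : Fin σ → Fin n → Bool) (r : Fin n) (t : Fin n) :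
    colOnes σ n (rotM σ n M r) t = colOnes σ n M (t + r) := rfl

lemma Lseq_rot (M : Fin σ → Fin n → Bool) (r : Fin n) (j : ℕ) (hj : j ≤ n) :
    Lseq σ n (rotM σ n M r) j = Spart σ n M ((r : ℕ) + j) - Spart σ n M (r : ℕ) := by
  rw [Lseq_eq σ n _ j hj, ← sum_aSeq_shift]
  refine Finset.sum_congr rfl fun t ht => ?_
  rw [colOnes_rot]
  unfold aSeq
  congr 3
  push_cast
  ring

end Aux2

section Aux3
variable (σ n : ℕ) [NeZero n] (M : Fin σ → Fin n → Bool)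

lemma Spart_succ (k : ℕ) : Spart σ n M (k + 1) = Spart σ n M k + aSeq σ n M k := by
  unfold Spart; rw [Finset.sum_range_succ]

lemma Luk_iff (hsum : ∑ t : Fin n, colOnes σ n M t = n - 1) (r : Fin n) :
    IsLukasiewicz n (Lseq σ n (rotM σ n M r)) ↔
      ∀ j, 1 ≤ j → j ≤ n - 1 → Spart σ n M (r : ℕ) ≤ Spart σ n M ((r : ℕ) + j) := by
  have hn : 1 ≤ n := Nat.one_le_iff_ne_zero.mpr (NeZero.ne n)
  constructor
  · rintro ⟨-, h0, -⟩ j h1 hj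
    have := h0 j h1 hj
    rw [Lseq_rot σ n M r j (by omega)] at this
    linarith
  · intro hG
    refine ⟨?_, ?_, ?_⟩
    · rw [Lseq_rot σ n M r n le_rfl, Spart_add_n σ n M hsum]; ring
    · intro j h1 hj
      rw [Lseq_rot σ n M r j (by omega)]
      have := hG j h1 hj; linarith
    · intro j h1 hj
      rw [Lseq_rot σ n M r j (by omega), Lseq_rot σ n M r (j+1) (by omega)]
      have e : (r : ℕ) + (j + 1) = ((r : ℕ) + j) + 1 := by ring
      rw [e, Spart_succ]
      have := aSeq_ge σ n M ((r : ℕ) + j)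
      linarith

lemma cycle_nat (hsum : ∑ t : Fin n, colOnes σ n M t = n - 1) :
    ∃! r : ℕ, r < n ∧ ∀ j, 1 ≤ j → j ≤ n - 1 →
      Spart σ n M r ≤ Spart σ n M (r + j) := by
  have hn : 1 ≤ n := Nat.one_le_iff_ne_zero.mpr (NeZero.ne n)
  set S := Spart σ n M with hS
  -- existence of a minimizer over range n
  have hex : ∃ r, r < n ∧ ∀ k, k < n → S r ≤ S k := by
    obtain ⟨r, hr, hmin⟩ := Finset.exists_min_image (Finset.range n) S
      ⟨0, Finset.mem_range.mpr (by omega)⟩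
    exact ⟨r, Finset.mem_range.mp hr, fun k hk => hmin k (Finset.mem_range.mpr hk)⟩
  classical
  set r₀ := Nat.find hex with hr₀def
  obtain ⟨hr₀n, hr₀min⟩ := Nat.find_spec hex
  have hfirst : ∀ k, k < r₀ → S r₀ < S k := by
    intro k hk
    have hkn : k < n := by omega
    have := Nat.find_min hex hk
    push_neg at this
    obtain ⟨k', hk', hlt⟩ := this hkn
    exact lt_of_le_of_lt (hr₀min k' hk') hlt
  have hgood : ∀ j, 1 ≤ j → j ≤ n - 1 → S r₀ ≤ S (r₀ + j) := by
    intro j h1 hj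
    by_cases hc : r₀ + j < n
    · exact hr₀min _ hc
    · have hk : r₀ + j = (r₀ + j - n) + n := by omega
      have hkr : r₀ + j - n < r₀ := by omega
      rw [hk, hS, Spart_add_n σ n M hsum]
      have h2 := hfirst _ hkr
      simp only [hS] at h2
      linarith
  refine ⟨r₀, ⟨hr₀n, hgood⟩, ?_⟩
  -- uniqueness
  rintro r' ⟨hr'n, hg'⟩
  by_contra hne
  -- wlog style: derive contradiction for both orders
  have key : ∀ a b : ℕ, a < n → b < n → a < b →
      (∀ j, 1 ≤ j → j ≤ n - 1 → S a ≤ S (a + j)) →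
      (∀ j, 1 ≤ j → j ≤ n - 1 → S b ≤ S (b + j)) → False := by
    intro a b han hbn hab hga hgb
    have h1 : S a ≤ S b := by
      have := hga (b - a) (by omega) (by omega)
      rwa [show a + (b - a) = b by omega] at this
    have h2 : S b ≤ S a - 1 := by
      have := hgb (n + a - b) (by omega) (by omega)
      rw [show b + (n + a - b) = a + n by omega, hS, Spart_add_n σ n M hsum] at this
      simp only [hS]
      linarith
    linarith
  rcases Nat.lt_or_ge r' r₀ with h | h
  · exact key r' r₀ hr'n hr₀n h hg' hgood
  · exact key r₀ r' hr₀n hr'n (by omega) hgood hg'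

end Aux3

section Aux4
variable (σ n : ℕ) [NeZero n] (M : Fin σ → Fin n → Bool)

lemma rot_inj (hsum : ∑ t : Fin n, colOnes σ n M t = n - 1) :
    Function.Injective (rotM σ n M) := by
  have hn : 1 ≤ n := Nat.one_le_iff_ne_zero.mpr (NeZero.ne n)
  intro r r' h
  by_contra hne
  set e : Fin n := r' - r with he_def
  have he : e ≠ 0 := sub_ne_zero.mpr fun hx => hne hx.symm
  have hMfix : ∀ i t, M i (t + e) = M i t := by
    intro i t
    have h2 := congrFun (congrFun h i) (t - r)
    simp only [rotM] at h2
    rw [sub_add_cancel] at h2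
    have e2 : t - r + r' = t + e := by rw [he_def]; ring
    rw [e2] at h2
    exact h2.symm
  set c : ℕ := (e : ℕ) with hc_def
  have hc1 : 1 ≤ c := by
    rcases Nat.eq_zero_or_pos c with h0 | h0
    · exact absurd (Fin.ext (by simp [hc_def] at h0 ⊢; omega)) he
    · exact h0
  have hc2 : c < n := e.isLt
  have ha : ∀ t : ℕ, aSeq σ n M (t + c) = aSeq σ n M t := by
    intro t
    unfold aSeq
    have hcast : ((t + c : ℕ) : Fin n) = (t : Fin n) + e := by
      push_cast [hc_def, Fin.cast_val_eq_self]; rfl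
    rw [hcast]
    congr 2
    unfold colOnes
    congr 1
    apply Finset.filter_congr
    intro i _
    simp [hMfix i]
  have hSadd : ∀ k, Spart σ n M (k + c) = Spart σ n M k + Spart σ n M c := by
    intro k
    induction k with
    | zero => simp [Spart]
    | succ k ih =>
      rw [show k + 1 + c = (k + c) + 1 by omega, Spart_succ, ih, ha, Spart_succ]
      ring
  have hmulc : Spart σ n M (n * c) = (n : ℤ) * Spart σ n M c := by
    have : ∀ m : ℕ, Spart σ n M (m * c) = (m : ℤ) * Spart σ n M c := by
      intro m
      induction m with
      | zero => simp [Spart]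
      | succ m ih =>
        rw [show (m + 1) * c = m * c + c by ring, hSadd, ih]
        push_cast; ring
    exact this n
  have hmuln : Spart σ n M (c * n) = -(c : ℤ) := by
    have : ∀ m : ℕ, Spart σ n M (m * n) = -(m : ℤ) := by
      intro m
      induction m with
      | zero => simp [Spart]
      | succ m ih =>
        rw [show (m + 1) * n = m * n + n by ring, Spart_add_n σ n M hsum, ih]
        push_cast; ring
    exact this c
  rw [Nat.mul_comm] at hmulc
  have hv : (n : ℤ) * Spart σ n M c = -(c : ℤ) := by rw [← hmulc, hmuln]
  set v := Spart σ n M c with hv_def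
  have hcz : (1 : ℤ) ≤ (c : ℤ) := by exact_mod_cast hc1
  have hcn : (c : ℤ) < (n : ℤ) := by exact_mod_cast hc2
  have hnz : (1 : ℤ) ≤ (n : ℤ) := by exact_mod_cast hn
  rcases le_or_gt 0 v with h0 | h0
  · have : (0 : ℤ) ≤ (n : ℤ) * v := mul_nonneg (by linarith) h0
    linarith
  · have hv1 : v ≤ -1 := by omega
    have : (n : ℤ) * v ≤ (n : ℤ) * (-1) := by
      apply mul_le_mul_of_nonneg_left hv1 (by linarith)
    linarith

end Aux4


/-- For every matrix `M ∈ 𝓜`, all `n` rotations of `M` are pairwise distinct,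
and exactly one of them has an associated sequence `L` that is a Łukasiewicz path. -/
theorem stmt4 (σ n : ℕ) (hn : 1 ≤ n) (nd : Fin σ → ℕ)
    (hsum : ∑ i, nd i = n - 1) (M : Fin σ → Fin n → Bool)
    (hM : ∀ i, (Finset.univ.filter fun j => M i j = true).card = nd i) :
    Function.Injective (rotM σ n M) ∧
    ∃! r : Fin n, IsLukasiewicz n (Lseq σ n (rotM σ n M r)) := by
  haveI : NeZero n := ⟨by omega⟩
  have hsum' : ∑ t : Fin n, colOnes σ n M t = n - 1 := by
    rw [sum_colOnes]
    simp only [hM]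
    exact hsum
  refine ⟨rot_inj σ n M hsum', ?_⟩
  obtain ⟨r₀, ⟨hr₀n, hg⟩, huniq⟩ := cycle_nat σ n M hsum'
  refine ⟨⟨r₀, hr₀n⟩, ?_, ?_⟩
  · show IsLukasiewicz n (Lseq σ n (rotM σ n M ⟨r₀, hr₀n⟩))
    rw [Luk_iff σ n M hsum']
    simpa using hg
  · intro r' hr'
    have h1 := (Luk_iff σ n M hsum' r').mp hr'
    have h2 := huniq (r' : ℕ) ⟨r'.isLt, h1⟩
    exact Fin.ext h2
end

section
/- For every trie S over an alphabet Σ and every integer k ≥ 0, it holds that H_{k+1}(S) ≤ H_k(S). -/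
/-- The `k`-th order context `λ_k(s)` of a node `s`: the last `k` symbols of
`s`, left-padded with the extra symbol `#` (modeled as `none`) when `|s| < k`.
It is represented as a function `Fin k → Option (Fin σ)`. -/
def context (σ k : ℕ) (s : List (Fin σ)) : Fin k → Option (Fin σ) :=
  fun i =>
    (List.replicate (k - s.length) (none : Option (Fin σ)) ++
      (s.drop (s.length - k)).map some).getD (i : ℕ) none

/-- The `k`-th order empirical entropy of a trie `S` with `n` nodes:
`H_k(S) = (1/n) ∑_{w} ∑_{c} n_{w,c}·log₂(n_w/n_{w,c}) + (n_w − n_{w,c})·log₂(n_w/(n_w − n_{w,c}))`,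
where `n_w` counts nodes with context `w` and `n_{w,c}` those among them with an
outgoing edge labeled `c` (conventions `0·log₂(x/0) = 0` hold automatically). -/
noncomputable def trieHk (σ : ℕ) (S : Finset (List (Fin σ))) (k : ℕ) : ℝ :=
  (1 / (S.card : ℝ)) *
    ∑ w : Fin k → Option (Fin σ), ∑ c : Fin σ,
      (((S.filter fun s => context σ k s = w ∧ s ++ [c] ∈ S).card : ℝ) *
          Real.logb 2 (((S.filter fun s => context σ k s = w).card : ℝ) /
            ((S.filter fun s => context σ k s = w ∧ s ++ [c] ∈ S).card : ℝ)) +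
        (((S.filter fun s => context σ k s = w).card : ℝ) -
            ((S.filter fun s => context σ k s = w ∧ s ++ [c] ∈ S).card : ℝ)) *
          Real.logb 2 (((S.filter fun s => context σ k s = w).card : ℝ) /
            (((S.filter fun s => context σ k s = w).card : ℝ) -
              ((S.filter fun s => context σ k s = w ∧ s ++ [c] ∈ S).card : ℝ))))

-- two-term log-sum inequality
open Real in
lemma logsum_pair {a b a' b' : ℝ} (ha : 0 ≤ a) (hab : a ≤ b) (ha' : 0 ≤ a') (hab' : a' ≤ b') :
    a * Real.logb 2 (b / a) + a' * Real.logb 2 (b' / a') ≤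
    (a + a') * Real.logb 2 ((b + b') / (a + a')) := by
  rcases eq_or_lt_of_le ha with h0 | hpos
  · rcases eq_or_lt_of_le ha' with h0' | hpos'
    · simp [← h0, ← h0']
    · have hb' : 0 < b' := lt_of_lt_of_le hpos' hab'
      have hb : 0 ≤ b := le_trans ha hab
      simp only [← h0, zero_mul, zero_add, zero_div]
      have : b' / a' ≤ (b + b') / a' := by gcongr; linarith
      exact mul_le_mul_of_nonneg_left (Real.logb_le_logb_of_le one_lt_two (div_pos hb' hpos') this) ha'
  · rcases eq_or_lt_of_le ha' with h0' | hpos'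
    · have hb : 0 < b := lt_of_lt_of_le hpos hab
      have hb' : 0 ≤ b' := le_trans ha' hab'
      simp only [← h0', zero_mul, add_zero, zero_div]
      have : b / a ≤ (b + b') / a := by gcongr; linarith
      exact mul_le_mul_of_nonneg_left (Real.logb_le_logb_of_le one_lt_two (div_pos hb hpos) this) ha
    · have hb : 0 < b := lt_of_lt_of_le hpos hab
      have hb' : 0 < b' := lt_of_lt_of_le hpos' hab'
      have hs : (0:ℝ) < a + a' := by linarith
      have hx : b / a ∈ Set.Ioi (0:ℝ) := by simp only [Set.mem_Ioi]; positivity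
      have hy : b' / a' ∈ Set.Ioi (0:ℝ) := by simp only [Set.mem_Ioi]; positivity
      have key := strictConcaveOn_log_Ioi.concaveOn.2 hx hy
        (show (0:ℝ) ≤ a / (a + a') by positivity) (show (0:ℝ) ≤ a' / (a + a') by positivity)
        (by field_simp)
      have harg : (a / (a + a')) • (b / a) + (a' / (a + a')) • (b' / a')
          = (b + b') / (a + a') := by
        simp only [smul_eq_mul]
        field_simp
      rw [harg] at key
      have key2 := mul_le_mul_of_nonneg_left key (le_of_lt hs)
      have e1 : (a + a') * ((a / (a + a')) • Real.log (b / a)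
          + (a' / (a + a')) • Real.log (b' / a'))
          = a * Real.log (b / a) + a' * Real.log (b' / a') := by
        simp only [smul_eq_mul]
        field_simp
      rw [e1] at key2
      simp only [Real.logb]
      have hl2 : (0:ℝ) < Real.log 2 := Real.log_pos one_lt_two
      rw [div_eq_mul_inv, div_eq_mul_inv, div_eq_mul_inv (Real.log ((b+b')/(a+a')))]
      have := mul_le_mul_of_nonneg_right key2 (inv_nonneg.2 hl2.le)
      calc a * (Real.log (b / a) * (Real.log 2)⁻¹) + a' * (Real.log (b' / a') * (Real.log 2)⁻¹)
          = (a * Real.log (b / a) + a' * Real.log (b' / a')) * (Real.log 2)⁻¹ := by ring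
        _ ≤ (a + a') * Real.log ((b + b') / (a + a')) * (Real.log 2)⁻¹ := this
        _ = (a + a') * (Real.log ((b + b') / (a + a')) * (Real.log 2)⁻¹) := by ring

/-- the per-symbol entropy contribution -/
noncomputable def ff (a b : ℝ) : ℝ :=
  a * Real.logb 2 (b / a) + (b - a) * Real.logb 2 (b / (b - a))

lemma ff_superadd {a b a' b' : ℝ} (ha : 0 ≤ a) (hab : a ≤ b) (ha' : 0 ≤ a') (hab' : a' ≤ b') :
    ff a b + ff a' b' ≤ ff (a + a') (b + b') := by
  unfold ff
  have h1 := logsum_pair ha hab ha' hab'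
  have h2 := logsum_pair (sub_nonneg.2 hab) (by linarith : b - a ≤ b)
    (sub_nonneg.2 hab') (by linarith : b' - a' ≤ b')
  have e : b + b' - (a + a') = (b - a) + (b' - a') := by ring
  rw [e]
  calc a * Real.logb 2 (b / a) + (b - a) * Real.logb 2 (b / (b - a)) +
      (a' * Real.logb 2 (b' / a') + (b' - a') * Real.logb 2 (b' / (b' - a')))
      = (a * Real.logb 2 (b / a) + a' * Real.logb 2 (b' / a')) +
        ((b - a) * Real.logb 2 (b / (b - a)) + (b' - a') * Real.logb 2 (b' / (b' - a'))) := by ring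
    _ ≤ (a + a') * Real.logb 2 ((b + b') / (a + a')) +
        ((b - a) + (b' - a')) * Real.logb 2 ((b + b') / ((b - a) + (b' - a'))) :=
      add_le_add h1 h2

lemma ff_sum {ι : Type*} (t : Finset ι) (g h : ι → ℝ)
    (hg : ∀ i ∈ t, 0 ≤ g i) (hgh : ∀ i ∈ t, g i ≤ h i) :
    ∑ i ∈ t, ff (g i) (h i) ≤ ff (∑ i ∈ t, g i) (∑ i ∈ t, h i) := by
  classical
  induction t using Finset.cons_induction with
  | empty => simp [ff]
  | cons a s has ih =>
    rw [Finset.sum_cons, Finset.sum_cons, Finset.sum_cons]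
    have h1 : ∑ i ∈ s, ff (g i) (h i) ≤ ff (∑ i ∈ s, g i) (∑ i ∈ s, h i) :=
      ih (fun i hi => hg i (Finset.mem_cons_of_mem hi))
        (fun i hi => hgh i (Finset.mem_cons_of_mem hi))
    have h2 : ff (g a) (h a) + ff (∑ i ∈ s, g i) (∑ i ∈ s, h i) ≤
        ff (g a + ∑ i ∈ s, g i) (h a + ∑ i ∈ s, h i) :=
      ff_superadd (hg a (Finset.mem_cons_self a s)) (hgh a (Finset.mem_cons_self a s))
        (Finset.sum_nonneg fun i hi => hg i (Finset.mem_cons_of_mem hi))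
        (Finset.sum_le_sum fun i hi => hgh i (Finset.mem_cons_of_mem hi))
    linarith

lemma context_succ (σ k : ℕ) (s : List (Fin σ)) (i : Fin k) :
    context σ k s i = context σ (k + 1) s i.succ := by
  unfold context
  have hsucc : (i.succ : ℕ) = (i : ℕ) + 1 := rfl
  rcases le_or_gt s.length k with h | h
  · have h1 : k + 1 - s.length = (k - s.length) + 1 := by omega
    have h2 : s.length - (k + 1) = 0 := by omega
    have h3 : s.length - k = 0 := by omega
    rw [h1, h2, h3, List.replicate_succ, List.cons_append, hsucc, List.getD_cons_succ]
  · have h1 : k + 1 - s.length = 0 := by omega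
    have h2 : k - s.length = 0 := by omega
    have h4 : s.length - (k + 1) < s.length := by omega
    have h5 : s.length - (k + 1) + 1 = s.length - k := by omega
    rw [h1, h2, List.replicate_zero, List.nil_append, List.nil_append,
      List.drop_eq_getElem_cons h4, h5, List.map_cons, hsucc, List.getD_cons_succ]

/-- restriction of a `(k+1)`-context to its last `k` symbols -/
def restrict (σ k : ℕ) (w : Fin (k + 1) → Option (Fin σ)) : Fin k → Option (Fin σ) :=
  fun i => w i.succ

lemma restrict_context (σ k : ℕ) (s : List (Fin σ)) :
    restrict σ k (context σ (k + 1) s) = context σ k s :=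
  funext fun i => (context_succ σ k s i).symm

lemma card_fiber (σ k : ℕ) (S : Finset (List (Fin σ))) (w : Fin k → Option (Fin σ))
    (P : List (Fin σ) → Prop) [DecidablePred P] :
    (S.filter fun s => context σ k s = w ∧ P s).card =
    ∑ w' ∈ Finset.univ.filter
        (fun w' : Fin (k + 1) → Option (Fin σ) => restrict σ k w' = w),
      (S.filter fun s => context σ (k + 1) s = w' ∧ P s).card := by
  classical
  rw [Finset.card_eq_sum_card_fiberwise (f := fun s => context σ (k + 1) s)
    (t := Finset.univ.filter fun w' => restrict σ k w' = w)
    (by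
      intro s hs
      rw [Finset.mem_coe, Finset.mem_filter] at hs
      rw [Finset.mem_coe, Finset.mem_filter]
      exact ⟨Finset.mem_univ _, by rw [restrict_context]; exact hs.2.1⟩)]
  apply Finset.sum_congr rfl
  intro w' hw'
  rw [Finset.mem_filter] at hw'
  rw [Finset.filter_filter]
  congr 1
  apply Finset.filter_congr
  intro s _
  constructor
  · rintro ⟨⟨_, hP⟩, hc⟩; exact ⟨hc, hP⟩
  · rintro ⟨hc, hP⟩
    refine ⟨⟨?_, hP⟩, hc⟩
    rw [← hw'.2, ← hc, restrict_context]

/-- For every trie `S` and every `k ≥ 0`, `H_{k+1}(S) ≤ H_k(S)`. -/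
theorem stmt6 (σ : ℕ) (S : Finset (List (Fin σ)))
    (hroot : ([] : List (Fin σ)) ∈ S)
    (hpc : ∀ (s : List (Fin σ)) (c : Fin σ), s ++ [c] ∈ S → s ∈ S) (k : ℕ) :
    trieHk σ S (k + 1) ≤ trieHk σ S k := by
  classical
  unfold trieHk
  apply mul_le_mul_of_nonneg_left _ (by positivity)
  -- regroup the (k+1)-contexts by their restriction
  rw [← Finset.sum_fiberwise Finset.univ (restrict σ k)
    (fun w' : Fin (k + 1) → Option (Fin σ) => ∑ c : Fin σ,
      (((S.filter fun s => context σ (k + 1) s = w' ∧ s ++ [c] ∈ S).card : ℝ) *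
          Real.logb 2 (((S.filter fun s => context σ (k + 1) s = w').card : ℝ) /
            ((S.filter fun s => context σ (k + 1) s = w' ∧ s ++ [c] ∈ S).card : ℝ)) +
        (((S.filter fun s => context σ (k + 1) s = w').card : ℝ) -
            ((S.filter fun s => context σ (k + 1) s = w' ∧ s ++ [c] ∈ S).card : ℝ)) *
          Real.logb 2 (((S.filter fun s => context σ (k + 1) s = w').card : ℝ) /
            (((S.filter fun s => context σ (k + 1) s = w').card : ℝ) -
              ((S.filter fun s => context σ (k + 1) s = w' ∧ s ++ [c] ∈ S).card : ℝ)))))]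
  apply Finset.sum_le_sum
  intro w _
  rw [Finset.sum_comm]
  apply Finset.sum_le_sum
  intro c _
  have key := ff_sum (ι := Fin (k + 1) → Option (Fin σ))
    (Finset.univ.filter fun w' => restrict σ k w' = w)
    (fun w' => ((S.filter fun s => context σ (k + 1) s = w' ∧ s ++ [c] ∈ S).card : ℝ))
    (fun w' => ((S.filter fun s => context σ (k + 1) s = w').card : ℝ))
    (fun w' _ => by positivity)
    (fun w' _ => Nat.cast_le.mpr (Finset.card_le_card (fun x hx => by
      rw [Finset.mem_filter] at hx ⊢
      exact ⟨hx.1, hx.2.1⟩)))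
  have e1 : ∑ w' ∈ Finset.univ.filter (fun w' => restrict σ k w' = w),
      ((S.filter fun s => context σ (k + 1) s = w' ∧ s ++ [c] ∈ S).card : ℝ) =
      ((S.filter fun s => context σ k s = w ∧ s ++ [c] ∈ S).card : ℝ) := by
    rw [card_fiber σ k S w (fun s => s ++ [c] ∈ S)]
    push_cast
    rfl
  have e2 : ∑ w' ∈ Finset.univ.filter (fun w' => restrict σ k w' = w),
      ((S.filter fun s => context σ (k + 1) s = w').card : ℝ) =
      ((S.filter fun s => context σ k s = w).card : ℝ) := by
    have h1 : (S.filter fun s => context σ k s = w) =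
        (S.filter fun s => context σ k s = w ∧ True) := by simp
    have h2 : ∀ w', (S.filter fun s => context σ (k + 1) s = w') =
        (S.filter fun s => context σ (k + 1) s = w' ∧ True) := by simp
    simp only [h2, h1]
    rw [card_fiber σ k S w (fun _ => True)]
    push_cast
    rfl
  rw [e1, e2] at key
  exact key
end

section
/- Let n ≥ 1 and let n_1, …, n_σ be nonnegative integers with n_1 + … + n_σ = n − 1. If n_i ≤ n/2 for every i ∈ [σ], then ∑_{i=1}^{σ} log₂ C(n, n_i) − log₂ n ≥ n − 1 − log₂ n; that is, the worst-case entropy H^wc of tries with this symbol distribution satisfies H^wc ≥ n − 1 − log₂ n. -/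
lemma two_pow_le_choose : ∀ (r n : ℕ), 2 * r ≤ n → 2 ^ r ≤ n.choose r := by
  intro r
  induction r with
  | zero => intro n _; simp
  | succ r ih =>
    intro n hn
    obtain ⟨m, rfl⟩ : ∃ m, n = m + 1 := ⟨n - 1, by omega⟩
    have h1 : 2 * r ≤ m := by omega
    have hm : Nat.choose m r ≤ Nat.choose m (r + 1) := by
      rcases eq_or_lt_of_le (show 2 * r + 1 ≤ m by omega) with h | h
      · have he : Nat.choose m (r + 1) = Nat.choose m r := by
          rw [← Nat.choose_symm (show r + 1 ≤ m by omega)]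
          congr 1; omega
        exact he.ge
      · exact Nat.choose_le_succ_of_lt_half_left (by omega)
    calc 2 ^ (r + 1) = 2 ^ r + 2 ^ r := by ring
      _ ≤ Nat.choose m r + Nat.choose m (r + 1) :=
          Nat.add_le_add (ih m h1) ((ih m h1).trans hm)
      _ = Nat.choose (m + 1) (r + 1) := (Nat.succ_sub_one m ▸ Nat.choose_succ_succ m r).symm

/-- If `n_i ≤ n/2` for every `i`, the worst-case trie entropy
`H^wc = ∑ᵢ log₂ C(n, nᵢ) − log₂ n` satisfies `H^wc ≥ n − 1 − log₂ n`. -/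
theorem stmt7 (σ n : ℕ) (hn : 1 ≤ n) (nd : Fin σ → ℕ)
    (hsum : ∑ i, nd i = n - 1) (hhalf : ∀ i, (nd i : ℝ) ≤ (n : ℝ) / 2) :
    (n : ℝ) - 1 - Real.logb 2 n ≤
      (∑ i, Real.logb 2 (Nat.choose n (nd i))) - Real.logb 2 n := by
  have key : ∀ i, (nd i : ℝ) ≤ Real.logb 2 (Nat.choose n (nd i)) := by
    intro i
    have h2 : 2 * nd i ≤ n := by
      have := hhalf i
      have : (2 * nd i : ℝ) ≤ n := by linarith
      exact_mod_cast this
    have hc : (2 : ℝ) ^ (nd i) ≤ (Nat.choose n (nd i) : ℝ) := by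
      exact_mod_cast two_pow_le_choose (nd i) n h2
    calc (nd i : ℝ) = Real.logb 2 ((2 : ℝ) ^ (nd i)) := by
          rw [Real.logb_pow]; simp
      _ ≤ Real.logb 2 (Nat.choose n (nd i)) :=
          Real.logb_le_logb_of_le (by norm_num) (by positivity) hc
  have hsum' : ((n : ℝ) - 1) ≤ ∑ i, Real.logb 2 (Nat.choose n (nd i)) := by
    have : ((n - 1 : ℕ) : ℝ) = (n : ℝ) - 1 := by
      push_cast [Nat.cast_sub hn]; ring
    calc (n : ℝ) - 1 = ∑ i, (nd i : ℝ) := by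
          rw [← Nat.cast_sum, hsum, this]
      _ ≤ _ := Finset.sum_le_sum fun i _ => key i
  linarith
end

section
/- Let n ≥ 1 and let n_1, …, n_σ be nonnegative integers with n_1 + … + n_σ = n − 1. If n_j > n/2 for some j ∈ [σ], then such j is unique, and the worst-case entropy satisfies H^wc = ∑_{i∈[σ]\{j}} log₂ C(n, n_i) + log₂ C(n, n − n_j) − log₂ n ≥ n* − log₂ n, where n* = ∑_{i∈[σ]\{j}} n_i + (n − n_j). -/
theorem aux_two_pow_le_choose : ∀ (k n : ℕ), 2 * k ≤ n → 2 ^ k ≤ n.choose k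
  | 0, n, _ => by simp
  | k+1, n, h => by
    obtain ⟨m, rfl⟩ : ∃ m, n = m + 2 := ⟨n - 2, by omega⟩
    have ih := aux_two_pow_le_choose k m (by omega)
    have h1 : m.choose k ≤ (m+1).choose k := Nat.choose_le_choose k (by omega)
    have h2 : m.choose k ≤ (m+1).choose (k+1) := by
      rw [Nat.choose_succ_succ]; exact Nat.le_add_right _ _
    have h3 : (m+2).choose (k+1) = (m+1).choose k + (m+1).choose (k+1) :=
      Nat.choose_succ_succ _ _
    have : 2 ^ (k+1) = 2 ^ k + 2 ^ k := by ring
    omega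

theorem aux_le_logb_choose {k n : ℕ} (h : 2 * k ≤ n) :
    (k : ℝ) ≤ Real.logb 2 (Nat.choose n k) := by
  have h1 : (2 : ℝ) ^ k ≤ (Nat.choose n k : ℝ) := by
    exact_mod_cast aux_two_pow_le_choose k n h
  calc (k : ℝ) = Real.logb 2 ((2:ℝ) ^ k) := by
        rw [Real.logb_pow, Real.logb_self_eq_one (by norm_num)]; ring
    _ ≤ Real.logb 2 (Nat.choose n k) :=
        Real.logb_le_logb_of_le one_lt_two (by positivity) h1

/-- If some `n_j > n/2` then such `j` is unique, the worst-case entropy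
`H^wc = ∑ᵢ log₂ C(n, nᵢ) − log₂ n` can be rewritten replacing `C(n, n_j)` by
`C(n, n − n_j)`, and it satisfies `H^wc ≥ n* − log₂ n` where
`n* = ∑_{i ≠ j} nᵢ + (n − n_j)`. -/
theorem stmt8 (σ n : ℕ) (hn : 1 ≤ n) (nd : Fin σ → ℕ)
    (hsum : ∑ i, nd i = n - 1) (j : Fin σ) (hj : (n : ℝ) / 2 < (nd j : ℝ)) :
    (∀ j' : Fin σ, (n : ℝ) / 2 < (nd j' : ℝ) → j' = j) ∧
    ((∑ i, Real.logb 2 (Nat.choose n (nd i))) - Real.logb 2 n =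
      (∑ i ∈ Finset.univ.erase j, Real.logb 2 (Nat.choose n (nd i))) +
        Real.logb 2 (Nat.choose n (n - nd j)) - Real.logb 2 n) ∧
    ((∑ i ∈ Finset.univ.erase j, (nd i : ℝ)) + ((n : ℝ) - (nd j : ℝ)) -
        Real.logb 2 n ≤
      (∑ i, Real.logb 2 (Nat.choose n (nd i))) - Real.logb 2 n) := by
  have h2j : n < 2 * nd j := by
    have : (n : ℝ) < 2 * (nd j : ℝ) := by linarith
    exact_mod_cast this
  have hbound : ∀ i : Fin σ, i ≠ j → nd i + nd j ≤ n - 1 := by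
    intro i hi
    calc nd i + nd j ≤ ∑ k, nd k := by
          rw [← Finset.sum_erase_add _ _ (Finset.mem_univ j)]
          exact Nat.add_le_add_right
            (Finset.single_le_sum (f := nd) (fun _ _ => Nat.zero_le _)
              (Finset.mem_erase.mpr ⟨hi, Finset.mem_univ i⟩)) _
      _ = n - 1 := hsum
  have hjle : nd j ≤ n - 1 := hsum ▸ Finset.single_le_sum
    (f := nd) (fun _ _ => Nat.zero_le _) (Finset.mem_univ j)
  -- Part 1: uniqueness
  have part1 : ∀ j' : Fin σ, (n : ℝ) / 2 < (nd j' : ℝ) → j' = j := by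
    intro j' hj'
    by_contra hne
    have h2j' : n < 2 * nd j' := by
      have : (n : ℝ) < 2 * (nd j' : ℝ) := by linarith
      exact_mod_cast this
    have := hbound j' hne
    omega
  -- symmetric binomial
  have hsymm : Nat.choose n (n - nd j) = Nat.choose n (nd j) :=
    Nat.choose_symm (by omega)
  have hsplit : (∑ i, Real.logb 2 (Nat.choose n (nd i))) =
      (∑ i ∈ Finset.univ.erase j, Real.logb 2 (Nat.choose n (nd i))) +
        Real.logb 2 (Nat.choose n (nd j)) :=
    (Finset.sum_erase_add _ _ (Finset.mem_univ j)).symm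
  refine ⟨part1, by rw [hsymm, hsplit], ?_⟩
  rw [hsplit, ← hsymm]
  have hterm : ∀ i ∈ Finset.univ.erase j,
      (nd i : ℝ) ≤ Real.logb 2 (Nat.choose n (nd i)) := by
    intro i hi
    have hi' := hbound i (Finset.mem_erase.mp hi).1
    exact aux_le_logb_choose (by omega)
  have h1 : (∑ i ∈ Finset.univ.erase j, (nd i : ℝ)) ≤
      ∑ i ∈ Finset.univ.erase j, Real.logb 2 (Nat.choose n (nd i)) :=
    Finset.sum_le_sum hterm
  have h2 : ((n : ℝ) - (nd j : ℝ)) ≤ Real.logb 2 (Nat.choose n (n - nd j)) := by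
    have hcast : ((n - nd j : ℕ) : ℝ) = (n : ℝ) - (nd j : ℝ) := by
      have : nd j ≤ n := by omega
      push_cast [this]; ring
    rw [← hcast]
    exact aux_le_logb_choose (by omega)
  linarith
end

section
/- For every h ≥ 1 let S_h be the complete balanced binary trie of height h over the alphabet {a, b}, i.e., the set of all strings over {a, b} of length at most h, with n = 2^{h+1} − 1 nodes. Then the number of XBWT runs of S_h is r = (n + 1)/2. -/
/-- The co-lexicographic order on strings: compare the reversed strings in the
(lexicographic) order on lists, the empty string being smallest. -/
def colexLe (σ : ℕ) (s t : List (Fin σ)) : Prop := s.reverse ≤ t.reverse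

instance (σ : ℕ) : DecidableRel (colexLe σ) :=
  fun s t => inferInstanceAs (Decidable (s.reverse ≤ t.reverse))

instance (σ : ℕ) : IsTrans (List (Fin σ)) (colexLe σ) :=
  ⟨fun _ _ _ h1 h2 => le_trans h1 h2⟩

instance (σ : ℕ) : IsAntisymm (List (Fin σ)) (colexLe σ) :=
  ⟨fun _ _ h1 h2 => List.reverse_injective (le_antisymm h1 h2)⟩

instance (σ : ℕ) : IsTotal (List (Fin σ)) (colexLe σ) :=
  ⟨fun a b => le_total a.reverse b.reverse⟩

/-- The number `r` of XBWT runs of a trie `S`: with `u_1, …, u_n` the nodes of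
`S` in co-lexicographic order (0-indexed below), `r = ∑_{c} r_c` where `r_c`
counts the indices `i` such that `u_i·c ∈ S` and either `i = n` or
`u_{i+1}·c ∉ S`. -/
def xbwtRuns (σ : ℕ) (S : Finset (List (Fin σ))) : ℕ :=
  ∑ c : Fin σ,
    ((Finset.range (S.sort (colexLe σ)).length).filter fun i =>
      (S.sort (colexLe σ)).getD i [] ++ [c] ∈ S ∧
      (i = (S.sort (colexLe σ)).length - 1 ∨
        (S.sort (colexLe σ)).getD (i + 1) [] ++ [c] ∉ S)).card

namespace XbwtAux10

variable {α : Type*} {β : Type*}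

/-- count of "run ends" for predicate `P` in a list, where `q` tells whether an
(imaginary) element satisfying `P` follows the list. -/
def re (P : α → Bool) : List α → Bool → ℕ
  | [], _ => 0
  | [a], q => if P a && !q then 1 else 0
  | a :: b :: t, q => (if P a && !(P b) then 1 else 0) + re P (b :: t) q

lemma re_append (P : α → Bool) :
    ∀ (l : List α) (b : α) (t : List α) (q : Bool),
      re P (l ++ b :: t) q = re P l (P b) + re P (b :: t) q := by
  intro l
  induction l with
  | nil => intro b t q; simp [re]
  | cons a l ih =>
    intro b t q
    cases l with
    | nil => simp [re]
    | cons c l' =>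
      have := ih b t q
      simp only [List.cons_append] at *
      simp [re, this]
      omega

lemma re_map (P : α → Bool) (f : β → α) :
    ∀ (l : List β) (q : Bool), re P (l.map f) q = re (fun x => P (f x)) l q := by
  intro l
  induction l with
  | nil => intro q; rfl
  | cons a l ih =>
    intro q
    cases l with
    | nil => rfl
    | cons b t =>
      have := ih q
      simp only [List.map_cons] at this ⊢
      simp [re, this]

lemma card_filter_re (P : α → Bool) (d : α) :
    ∀ L : List α, L ≠ [] →
      ((Finset.range L.length).filter fun i =>
        (P (L.getD i d) = true) ∧
        (i = L.length - 1 ∨ ¬ (P (L.getD (i+1) d) = true))).card = re P L false := by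
  intro L
  induction L with
  | nil => intro hc; exact absurd rfl hc
  | cons a l ih =>
    intro _
    cases l with
    | nil =>
      simp only [List.length_singleton, Finset.range_one]
      rw [Finset.filter_singleton]
      cases hPa : P a <;> simp [re, hPa]
    | cons b t =>
      rw [Finset.card_filter,
        show (a :: b :: t).length = (b :: t).length + 1 from rfl,
        Finset.sum_range_succ']
      have hshift : ∀ i ∈ Finset.range (b :: t).length,
          ((if (P ((a :: b :: t).getD (i+1) d) = true) ∧
            ((i+1) = (b :: t).length + 1 - 1 ∨
              ¬ (P ((a :: b :: t).getD (i+1+1) d) = true)) then 1 else 0) : ℕ) =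
          (if (P ((b :: t).getD i d) = true) ∧
            (i = (b :: t).length - 1 ∨ ¬ (P ((b :: t).getD (i+1) d) = true))
            then 1 else 0) := by
        intro i _
        have h1 : (a :: b :: t).getD (i+1) d = (b :: t).getD i d := rfl
        have h2 : (a :: b :: t).getD (i+1+1) d = (b :: t).getD (i+1) d := rfl
        have h3 : ((i+1) = (b :: t).length + 1 - 1) ↔ (i = (b :: t).length - 1) := by
          simp only [List.length_cons]; omega
        simp only [h1, h2, h3]
      rw [Finset.sum_congr rfl hshift, ← Finset.card_filter, ih (by simp)]
      have h0 : ((if (P ((a :: b :: t).getD 0 d) = true) ∧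
          ((0:ℕ) = (b :: t).length + 1 - 1 ∨ ¬ (P ((a :: b :: t).getD (0+1) d) = true))
          then 1 else 0) : ℕ) = if P a && !(P b) then 1 else 0 := by
        have hne : ¬ ((0:ℕ) = (b :: t).length + 1 - 1) := by simp
        simp only [List.getD_cons_zero, List.getD_cons_succ, hne, false_or]
        cases hPa : P a <;> cases hPb : P b <;> simp
      rw [h0, show re P (a :: b :: t) false =
        (if P a && !(P b) then 1 else 0) + re P (b :: t) false by simp [re]]
      omega

lemma re_const_of_all (P : α → Bool) :
    ∀ (l : List α), l ≠ [] → (∀ x ∈ l, P x = true) → ∀ q : Bool,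
      re P l q = if q then 0 else 1 := by
  intro l
  induction l with
  | nil => intro hc; exact absurd rfl hc
  | cons a l ih =>
    intro _ hall q
    cases l with
    | nil =>
      have ha : P a = true := hall a (by simp)
      cases q <;> simp [re, ha]
    | cons b t =>
      have hb : P b = true := hall b (by simp)
      have ha : P a = true := hall a (by simp)
      have hrec := ih (by simp) (fun x hx => hall x (by simp [hx])) q
      simp [re, ha, hb, hrec]

/-- preorder (DFS) list of all binary strings of length ≤ h, in lex order. -/
def T : ℕ → List (List (Fin 2))
  | 0 => [[]]
  | h+1 => [] :: ((T h).map (List.cons 0) ++ (T h).map (List.cons 1))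

lemma T_ne_nil (h : ℕ) : T h ≠ [] := by cases h <;> simp [T]

lemma head_T (h : ℕ) : ∃ t, T h = [] :: t := by
  cases h <;> exact ⟨_, rfl⟩

lemma mem_T (h : ℕ) : ∀ l : List (Fin 2), l ∈ T h ↔ l.length ≤ h := by
  induction h with
  | zero =>
    intro l
    simp [T, Nat.le_zero, List.length_eq_zero_iff]
  | succ h ih =>
    intro l
    cases l with
    | nil => simp [T]
    | cons c s =>
      simp only [T, List.mem_cons, List.mem_append, List.mem_map, List.length_cons]
      constructor
      · rintro (h1 | ⟨x, hx, hx2⟩ | ⟨x, hx, hx2⟩)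
        · exact absurd h1 (by simp)
        · obtain ⟨rfl, rfl⟩ : (0 : Fin 2) = c ∧ x = s := by
            injection hx2 with h1 h2; exact ⟨h1, h2⟩
          have := (ih x).1 hx
          omega
        · obtain ⟨rfl, rfl⟩ : (1 : Fin 2) = c ∧ x = s := by
            injection hx2 with h1 h2; exact ⟨h1, h2⟩
          have := (ih x).1 hx
          omega
      · intro hl
        have hc : c = 0 ∨ c = 1 := by revert c; decide
        have hs : s ∈ T h := (ih s).2 (by omega)
        rcases hc with rfl | rfl
        · exact Or.inr (Or.inl ⟨s, hs, rfl⟩)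
        · exact Or.inr (Or.inr ⟨s, hs, rfl⟩)

lemma nodup_T (h : ℕ) : (T h).Nodup := by
  induction h with
  | zero => simp [T]
  | succ h ih =>
    simp only [T, List.nodup_cons, List.nodup_append]
    refine ⟨by simp, ?_, ?_, ?_⟩
    · exact List.Nodup.map (fun a b hab => by injection hab) ih
    · exact List.Nodup.map (fun a b hab => by injection hab) ih
    · intro a ha b hb
      simp only [List.mem_map] at ha hb
      obtain ⟨x, -, rfl⟩ := ha
      obtain ⟨y, -, hy⟩ := hb
      simp [← hy]

lemma length_T (h : ℕ) : (T h).length = 2 ^ (h+1) - 1 := by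
  induction h with
  | zero => simp [T]
  | succ h ih =>
    have h1 : 1 ≤ 2 ^ (h+1) := Nat.one_le_two_pow
    have h2 : (2:ℕ) ^ (h+1+1) = 2 ^ (h+1) * 2 := pow_succ 2 (h+1)
    simp [T, ih]
    omega

lemma sorted_T (h : ℕ) : (T h).Pairwise (· ≤ ·) := by
  induction h with
  | zero => simp [T]
  | succ h ih =>
    simp only [T, List.pairwise_cons]
    constructor
    · intro b _; cases b with | nil => exact le_rfl | cons x l => exact le_of_lt List.Lex.nil
    · rw [List.pairwise_append]
      refine ⟨?_, ?_, ?_⟩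
      · exact (List.pairwise_map).2 (ih.imp (fun hab => List.cons_le_cons _ hab))
      · exact (List.pairwise_map).2 (ih.imp (fun hab => List.cons_le_cons _ hab))
      · intro a ha b hb
        simp only [List.mem_map] at ha hb
        obtain ⟨x, -, rfl⟩ := ha
        obtain ⟨y, -, rfl⟩ := hb
        exact le_of_lt (List.Lex.rel (by decide))

/-- the predicate: the length of the string is at most h-1 (so a child exists). -/
def Q (h : ℕ) (x : List (Fin 2)) : Bool := decide (x.length + 1 ≤ h)

lemma Q_cons (h : ℕ) (c : Fin 2) (x : List (Fin 2)) : Q (h+1) (c :: x) = Q h x := by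
  simp [Q]

lemma re_T : ∀ (k : ℕ) (q : Bool), re (Q (k+1)) (T (k+1)) q = 2 ^ k := by
  intro k
  induction k with
  | zero => intro q; cases q <;> decide
  | succ k ih =>
    intro q
    obtain ⟨t, ht⟩ := head_T (k+1)
    have hA : (T (k+1)).map (List.cons (0 : Fin 2))
        = [(0 : Fin 2)] :: (t.map (List.cons 0)) := by rw [ht]; rfl
    have hB : (T (k+1)).map (List.cons (1 : Fin 2))
        = [(1 : Fin 2)] :: (t.map (List.cons 1)) := by rw [ht]; rfl
    have hreA : ∀ q' : Bool,
        re (Q (k+2)) ((T (k+1)).map (List.cons 0)) q' = 2 ^ k := by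
      intro q'
      rw [re_map]
      have he : (fun x => Q (k+2) ((0 : Fin 2) :: x)) = Q (k+1) :=
        funext (Q_cons (k+1) 0)
      rw [he, ih]
    have hreB : ∀ q' : Bool,
        re (Q (k+2)) ((T (k+1)).map (List.cons 1)) q' = 2 ^ k := by
      intro q'
      rw [re_map]
      have he : (fun x => Q (k+2) ((1 : Fin 2) :: x)) = Q (k+1) :=
        funext (Q_cons (k+1) 1)
      rw [he, ih]
    have key : T (k+2) =
        [] :: ([(0 : Fin 2)] :: (t.map (List.cons 0))
          ++ (T (k+1)).map (List.cons 1)) := by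
      rw [show T (k+2) = [] :: ((T (k+1)).map (List.cons 0)
        ++ (T (k+1)).map (List.cons 1)) from rfl, hA]
    rw [key]
    rw [show re (Q (k+2)) ([] :: ([(0 : Fin 2)] :: (t.map (List.cons 0))
          ++ (T (k+1)).map (List.cons 1))) q
        = (if Q (k+2) [] && !(Q (k+2) [(0 : Fin 2)]) then 1 else 0)
          + re (Q (k+2)) ([(0 : Fin 2)] :: (t.map (List.cons 0))
            ++ (T (k+1)).map (List.cons 1)) q by
      rw [List.cons_append]; simp [re]]
    rw [show ([(0 : Fin 2)] :: (t.map (List.cons 0))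
        ++ (T (k+1)).map (List.cons 1))
        = ((T (k+1)).map (List.cons 0)) ++ (T (k+1)).map (List.cons 1) by
      rw [hA]]
    rw [hB, re_append, ← hB, hreA, hreB]
    have hq0 : Q (k+2) [(0 : Fin 2)] = true := by simp [Q]
    have hpow : (2:ℕ) ^ (k+1) = 2 ^ k + 2 ^ k := by
      rw [pow_succ', Nat.two_mul]
    rw [hq0, hpow]
    simp

end XbwtAux10

open XbwtAux10 in
/-- For the complete balanced binary trie `S_h` of height `h ≥ 1` (the set of
all binary strings of length at most `h`), which has `n = 2^{h+1} − 1` nodes,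
the number of XBWT runs is `r = (n + 1)/2`. -/
theorem stmt10 (h : ℕ) (hh : 1 ≤ h) (S : Finset (List (Fin 2)))
    (hS : ∀ l : List (Fin 2), l ∈ S ↔ l.length ≤ h) :
    S.card = 2 ^ (h + 1) - 1 ∧ xbwtRuns 2 S = (S.card + 1) / 2 := by
  obtain ⟨k, rfl⟩ : ∃ k, h = k + 1 := ⟨h - 1, by omega⟩
  set h := k + 1 with hdef
  set L : List (List (Fin 2)) := (T h).map List.reverse with hL
  have hLnodup : L.Nodup := List.Nodup.map List.reverse_injective (nodup_T h)
  have hLsorted : L.Pairwise (colexLe 2) := by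
    rw [hL, List.pairwise_map]
    refine (sorted_T h).imp ?_
    intro a b hab
    simpa [colexLe] using hab
  have hLfin : L.toFinset = S := by
    ext x
    simp only [hL, List.mem_toFinset, List.mem_map, hS]
    constructor
    · rintro ⟨y, hy, rfl⟩
      simpa using (mem_T h y).1 hy
    · intro hx
      exact ⟨x.reverse, (mem_T h _).2 (by simpa using hx), by simp⟩
  have hsort : S.sort (colexLe 2) = L := by
    refine List.Perm.eq_of_pairwise' (Finset.pairwise_sort _ _) hLsorted ?_
    exact List.perm_of_nodup_nodup_toFinset_eq (Finset.sort_nodup _ _) hLnodup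
      (by rw [hLfin, Finset.sort_toFinset])
  have hcard : S.card = 2 ^ (h + 1) - 1 := by
    rw [← Finset.length_sort (colexLe 2), hsort, hL, List.length_map, length_T]
  refine ⟨hcard, ?_⟩
  have hLne : L ≠ [] := by
    rw [hL]
    simpa using T_ne_nil h
  have hruns : xbwtRuns 2 S = 2 ^ h := by
    rw [xbwtRuns]
    have hc : ∀ c : Fin 2,
        ((Finset.range (S.sort (colexLe 2)).length).filter fun i =>
          (S.sort (colexLe 2)).getD i [] ++ [c] ∈ S ∧
          (i = (S.sort (colexLe 2)).length - 1 ∨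
            (S.sort (colexLe 2)).getD (i + 1) [] ++ [c] ∉ S)).card = 2 ^ k := by
      intro c
      rw [hsort]
      have hiff : ∀ i ∈ Finset.range L.length,
          ((L.getD i [] ++ [c] ∈ S ∧
            (i = L.length - 1 ∨ L.getD (i + 1) [] ++ [c] ∉ S)) ↔
          ((Q h (L.getD i []) = true) ∧
            (i = L.length - 1 ∨ ¬ (Q h (L.getD (i+1) []) = true)))) := by
        intro i _
        have hmem : ∀ x : List (Fin 2), (x ++ [c] ∈ S) ↔ (Q h x = true) := by
          intro x
          rw [hS]
          simp [Q]
        rw [hmem, hmem]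
      rw [Finset.filter_congr hiff, card_filter_re (Q h) [] L hLne, hL, re_map]
      have he : (fun x : List (Fin 2) => Q h x.reverse) = Q h := by
        funext x; simp [Q]
      rw [he]
      exact re_T k false
    rw [Finset.sum_congr rfl (fun c _ => hc c)]
    simp only [Finset.sum_const, Finset.card_univ, Fintype.card_fin, smul_eq_mul]
    rw [hdef, pow_succ]
    ring
  rw [hruns, hcard]
  have h1 : 1 ≤ 2 ^ h := Nat.one_le_two_pow
  have h2 : (2:ℕ) ^ (h + 1) = 2 ^ h * 2 := pow_succ 2 h
  omega
end

section
/- For every h ≥ 1 let S_h be the complete balanced binary trie of height h over the alphabet {a, b}, i.e., the set of all strings over {a, b} of length at most h, with n = 2^{h+1} − 1 nodes. In the co-lexicographic ordering u_1, …, u_n of the nodes of S_h, every maximal run of consecutive leaves (nodes u_i with no extension u_i·c in S_h) consists of exactly two nodes, and the number of such maximal leaf runs is (n + 1)/4. -/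
/-- `leafAt S i` holds when the `i`-th node (0-indexed) of `S` in
co-lexicographic order is a leaf, i.e. has no extension by one symbol in `S`. -/
def leafAt (σ : ℕ) (S : Finset (List (Fin σ))) (i : ℕ) : Prop :=
  ∀ c : Fin σ, (S.sort (colexLe σ)).getD i [] ++ [c] ∉ S

instance (σ : ℕ) (S : Finset (List (Fin σ))) : DecidablePred (leafAt σ S) :=
  fun i => inferInstanceAs
    (Decidable (∀ c : Fin σ, (S.sort (colexLe σ)).getD i [] ++ [c] ∉ S))



def lexList : ℕ → List (List (Fin 2))
  | 0 => [([] : List (Fin 2))]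
  | h+1 => [] :: ((lexList h).map (List.cons 0) ++ (lexList h).map (List.cons 1))

def pat : ℕ → List Bool
  | 0 => [true]
  | h+1 => false :: (pat h ++ pat h)

def runStarts : Bool → List Bool → ℕ
  | _, [] => 0
  | p, b :: t => (if b && !p then 1 else 0) + runStarts b t

lemma lexList_length (h : ℕ) : (lexList h).length = 2^(h+1) - 1 := by
  induction h with
  | zero => rfl
  | succ h ih =>
    have : (1:ℕ) ≤ 2^(h+1) := Nat.one_le_two_pow
    simp [lexList, ih, pow_succ]; omega

lemma mem_lexList (h : ℕ) (x : List (Fin 2)) : x ∈ lexList h ↔ x.length ≤ h := by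
  induction h generalizing x with
  | zero => simp [lexList, List.length_eq_zero_iff]
  | succ h ih =>
    cases x with
    | nil => simp [lexList]
    | cons c t =>
      simp only [lexList, List.mem_cons, List.mem_append, List.mem_map]
      constructor
      · rintro (hc | ⟨a, ha, heq⟩ | ⟨a, ha, heq⟩)
        · exact absurd hc (by simp)
        · injection heq with h1 h2; subst h1; subst h2; simpa using (ih a).1 ha
        · injection heq with h1 h2; subst h1; subst h2; simpa using (ih a).1 ha
      · intro hl
        have ht : t ∈ lexList h := (ih t).2 (by simpa using hl)
        fin_cases c
        · exact Or.inr (Or.inl ⟨t, ht, rfl⟩)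
        · exact Or.inr (Or.inr ⟨t, ht, rfl⟩)

lemma nodup_lexList (h : ℕ) : (lexList h).Nodup := by
  induction h with
  | zero => simp [lexList]
  | succ h ih =>
    simp only [lexList, List.nodup_cons, List.nodup_append]
    refine ⟨by simp, ih.map (fun a b hab => by simpa using hab),
      ih.map (fun a b hab => by simpa using hab), ?_⟩
    intro x hx0 y hx1
    obtain ⟨a, _, rfl⟩ := List.mem_map.1 hx0
    obtain ⟨b, _, hb⟩ := List.mem_map.1 hx1
    subst hb; simp

lemma sorted_lexList (h : ℕ) : List.Pairwise (· ≤ ·) (lexList h) := by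
  induction h with
  | zero => simp [lexList]
  | succ h ih =>
    rw [lexList, List.pairwise_cons]
    constructor
    · intro x _; cases x with
      | nil => exact le_rfl
      | cons c t => exact le_of_lt List.Lex.nil
    · rw [List.pairwise_append]
      refine ⟨List.pairwise_map.2 (ih.imp fun hab => List.cons_le_cons 0 hab),
        List.pairwise_map.2 (ih.imp fun hab => List.cons_le_cons 1 hab), ?_⟩
      rintro x hx y hy
      obtain ⟨a, _, rfl⟩ := List.mem_map.1 hx
      obtain ⟨b, _, rfl⟩ := List.mem_map.1 hy
      exact le_of_lt (List.Lex.rel (by decide))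

lemma pat_length (h : ℕ) : (pat h).length = 2^(h+1) - 1 := by
  induction h with
  | zero => rfl
  | succ h ih =>
    have : (1:ℕ) ≤ 2^(h+1) := Nat.one_le_two_pow
    simp [pat, ih, pow_succ]; omega

lemma getD_map' {α β : Type*} (L : List α) (f : α → β) (d : α) (i : ℕ) :
    (L.map f).getD i (f d) = f (L.getD i d) := by
  simp only [List.getD_eq_getElem?_getD, List.getElem?_map]
  cases L[i]? <;> simp

lemma getD_true_lt (L : List Bool) (i : ℕ) (hL : L.getD i false = true) : i < L.length := by
  by_contra h'
  rw [List.getD_eq_default _ _ (le_of_not_gt h')] at hL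
  simp at hL

lemma getLastD_append {α : Type*} (X Y : List α) (d : α) :
    (X ++ Y).getLastD d = Y.getLastD (X.getLastD d) := by
  induction X generalizing d with
  | nil => rfl
  | cons x X ih => simp only [List.cons_append, List.getLastD_cons, ih]

lemma pat_getLastD (h : ℕ) (d : Bool) : (pat h).getLastD d = true := by
  induction h generalizing d with
  | zero => rfl
  | succ h ih => rw [pat, List.getLastD_cons, getLastD_append, ih]

lemma runStarts_append (A B : List Bool) (p : Bool) :
    runStarts p (A ++ B) = runStarts p A + runStarts (A.getLastD p) B := by
  induction A generalizing p with
  | nil => simp [runStarts]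
  | cons a A ih =>
    simp only [List.cons_append, runStarts, List.getLastD_cons]
    rw [ih]; omega

lemma runStarts_false_cons (t : List Bool) (p : Bool) :
    runStarts p (false :: t) = runStarts false t := by
  simp [runStarts]

lemma pat_getD_zero (h : ℕ) (hh : 1 ≤ h) : (pat h).getD 0 false = false := by
  obtain ⟨k, rfl⟩ := Nat.exists_eq_add_of_le hh
  rw [show 1+k = k+1 from by omega]
  simp [pat]

lemma runStarts_pat (h : ℕ) (hh : 1 ≤ h) : runStarts false (pat h) = 2^(h-1) := by
  induction h, hh using Nat.le_induction with
  | base => rfl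
  | succ h hh ih =>
    obtain ⟨k, rfl⟩ := Nat.exists_eq_add_of_le hh
    rw [pat, runStarts_false_cons, runStarts_append, pat_getLastD]
    have h2 : runStarts true (pat (1+k)) = runStarts false (pat (1+k)) := by
      rw [show 1+k = k+1 by omega, pat, runStarts_false_cons, runStarts_false_cons]
    rw [h2, ih]
    have : 1 + k + 1 - 1 = (1 + k - 1) + 1 := by omega
    rw [this, pow_succ]; omega

lemma count_runStarts (L : List Bool) (p : Bool) :
    ((Finset.range L.length).filter
      (fun i => L.getD i false = true ∧ (if i = 0 then p else L.getD (i-1) false) = false)).card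
      = runStarts p L := by
  induction L generalizing p with
  | nil => simp [runStarts]
  | cons b t ih =>
    rw [Finset.card_filter, List.length_cons, Finset.sum_range_succ']
    have hstep : ∀ i : ℕ,
        (if (b :: t).getD (i+1) false = true ∧
            (if i+1 = 0 then p else (b :: t).getD (i+1-1) false) = false then 1 else 0)
        = (if t.getD i false = true ∧ (if i = 0 then b else t.getD (i-1) false) = false
            then 1 else 0) := by
      intro i
      cases i with
      | zero => simp
      | succ k => simp
    rw [Finset.sum_congr rfl (fun i _ => hstep i), ← Finset.card_filter, ih b]
    have h0 : (if (b :: t).getD 0 false = true ∧ (if (0:ℕ) = 0 then p else (b::t).getD (0-1) false) = false then 1 else 0) = (if b && !p then 1 else 0) := by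
      cases b <;> cases p <;> simp
    rw [h0, runStarts]; omega

lemma getD_dappend (A : List Bool) (k : ℕ) :
    (A ++ A).getD k false = if k < A.length then A.getD k false else A.getD (k - A.length) false := by
  split
  · exact List.getD_append _ _ _ _ (by assumption)
  · exact List.getD_append_right _ _ _ _ (le_of_not_gt (by assumption))

lemma pat_getD_succ (h : ℕ) (i : ℕ) :
    (pat (h+1)).getD (i+1) false = (pat h ++ pat h).getD i false := rfl

lemma pat_getD_zero' (h : ℕ) : (pat (h+1)).getD 0 false = false := rfl

lemma pat1_eq : pat 1 = [false, true, true] := rfl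

lemma patA (h : ℕ) (hh : 1 ≤ h) : ∀ i, (pat h).getD i false = true →
    (pat h).getD (i-1) false = false → (pat h).getD (i+1) false = true := by
  induction h, hh using Nat.le_induction with
  | base =>
    intro i h1 h2
    rw [pat1_eq] at h1 h2 ⊢
    match i with
    | 0 => simp at h1
    | 1 => rfl
    | 2 => simp at h2
    | (n+3) =>
      rw [List.getD_eq_default _ _ (by simp only [List.length_cons, List.length_nil]; omega)] at h1
      simp at h1
  | succ h hh ih =>
    intro i h1 h2
    have hn : 1 ≤ (pat h).length := by rw [pat_length]; have := Nat.one_le_two_pow (n := h+1); omega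
    match i with
    | 0 => rw [pat_getD_zero'] at h1; simp at h1
    | (k+1) =>
      rw [pat_getD_succ, getD_dappend] at h1
      rw [pat_getD_succ, getD_dappend]
      match k with
      | 0 =>
        rw [if_pos (show 0 < (pat h).length from hn), pat_getD_zero h hh] at h1; simp at h1
      | (m+1) =>
        rw [show m+1+1-1 = m+1 from by omega, pat_getD_succ, getD_dappend] at h2
        by_cases hk : m+1 < (pat h).length
        · rw [if_pos hk] at h1
          rw [if_pos (by omega)] at h2
          have h3 := ih (m+1) h1 (by simpa using h2)
          have h4 : m+1+1 < (pat h).length := getD_true_lt _ _ h3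
          rw [if_pos h4]; exact h3
        · rw [if_neg hk] at h1
          have hr : m+1-(pat h).length < (pat h).length := getD_true_lt _ _ h1
          rcases Nat.eq_zero_or_pos (m+1-(pat h).length) with hz | hpos
          · rw [hz, pat_getD_zero h hh] at h1; simp at h1
          · set s := m+1-(pat h).length-1 with hs
            rw [show m+1-(pat h).length = s+1 from by omega] at h1
            rw [if_neg (by omega), show m - (pat h).length = s from by omega] at h2
            have h3 := ih (s+1) h1 (by simpa using h2)
            have h4 : s+1+1 < (pat h).length := getD_true_lt _ _ h3
            rw [if_neg (by omega), show m+1+1-(pat h).length = s+1+1 from by omega]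
            exact h3

lemma patB (h : ℕ) (hh : 1 ≤ h) : ∀ i, (pat h).getD i false = true →
    (pat h).getD (i+1) false = true → (pat h).getD (i+2) false = true → False := by
  induction h, hh using Nat.le_induction with
  | base =>
    intro i h1 h2 h3
    rw [pat1_eq] at h1 h2 h3
    match i with
    | 0 => simp at h1
    | (n+1) =>
      rw [List.getD_eq_default _ _ (by simp only [List.length_cons, List.length_nil]; omega)] at h3
      simp at h3
  | succ h hh ih =>
    intro i h1 h2 h3
    match i with
    | 0 => rw [pat_getD_zero'] at h1; simp at h1
    | (k+1) =>
      rw [pat_getD_succ, getD_dappend] at h1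
      rw [show k+1+1 = (k+1)+1 from rfl, pat_getD_succ, getD_dappend] at h2
      rw [show k+1+2 = (k+2)+1 from by omega, pat_getD_succ, getD_dappend] at h3
      by_cases hc1 : k+2 < (pat h).length
      · rw [if_pos (by omega)] at h1
        rw [if_pos (by omega)] at h2
        rw [if_pos hc1] at h3
        exact ih k h1 h2 h3
      · by_cases hc2 : (pat h).length ≤ k
        · rw [if_neg (by omega)] at h1
          rw [if_neg (by omega)] at h2
          rw [if_neg (by omega)] at h3
          rw [show k+1-(pat h).length = (k-(pat h).length)+1 from by omega] at h2
          rw [show k+2-(pat h).length = (k-(pat h).length)+2 from by omega] at h3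
          exact ih _ h1 h2 h3
        · by_cases hc3 : k+1 < (pat h).length
          · rw [if_neg (by omega), show k+2-(pat h).length = 0 from by omega,
              pat_getD_zero h hh] at h3
            simp at h3
          · rw [if_neg (by omega), show k+1-(pat h).length = 0 from by omega,
              pat_getD_zero h hh] at h2
            simp at h2

lemma pat_eq (h : ℕ) : pat h = (lexList h).map (fun l => decide (l.length = h)) := by
  induction h with
  | zero => rfl
  | succ h ih =>
    rw [pat, lexList, List.map_cons, List.map_append, List.map_map, List.map_map]
    have hc : ∀ c : Fin 2,
        ((fun l : List (Fin 2) => decide (l.length = h+1)) ∘ (List.cons c))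
          = (fun l : List (Fin 2) => decide (l.length = h)) := by
      intro c; funext l; simp
    rw [hc 0, hc 1, ← ih]
    simp

lemma sort_eq (h : ℕ) (S : Finset (List (Fin 2)))
    (hS : ∀ l : List (Fin 2), l ∈ S ↔ l.length ≤ h) :
    S.sort (colexLe 2) = (lexList h).map List.reverse := by
  have hsorted : List.Pairwise (colexLe 2) ((lexList h).map List.reverse) := by
    rw [List.pairwise_map]
    exact (sorted_lexList h).imp (fun hab => by simpa [colexLe] using hab)
  have hnodup : ((lexList h).map List.reverse).Nodup :=
    (nodup_lexList h).map (fun a b e => List.reverse_injective e)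
  have hfin : ((lexList h).map List.reverse).toFinset = S := by
    ext x
    simp only [List.mem_toFinset, List.mem_map, mem_lexList, hS]
    constructor
    · rintro ⟨a, ha, rfl⟩; simpa using ha
    · intro hx; exact ⟨x.reverse, by simpa using hx, by simp⟩
  refine List.Perm.eq_of_pairwise' (Finset.pairwise_sort _ _) hsorted ?_
  refine (Finset.sort_perm_toList S _).trans ?_
  exact (List.perm_of_nodup_nodup_toFinset_eq hnodup (Finset.nodup_toList S)
    (by rw [hfin, Finset.toList_toFinset])).symm

lemma card_S (h : ℕ) (S : Finset (List (Fin 2)))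
    (hS : ∀ l : List (Fin 2), l ∈ S ↔ l.length ≤ h) :
    S.card = 2^(h+1) - 1 := by
  rw [← Finset.length_sort (colexLe 2), sort_eq h S hS, List.length_map, lexList_length]

lemma leaf_iff (h : ℕ) (hh : 1 ≤ h) (S : Finset (List (Fin 2)))
    (hS : ∀ l : List (Fin 2), l ∈ S ↔ l.length ≤ h) (i : ℕ) :
    leafAt 2 S i ↔ (pat h).getD i false = true := by
  have hw : (S.sort (colexLe 2)).getD i [] = ((lexList h).getD i []).reverse := by
    rw [sort_eq h S hS]
    exact getD_map' (lexList h) List.reverse [] i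
  set w := (lexList h).getD i [] with hwdef
  have hwlen : w.length ≤ h := by
    rcases lt_or_ge i (lexList h).length with hi | hi
    · have hmem : w ∈ lexList h := by
        rw [hwdef, List.getD_eq_getElem _ _ hi]
        exact List.getElem_mem _
      exact (mem_lexList h w).1 hmem
    · rw [hwdef, List.getD_eq_default _ _ hi]; simp
  have hiff : leafAt 2 S i ↔ w.length = h := by
    unfold leafAt
    constructor
    · intro hleaf
      have hc := hleaf 0
      rw [hw, hS] at hc
      simp at hc
      omega
    · intro hlen c
      rw [hw, hS]
      simp [hlen]
  have hpat : (pat h).getD i false = decide (w.length = h) := by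
    rw [pat_eq h]
    have h0 : (false : Bool) = decide ((([]:List (Fin 2))).length = h) := by
      simp; omega
    rw [h0, getD_map']
  rw [hiff, hpat]
  simp

/-- In the co-lexicographic ordering of the nodes of the complete balanced
binary trie of height `h ≥ 1`, every maximal run of consecutive leaves consists
of exactly two nodes, and the number of maximal leaf runs is `(n + 1)/4`. -/
theorem stmt11 (h : ℕ) (hh : 1 ≤ h) (S : Finset (List (Fin 2)))
    (hS : ∀ l : List (Fin 2), l ∈ S ↔ l.length ≤ h) :
    (∀ i j : ℕ, i ≤ j → j < S.card →
      (∀ t, i ≤ t → t ≤ j → leafAt 2 S t) →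
      (i = 0 ∨ ¬ leafAt 2 S (i - 1)) →
      (j = S.card - 1 ∨ ¬ leafAt 2 S (j + 1)) →
      j = i + 1) ∧
    ((Finset.range S.card).filter
        (fun i => leafAt 2 S i ∧ (i = 0 ∨ ¬ leafAt 2 S (i - 1)))).card =
      (S.card + 1) / 4 := by
  have hcard : S.card = 2^(h+1) - 1 := card_S h S hS
  have hplen : (pat h).length = 2^(h+1) - 1 := pat_length h
  have hpow : 4 ≤ 2^(h+1) := by
    calc (4:ℕ) = 2^2 := rfl
    _ ≤ 2^(h+1) := Nat.pow_le_pow_right (by norm_num) (by omega)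
  have hli := leaf_iff h hh S hS
  constructor
  · intro i j hij hj hall hlb hrb
    have h1 : (pat h).getD i false = true := (hli i).1 (hall i le_rfl hij)
    have hprev : (pat h).getD (i-1) false = false := by
      rcases hlb with rfl | hnl
      · simpa using pat_getD_zero h hh
      · have := mt (hli (i-1)).2 hnl
        simp at this
        rw [List.getD_eq_getElem?_getD]
        exact this
    have hnext : (pat h).getD (i+1) false = true := patA h hh i h1 hprev
    have hlt : i + 1 < (pat h).length := getD_true_lt _ _ hnext
    have hcases : j = i ∨ j = i + 1 ∨ i + 2 ≤ j := by omega
    rcases hcases with rfl | hj1 | hj2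
    · exfalso
      rcases hrb with hend | hnl
      · omega
      · exact hnl ((hli (j+1)).2 hnext)
    · exact hj1
    · exfalso
      have h3 : (pat h).getD (i+2) false = true := (hli (i+2)).1 (hall (i+2) (by omega) hj2)
      exact patB h hh i h1 hnext h3
  · have hfeq : ((Finset.range S.card).filter
        (fun i => leafAt 2 S i ∧ (i = 0 ∨ ¬ leafAt 2 S (i - 1)))).card =
        ((Finset.range (pat h).length).filter
          (fun i => (pat h).getD i false = true ∧
            (if i = 0 then false else (pat h).getD (i-1) false) = false)).card := by
      rw [hcard, ← hplen]
      congr 1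
      apply Finset.filter_congr
      intro i _
      rw [hli i]
      constructor
      · rintro ⟨ht, h0 | hnl⟩
        · subst h0; exact ⟨ht, by simp⟩
        · refine ⟨ht, ?_⟩
          have := mt (hli (i-1)).2 hnl
          simp at this
          rcases Nat.eq_zero_or_pos i with rfl | hi
          · simp
          · rw [if_neg (by omega), List.getD_eq_getElem?_getD]; exact this
      · rintro ⟨ht, hcond⟩
        refine ⟨ht, ?_⟩
        rcases Nat.eq_zero_or_pos i with rfl | hi
        · exact Or.inl rfl
        · right
          rw [if_neg (by omega)] at hcond
          intro hleaf
          rw [hli (i-1)] at hleaf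
          rw [hleaf] at hcond
          simp at hcond
    rw [hfeq, count_runStarts, runStarts_pat h hh, hcard]
    obtain ⟨k, rfl⟩ := Nat.exists_eq_add_of_le hh
    have e1 : 2^(1+k+1) = 4 * 2^(1+k-1) := by
      rw [show 1+k-1 = k from by omega, show 1+k+1 = k+2 from by omega]
      ring
    omega
end

section
/- For every trie S over an alphabet Σ of size σ with n nodes and every integer k ≥ 0, the number of XBWT runs satisfies r ≤ n·H_k(S) + σ^{k+1}. -/
namespace XB

theorem take_sandwich {α : Type*} [LinearOrder α] :
    ∀ (j : ℕ) (A B C : List α), A ≤ B → B ≤ C → A.take j = C.take j →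
      B.take j = A.take j := by
  intro j
  induction j with
  | zero => intro A B C _ _ _; simp
  | succ j ih =>
    intro A B C hAB hBC hAC
    match A, C, hAC with
    | [], C, hAC =>
      have hC : C = [] := by
        have := hAC.symm
        rw [List.take_nil, List.take_eq_nil_iff] at this
        exact this.resolve_left (by omega)
      subst hC
      have hB : B = [] := le_antisymm hBC (le_iff_lt_or_eq.2 (by cases B with | nil => exact Or.inr rfl | cons b B => exact Or.inl List.Lex.nil))
      subst hB; rfl
    | a :: A', c :: C', hAC =>
      simp only [List.take_succ_cons, List.cons.injEq] at hAC
      obtain ⟨hac, hAC'⟩ := hAC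
      subst hac
      match B, hAB with
      | [], hAB =>
        have : (a :: A') = [] := le_antisymm hAB (le_iff_lt_or_eq.2 (Or.inl List.Lex.nil))
        exact absurd this (by simp)
      | b :: B', hAB =>
        rcases eq_or_lt_of_le hAB with h | h
        · rw [← h]
        · rcases eq_or_lt_of_le hBC with h2 | h2
          · rw [h2]
            simp only [List.take_succ_cons, List.cons.injEq]
            exact ⟨trivial, hAC'.symm⟩
          · have h' : List.Lex (· < ·) (a :: A') (b :: B') := h
            have h2' : List.Lex (· < ·) (b :: B') (a :: C') := h2
            cases h' with
            | rel hab =>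
              cases h2' with
              | rel hbc => exact absurd (hab.trans hbc) (lt_irrefl a)
              | cons _ => exact absurd hab (lt_irrefl a)
            | cons h1' =>
              cases h2' with
              | rel hbc => exact absurd hbc (lt_irrefl a)
              | cons h2'' =>
                have hA'B' : A' ≤ B' := le_of_lt h1'
                have hB'C' : B' ≤ C' := le_of_lt h2''
                simp only [List.take_succ_cons, List.cons.injEq]
                exact ⟨trivial, ih A' B' C' hA'B' hB'C' hAC'⟩


variable {σ k : ℕ}

def ctxList (σ k : ℕ) (s : List (Fin σ)) : List (Option (Fin σ)) :=
  List.replicate (k - s.length) (none : Option (Fin σ)) ++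
      (s.drop (s.length - k)).map some

lemma context_apply (s : List (Fin σ)) (i : Fin k) :
    context σ k s i = (ctxList σ k s).getD (i : ℕ) none := rfl

lemma ctxList_length (s : List (Fin σ)) : (ctxList σ k s).length = k := by
  simp [ctxList]; omega

lemma ctxList_reverse (s : List (Fin σ)) :
    (ctxList σ k s).reverse
      = (s.reverse.take k).map some ++ List.replicate (k - s.length) none := by
  simp only [ctxList, List.reverse_append, List.reverse_replicate]
  congr 1
  rw [← List.map_reverse]
  congr 1
  rw [List.reverse_drop]
  rcases le_or_gt k s.length with h | h
  · congr 1; omega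
  · rw [List.take_of_length_le (by simp; omega), List.take_of_length_le (by simp; omega)]

lemma ctxList_eq_iff {s t : List (Fin σ)} :
    ctxList σ k s = ctxList σ k t ↔ s.reverse.take k = t.reverse.take k := by
  constructor
  · intro h
    have h' := congrArg List.reverse h
    rw [ctxList_reverse, ctxList_reverse] at h'
    have hcnt : ∀ (l : List (Fin σ)), List.count (none : Option (Fin σ)) (l.map some) = 0 :=
      fun l => List.count_eq_zero.2 (by simp)
    have hc := congrArg (List.count (none : Option (Fin σ))) h'
    simp only [List.count_append] at hc
    rw [hcnt, hcnt] at hc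
    simp only [List.count_replicate, beq_self_eq_true, if_true, zero_add, add_zero] at hc
    have h1 := congrArg List.length h'
    simp only [List.length_append, List.length_map, List.length_replicate] at h1
    have hlen : ((s.reverse.take k).map some).length = ((t.reverse.take k).map some).length := by
      simp only [List.length_map] at h1 ⊢; omega
    have := List.append_inj h' (by simpa using hlen)
    exact List.map_injective_iff.2 (Option.some_injective _) this.1
  · intro h
    have hl := congrArg List.length h
    simp only [List.length_take, List.length_reverse] at hl
    have hrep : k - s.length = k - t.length := by omega
    apply List.reverse_injective
    rw [ctxList_reverse, ctxList_reverse, h, hrep]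

lemma context_eq_iff {s t : List (Fin σ)} :
    context σ k s = context σ k t ↔ s.reverse.take k = t.reverse.take k := by
  rw [← ctxList_eq_iff (k := k)]
  constructor
  · intro h
    apply List.ext_getElem (by rw [ctxList_length, ctxList_length])
    intro i h1 h2
    have hik : i < k := by rw [ctxList_length] at h1; exact h1
    have hh := congrFun h ⟨i, hik⟩
    rw [context_apply, context_apply, List.getD_eq_getElem _ _ h1,
      List.getD_eq_getElem _ _ h2] at hh
    exact hh
  · intro h
    funext i
    rw [context_apply, context_apply, h]

lemma context_short_inj {s t : List (Fin σ)} (hs : s.length < k) (ht : t.length < k)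
    (h : context σ k s = context σ k t) : s = t := by
  rw [context_eq_iff] at h
  rw [List.take_of_length_le (by simpa using hs.le),
    List.take_of_length_le (by simpa using ht.le)] at h
  exact List.reverse_injective h

lemma context_zero_eq_none {s : List (Fin σ)} (hs : s.length < k) (h0 : 0 < k) :
    context σ k s ⟨0, h0⟩ = none := by
  have hl : (0:ℕ) < (ctxList σ k s).length := by rw [ctxList_length]; exact h0
  rw [context_apply, List.getD_eq_getElem _ _ hl]
  have hlen : 0 < (List.replicate (k - s.length) (none : Option (Fin σ))).length := by
    simp; omega
  show (List.replicate (k - s.length) (none : Option (Fin σ)) ++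
      (s.drop (s.length - k)).map some)[(0:ℕ)]'hl = none
  simp [List.getElem_append_left hlen]

lemma context_isSome_of_long {s : List (Fin σ)} (hs : k ≤ s.length) (i : Fin k) :
    (context σ k s i).isSome := by
  have hl : (i : ℕ) < (ctxList σ k s).length := by rw [ctxList_length]; exact i.2
  rw [context_apply, List.getD_eq_getElem _ _ hl]
  have h0 : k - s.length = 0 := by omega
  have hd : ctxList σ k s = (s.drop (s.length - k)).map some := by
    rw [ctxList, h0]; rfl
  have hl2 : (i : ℕ) < ((s.drop (s.length - k)).map some).length := hd ▸ hl
  have : (ctxList σ k s)[(i:ℕ)]'hl = ((s.drop (s.length - k)).map some)[(i:ℕ)]'hl2 := by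
    congr 1
  rw [this, List.getElem_map]
  simp


lemma entropy_core {p : ℝ} (hp : 0 < p) (hp2 : p ≤ 1/2) :
    2*p*Real.log 2 ≤ -(p * Real.log p) - (1-p)*Real.log (1-p) := by
  have h1p : (0:ℝ) < 1 - p := by linarith
  rcases le_or_gt p (1/4) with h4 | h4
  · have hlogp : Real.log p ≤ Real.log (1/4) := Real.log_le_log hp h4
    have h14 : Real.log (1/4) = -(2 * Real.log 2) := by
      rw [show (1/4 : ℝ) = (2*2)⁻¹ by norm_num, Real.log_inv, Real.log_mul (by norm_num) (by norm_num)]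
      ring
    have hterm1 : 2*p*Real.log 2 ≤ -(p * Real.log p) := by
      rw [h14] at hlogp
      nlinarith [hp.le]
    have hterm2 : Real.log (1-p) ≤ 0 := Real.log_nonpos (by linarith) (by linarith)
    nlinarith [h1p.le]
  · have t1 : Real.log (2*p) ≤ 2*p - 1 := Real.log_le_sub_one_of_pos (by linarith)
    have t2 : Real.log (2*(1-p)) ≤ 2*(1-p) - 1 := Real.log_le_sub_one_of_pos (by linarith)
    rw [Real.log_mul (by norm_num) (ne_of_gt hp)] at t1
    rw [Real.log_mul (by norm_num) (ne_of_gt h1p)] at t2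
    have hlog2 : (1:ℝ)/2 < Real.log 2 := by
      have := Real.log_two_gt_d9; linarith
    nlinarith [mul_le_mul_of_nonneg_left t1 hp.le,
      mul_le_mul_of_nonneg_left t2 h1p.le, sq_nonneg (1-2*p)]

private lemma half_case (a m : ℕ) (ha : 0 < a) (ham : a < m) (hcase : 2*a ≤ m) :
    2*(a:ℝ)*Real.log 2 ≤ (a:ℝ)*(Real.log m - Real.log a)
      + ((m:ℝ)-(a:ℝ))*(Real.log m - Real.log ((m:ℝ)-(a:ℝ))) := by
  have hmR : (0:ℝ) < m := by exact_mod_cast (by omega : 0 < m)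
  have haR : (0:ℝ) < a := by exact_mod_cast ha
  have hmaR : (0:ℝ) < (m:ℝ) - (a:ℝ) := by
    have : (a:ℝ) < m := by exact_mod_cast ham
    linarith
  have hp0 : 0 < (a:ℝ)/m := div_pos haR hmR
  have hp12 : (a:ℝ)/m ≤ 1/2 := by
    rw [div_le_iff₀ hmR]
    have : (2:ℝ)*a ≤ m := by exact_mod_cast hcase
    linarith
  have key := entropy_core hp0 hp12
  have h1p : (1:ℝ) - (a:ℝ)/m = ((m:ℝ)-(a:ℝ))/m := by field_simp
  rw [h1p, Real.log_div (ne_of_gt haR) (ne_of_gt hmR),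
    Real.log_div (ne_of_gt hmaR) (ne_of_gt hmR)] at key
  have key2 := mul_le_mul_of_nonneg_left key hmR.le
  have eL : (m:ℝ)*(2*((a:ℝ)/m)*Real.log 2) = 2*(a:ℝ)*Real.log 2 := by field_simp
  have eR : (m:ℝ)*(-(((a:ℝ)/m)*(Real.log a - Real.log m))
        - (((m:ℝ)-(a:ℝ))/m)*(Real.log ((m:ℝ)-(a:ℝ)) - Real.log m))
      = (a:ℝ)*(Real.log m - Real.log a)
        + ((m:ℝ)-(a:ℝ))*(Real.log m - Real.log ((m:ℝ)-(a:ℝ))) := by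
    field_simp; ring
  linarith [key2, eL.ge, eR.le]

lemma entropy_nat (a m : ℕ) (h : a ≤ m) :
    2*((min a (m-a) : ℕ):ℝ) ≤ (a:ℝ) * Real.logb 2 ((m:ℝ)/(a:ℝ))
      + ((m:ℝ) - (a:ℝ)) * Real.logb 2 ((m:ℝ)/((m:ℝ)-(a:ℝ))) := by
  have hlog2 : (0:ℝ) < Real.log 2 := Real.log_pos (by norm_num)
  rcases Nat.eq_zero_or_pos m with hm | hm
  · subst hm
    have ha : a = 0 := Nat.le_zero.1 h
    subst ha; simp
  rcases Nat.eq_zero_or_pos a with ha | ha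
  · subst ha
    have hmR : (0:ℝ) < m := by exact_mod_cast hm
    simp [div_self (ne_of_gt hmR), Real.logb_one]
  rcases eq_or_lt_of_le h with ham | ham
  · subst ham
    have haR : (0:ℝ) < a := by exact_mod_cast ha
    simp [div_self (ne_of_gt haR), Real.logb_one, Nat.sub_self]
  have hmR : (0:ℝ) < m := by exact_mod_cast hm
  have haR : (0:ℝ) < a := by exact_mod_cast ha
  have hmaR : (0:ℝ) < (m:ℝ) - (a:ℝ) := by
    have : (a:ℝ) < m := by exact_mod_cast ham
    linarith
  have e1 : (a:ℝ) * Real.logb 2 ((m:ℝ)/(a:ℝ)) = (a:ℝ) * (Real.log m - Real.log a) / Real.log 2 := by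
    rw [Real.logb, Real.log_div (ne_of_gt hmR) (ne_of_gt haR)]; ring
  have e2 : ((m:ℝ)-(a:ℝ)) * Real.logb 2 ((m:ℝ)/((m:ℝ)-(a:ℝ)))
      = ((m:ℝ)-(a:ℝ)) * (Real.log m - Real.log ((m:ℝ)-(a:ℝ))) / Real.log 2 := by
    rw [Real.logb, Real.log_div (ne_of_gt hmR) (ne_of_gt hmaR)]; ring
  rw [e1, e2, ← add_div, le_div_iff₀ hlog2]
  rcases le_or_gt (2*a) m with hcase | hcase
  · have hmin : (min a (m-a) : ℕ) = a := by
      have : a ≤ m - a := by omega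
      simp [min_eq_left this]
    rw [hmin]
    have := half_case a m ha ham hcase
    linarith
  · have hmin : ((min a (m-a) : ℕ) : ℝ) = (m:ℝ) - (a:ℝ) := by
      have h1 : m - a ≤ a := by omega
      rw [min_eq_right h1]
      push_cast [Nat.cast_sub h]
      ring
    rw [hmin]
    have hb : 0 < m - a := by omega
    have hbm : m - a < m := by omega
    have hbc : 2*(m-a) ≤ m := by omega
    have := half_case (m-a) m hb hbm hbc
    have hcast : ((m - a : ℕ) : ℝ) = (m:ℝ) - (a:ℝ) := by
      push_cast [Nat.cast_sub h]; ring
    rw [hcast] at this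
    have hsub : (m:ℝ) - ((m:ℝ) - (a:ℝ)) = (a:ℝ) := by ring
    rw [hsub] at this
    linarith

lemma card_no_adjacent (E D : Finset ℕ) (hDE : D ⊆ E)
    (h : ∀ d ∈ D, ∀ d' ∈ D, d < d' → (∀ x, d < x → x < d' → x ∉ E) → False) :
    D.card ≤ (E.card + 1) / 2 := by
  classical
  set N := E.card with hN
  set e := E.orderIsoOfFin hN.symm with he
  have key : ∀ d, ∀ hd : d ∈ D, ∀ d', ∀ hd' : d' ∈ D, d ≠ d' →
      ((e.symm ⟨d, hDE hd⟩ : Fin N) : ℕ)/2 ≠ ((e.symm ⟨d', hDE hd'⟩ : Fin N) : ℕ)/2 := by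
    intro d hd d' hd' hne heq
    set t : Fin N := e.symm ⟨d, hDE hd⟩ with ht
    set t' : Fin N := e.symm ⟨d', hDE hd'⟩ with ht'
    have htne : t ≠ t' := by
      intro hc
      apply hne
      have : (⟨d, hDE hd⟩ : {x // x ∈ E}) = ⟨d', hDE hd'⟩ := by
        rw [← OrderIso.apply_symm_apply e ⟨d, hDE hd⟩, ← OrderIso.apply_symm_apply e ⟨d', hDE hd'⟩,
          ← ht, ← ht', hc]
      exact congrArg Subtype.val this
    -- consecutive in E leads to contradiction
    have main : ∀ (s s' : Fin N), s < s' → ((s:ℕ)/2 = (s':ℕ)/2) →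
        ((e s : {x // x ∈ E}) : ℕ) ∈ D → ((e s' : {x // x ∈ E}) : ℕ) ∈ D → False := by
      intro s s' hss heq2 hds hds'
      have hs1 : (s' : ℕ) = s + 1 := by
        have := Fin.lt_iff_val_lt_val.1 hss
        omega
      have hlt : ((e s : {x // x ∈ E}) : ℕ) < ((e s' : {x // x ∈ E}) : ℕ) := by
        have := e.lt_iff_lt.2 hss
        exact this
      apply h _ hds _ hds' hlt
      intro x hx1 hx2 hxE
      have hsx := e.symm ⟨x, hxE⟩
      set sx : Fin N := e.symm ⟨x, hxE⟩ with hsx'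
      have hex : (e sx : {x // x ∈ E}) = ⟨x, hxE⟩ := OrderIso.apply_symm_apply e _
      have h1 : s < sx := by
        rw [← e.lt_iff_lt, hex]
        exact Subtype.mk_lt_mk.2 hx1
      have h2 : sx < s' := by
        rw [← e.lt_iff_lt, hex]
        exact Subtype.mk_lt_mk.2 hx2
      have := Fin.lt_iff_val_lt_val.1 h1
      have := Fin.lt_iff_val_lt_val.1 h2
      omega
    rcases lt_or_gt_of_ne htne with hlt | hlt
    · exact main t t' hlt heq (by rw [ht, OrderIso.apply_symm_apply]; exact hd)
        (by rw [ht', OrderIso.apply_symm_apply]; exact hd')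
    · exact main t' t hlt heq.symm (by rw [ht', OrderIso.apply_symm_apply]; exact hd')
        (by rw [ht, OrderIso.apply_symm_apply]; exact hd)
  -- now the injection
  by_cases hD : D = ∅
  · simp [hD]
  have hN0 : 0 < N := by
    obtain ⟨d, hd⟩ := Finset.nonempty_of_ne_empty hD
    exact Finset.card_pos.2 ⟨d, hDE hd⟩
  have : D.card ≤ (Finset.range ((N+1)/2)).card := by
    apply Finset.card_le_card_of_injOn
      (fun d => if hd : d ∈ D then ((e.symm ⟨d, hDE hd⟩ : Fin N) : ℕ)/2 else 0)
    · intro d hd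
      simp only [Finset.mem_coe] at hd ⊢
      simp only [hd, dif_pos, Finset.mem_range]
      have : ((e.symm ⟨d, hDE hd⟩ : Fin N) : ℕ) < N := (e.symm ⟨d, hDE hd⟩).2
      omega
    · intro d hd d' hd' heq
      simp only [Finset.mem_coe] at hd hd'
      simp only [hd, hd', dif_pos] at heq
      by_contra hne
      exact key d hd d' hd' hne heq
  simpa using this


def encode (x y : Fin σ) (s : List (Fin σ)) : Fin k → Fin σ :=
  fun i => if h : (i : ℕ) < s.length then s[(i:ℕ)] else if (i:ℕ) = s.length then x else y

lemma encode_at {x y : Fin σ} (s : List (Fin σ)) (i : Fin k) :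
    encode x y s i = if h : (i : ℕ) < s.length then s[(i:ℕ)]
      else if (i:ℕ) = s.length then x else y := rfl

lemma encode_inj {x y : Fin σ} (hxy : x ≠ y) {s t : List (Fin σ)}
    (hs : s.length < k) (ht : t.length < k)
    (h : encode (k := k) x y s = encode (k := k) x y t) : s = t := by
  have hlen : s.length = t.length := by
    by_contra hne
    rcases Nat.lt_or_ge s.length t.length with hlt | hge
    · have h2 := congrFun h ⟨t.length, ht⟩
      rw [encode_at, encode_at, dif_neg (by simp; omega), if_neg (by simp; omega),
        dif_neg (by simp), if_pos (by simp)] at h2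
      exact hxy h2.symm
    · have hlt : t.length < s.length := by omega
      have h2 := congrFun h ⟨s.length, hs⟩
      rw [encode_at, encode_at, dif_neg (by simp), if_pos (by simp),
        dif_neg (by simp; omega), if_neg (by simp; omega)] at h2
      exact hxy h2
  apply List.ext_getElem hlen
  intro i h1 h2
  have h3 := congrFun h ⟨i, by omega⟩
  rw [encode_at, encode_at, dif_pos (by simpa using h1), dif_pos (by simpa using h2)] at h3
  simpa using h3

lemma encode_ne_zero {x y : Fin σ} (hx : x ≠ y) {s : List (Fin σ)} (hs : s.length < k) :
    encode (k := k) x y s ≠ fun _ => y := by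
  intro hc
  have h2 := congrFun hc ⟨s.length, hs⟩
  rw [encode_at, dif_neg (by simp), if_pos (by simp)] at h2
  exact hx h2

lemma ctx_image_card_le (hσ : 2 ≤ σ) (T : Finset (Fin k → Option (Fin σ)))
    (hT : ∀ w ∈ T, ∃ s : List (Fin σ), context σ k s = w) :
    T.card + 1 ≤ 2 * σ^k := by
  classical
  set P : (Fin k → Option (Fin σ)) → Prop := fun w => ∀ i, (w i).isSome with hP
  have hsplit := Finset.card_filter_add_card_filter_not (s := T) (p := P)
  set T1 := T.filter P
  set T2 := T.filter (fun w => ¬ P w)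
  have hT1 : T1.card ≤ σ^k := by
    have : T1.card ≤ (Finset.univ : Finset (Fin k → Fin σ)).card := by
      apply Finset.card_le_card_of_injOn
        (fun w i => (w i).getD (⟨0, by omega⟩ : Fin σ))
      · intro _ _; exact Finset.mem_univ _
      · intro w hw w' hw' heq
        simp only [T1, Finset.mem_coe, Finset.mem_filter, hP] at hw hw'
        funext i
        obtain ⟨a, ha⟩ := Option.isSome_iff_exists.1 (hw.2 i)
        obtain ⟨a', ha'⟩ := Option.isSome_iff_exists.1 (hw'.2 i)
        have h3 := congrFun heq i
        dsimp only at h3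
        rw [ha, ha'] at h3 ⊢
        simpa using h3
    simpa [Finset.card_univ] using this
  have hT2 : T2.card + 1 ≤ σ^k := by
    have h1 : (1:ℕ) < σ := by omega
    set x : Fin σ := ⟨1, h1⟩ with hx
    set y : Fin σ := ⟨0, by omega⟩ with hy
    have hxy : x ≠ y := by
      simp [hx, hy, Fin.ext_iff]
    -- every w in T2 comes from a short string
    have hshort : ∀ w ∈ T2, ∃ s : List (Fin σ), context σ k s = w ∧ s.length < k := by
      intro w hw
      simp only [T2, Finset.mem_filter, hP] at hw
      obtain ⟨s, hs⟩ := hT w hw.1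
      refine ⟨s, hs, ?_⟩
      by_contra hlong
      obtain ⟨i, hi⟩ := not_forall.1 hw.2
      apply hi
      rw [← hs]
      exact context_isSome_of_long (by omega) i
    have hinj : T2.card ≤ ((Finset.univ : Finset (Fin k → Fin σ)).erase (fun _ => y)).card := by
      apply Finset.card_le_card_of_injOn
        (fun w => if h : ∃ s : List (Fin σ), context σ k s = w ∧ s.length < k
          then encode (k := k) x y h.choose else fun _ => y)
      · intro w hw
        dsimp only
        rw [dif_pos (hshort w hw)]
        apply Finset.mem_erase_of_ne_of_mem _ (Finset.mem_univ _)
        exact encode_ne_zero hxy (hshort w hw).choose_spec.2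
      · intro w hw w' hw' heq
        simp only [Finset.mem_coe] at hw hw'
        dsimp only at heq
        rw [dif_pos (hshort w hw), dif_pos (hshort w' hw')] at heq
        have e1 := (hshort w hw).choose_spec
        have e2 := (hshort w' hw').choose_spec
        have := encode_inj hxy e1.2 e2.2 heq
        rw [← e1.1, ← e2.1, this]
    have : ((Finset.univ : Finset (Fin k → Fin σ)).erase (fun _ => y)).card = σ^k - 1 := by
      rw [Finset.card_erase_of_mem (Finset.mem_univ _)]
      simp [Finset.card_univ]
    rw [this] at hinj
    have hσk : 1 ≤ σ^k := Nat.one_le_pow _ _ (by omega)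
    omega
  omega


variable {S : Finset (List (Fin σ))}

lemma srt_getD_mem {i : ℕ} (hi : i < (S.sort (colexLe σ)).length) :
    (S.sort (colexLe σ)).getD i [] ∈ S := by
  rw [List.getD_eq_getElem _ _ hi]
  exact (Finset.mem_sort _).1 (List.getElem_mem _)

lemma srt_getD_inj {i j : ℕ} (hi : i < (S.sort (colexLe σ)).length)
    (hj : j < (S.sort (colexLe σ)).length)
    (h : (S.sort (colexLe σ)).getD i [] = (S.sort (colexLe σ)).getD j []) : i = j := by
  rw [List.getD_eq_getElem _ _ hi, List.getD_eq_getElem _ _ hj] at h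
  exact (List.Nodup.getElem_inj_iff (Finset.sort_nodup _ _)).1 h

lemma srt_le {i j : ℕ} (hij : i ≤ j) (hj : j < (S.sort (colexLe σ)).length) :
    colexLe σ ((S.sort (colexLe σ)).getD i []) ((S.sort (colexLe σ)).getD j []) := by
  rcases eq_or_lt_of_le hij with rfl | hlt
  · exact le_refl _
  · rw [List.getD_eq_getElem _ _ (lt_trans hlt hj), List.getD_eq_getElem _ _ hj]
    have h := List.Pairwise.rel_get_of_lt (Finset.pairwise_sort (r := colexLe σ) (s := S))
      (a := ⟨i, lt_trans hlt hj⟩) (b := ⟨j, hj⟩) (by simpa using hlt)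
    simpa using h

lemma srt_ctx_conv {i l j : ℕ} (hil : i ≤ l) (hlj : l ≤ j)
    (hj : j < (S.sort (colexLe σ)).length)
    (h : context σ k ((S.sort (colexLe σ)).getD i [])
        = context σ k ((S.sort (colexLe σ)).getD j [])) :
    context σ k ((S.sort (colexLe σ)).getD l [])
      = context σ k ((S.sort (colexLe σ)).getD i []) := by
  rw [context_eq_iff] at h ⊢
  exact take_sandwich k _ _ _ (srt_le hil (lt_of_le_of_lt hlj hj)) (srt_le hlj hj) h

lemma key_bound (σ k : ℕ) (hσ : 2 ≤ σ) (S : Finset (List (Fin σ))) :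
    xbwtRuns σ S ≤ (∑ w : Fin k → Option (Fin σ), ∑ c : Fin σ,
      2 * min ((S.filter fun s => context σ k s = w ∧ s ++ [c] ∈ S).card)
        ((S.filter fun s => context σ k s = w).card
          - (S.filter fun s => context σ k s = w ∧ s ++ [c] ∈ S).card)) + σ^(k+1) := by
  classical
  set L := S.sort (colexLe σ) with hL
  set n := L.length with hn
  -- the ENDS set
  set E : Finset ℕ := (Finset.range n).filter
    (fun i => ¬(i+1 < n) ∨ context σ k (L.getD i []) ≠ context σ k (L.getD (i+1) [])) with hE
  -- E-cardinality bound
  have hEcard : E.card + 1 ≤ 2 * σ^k := by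
    have hinj : Set.InjOn (fun i => context σ k (L.getD i [])) E := by
      intro i hi j hj hctx
      simp only [Finset.mem_coe, hE, Finset.mem_filter, Finset.mem_range] at hi hj
      by_contra hne
      rcases Nat.lt_or_ge i j with hlt | hge
      · have hi1 : i + 1 < n := by omega
        have h2 := hi.2.resolve_left (by omega)
        exact h2 (srt_ctx_conv (Nat.le_add_right i 1) (by omega) hj.1 hctx).symm
      · have hlt : j < i := by omega
        have h2 := hj.2.resolve_left (by omega)
        exact h2 (srt_ctx_conv (Nat.le_add_right j 1) (by omega) hi.1 hctx.symm).symm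
    have himg : E.card = (E.image (fun i => context σ k (L.getD i []))).card :=
      (Finset.card_image_of_injOn hinj).symm
    rw [himg]
    apply ctx_image_card_le hσ
    intro w hw
    obtain ⟨i, _, hi⟩ := Finset.mem_image.1 hw
    exact ⟨L.getD i [], hi⟩
  -- per-character bound
  have main_c : ∀ c : Fin σ,
      ((Finset.range n).filter fun i =>
        L.getD i [] ++ [c] ∈ S ∧ (i = n - 1 ∨ L.getD (i + 1) [] ++ [c] ∉ S)).card
      ≤ ((∑ w : Fin k → Option (Fin σ),
          min ((S.filter fun s => context σ k s = w ∧ s ++ [c] ∈ S).card)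
            ((S.filter fun s => context σ k s = w).card
              - (S.filter fun s => context σ k s = w ∧ s ++ [c] ∈ S).card))
        + (∑ w : Fin k → Option (Fin σ),
          min ((S.filter fun s => context σ k s = w ∧ s ++ [c] ∈ S).card)
            ((S.filter fun s => context σ k s = w).card
              - (S.filter fun s => context σ k s = w ∧ s ++ [c] ∈ S).card)))
        + (E.card + 1)/2 := by
    intro c
    set Bc := (Finset.range n).filter (fun i =>
      L.getD i [] ++ [c] ∈ S ∧ (i = n - 1 ∨ L.getD (i + 1) [] ++ [c] ∉ S)) with hBc
    set P1 : ℕ → Prop := fun i =>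
      i + 1 < n ∧ context σ k (L.getD i []) = context σ k (L.getD (i+1) []) with hP1
    set P2 : ℕ → Prop := fun i =>
      i + 1 < n ∧ 0 < (S.filter fun s =>
        context σ k s = context σ k (L.getD (i+1) []) ∧ s ++ [c] ∈ S).card with hP2
    have hsplit1 := Finset.card_filter_add_card_filter_not (s := Bc) (p := P1)
    have hsplit2 := Finset.card_filter_add_card_filter_not
      (s := Bc.filter (fun i => ¬ P1 i)) (p := P2)
    -- membership basics
    have hBmem : ∀ i ∈ Bc, i < n ∧ L.getD i [] ++ [c] ∈ S
        ∧ (i = n - 1 ∨ L.getD (i + 1) [] ++ [c] ∉ S) := by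
      intro i hi
      rw [hBc, Finset.mem_filter, Finset.mem_range] at hi
      exact ⟨hi.1, hi.2.1, hi.2.2⟩
    -- the complement-card lemma
    have hcompl : ∀ w : Fin k → Option (Fin σ),
        (S.filter fun s => context σ k s = w ∧ s ++ [c] ∉ S).card
          = (S.filter fun s => context σ k s = w).card
            - (S.filter fun s => context σ k s = w ∧ s ++ [c] ∈ S).card := by
      intro w
      have h1 := Finset.card_filter_add_card_filter_not
        (s := S.filter fun s => context σ k s = w) (p := fun s => s ++ [c] ∈ S)
      rw [Finset.filter_filter, Finset.filter_filter] at h1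
      omega
    -- (1) within-class bound
    have hBin : (Bc.filter P1).card ≤ ∑ w : Fin k → Option (Fin σ),
        min ((S.filter fun s => context σ k s = w ∧ s ++ [c] ∈ S).card)
          ((S.filter fun s => context σ k s = w).card
            - (S.filter fun s => context σ k s = w ∧ s ++ [c] ∈ S).card) := by
      rw [Finset.card_eq_sum_card_fiberwise
        (f := fun i => context σ k (L.getD i [])) (t := Finset.univ)
        (fun x _ => Finset.mem_univ _)]
      apply Finset.sum_le_sum
      intro w _
      apply le_min
      · apply Finset.card_le_card_of_injOn (fun i => L.getD i [])
        · intro i hi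
          simp only [Finset.mem_coe, Finset.mem_filter] at hi
          obtain ⟨⟨hiB, _⟩, hctxw⟩ := hi
          obtain ⟨hin, hc1, _⟩ := hBmem i hiB
          simp only [Finset.mem_coe, Finset.mem_filter]
          exact ⟨srt_getD_mem (hn ▸ hin), hctxw, hc1⟩
        · intro i hi j hj heq
          simp only [Finset.mem_coe, Finset.mem_filter] at hi hj
          exact srt_getD_inj (hn ▸ (hBmem i hi.1.1).1) (hn ▸ (hBmem j hj.1.1).1) heq
      · rw [← hcompl w]
        apply Finset.card_le_card_of_injOn (fun i => L.getD (i+1) [])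
        · intro i hi
          simp only [Finset.mem_coe, Finset.mem_filter] at hi
          obtain ⟨⟨hiB, hiP1⟩, hctxw⟩ := hi
          obtain ⟨hin, _, hc2⟩ := hBmem i hiB
          rw [hP1] at hiP1
          have hi1 : i + 1 < n := hiP1.1
          have hnc : L.getD (i+1) [] ++ [c] ∉ S := by
            rcases hc2 with h | h
            · omega
            · exact h
          simp only [Finset.mem_coe, Finset.mem_filter]
          refine ⟨srt_getD_mem (hn ▸ hi1), ?_, hnc⟩
          rw [← hiP1.2, hctxw]
        · intro i hi j hj heq
          simp only [Finset.mem_coe, Finset.mem_filter] at hi hj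
          rw [hP1] at hi hj
          have := srt_getD_inj (hn ▸ hi.1.2.1) (hn ▸ hj.1.2.1) heq
          omega
    -- (2a) boundary, next class mixed
    have hB2a : ((Bc.filter (fun i => ¬ P1 i)).filter P2).card
        ≤ ∑ w : Fin k → Option (Fin σ),
        min ((S.filter fun s => context σ k s = w ∧ s ++ [c] ∈ S).card)
          ((S.filter fun s => context σ k s = w).card
            - (S.filter fun s => context σ k s = w ∧ s ++ [c] ∈ S).card) := by
      rw [Finset.card_eq_sum_card_fiberwise
        (f := fun i => context σ k (L.getD (i+1) [])) (t := Finset.univ)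
        (fun x _ => Finset.mem_univ _)]
      apply Finset.sum_le_sum
      intro w _
      rcases Finset.eq_empty_or_nonempty
        (((Bc.filter (fun i => ¬ P1 i)).filter P2).filter
          (fun i => context σ k (L.getD (i+1) []) = w)) with hemp | ⟨i0, hi0⟩
      · rw [hemp]; simp
      · -- fiber nonempty: min ≥ 1, card ≤ 1
        have hone : (((Bc.filter (fun i => ¬ P1 i)).filter P2).filter
            (fun i => context σ k (L.getD (i+1) []) = w)).card ≤ 1 := by
          rw [Finset.card_le_one]
          intro a ha b hb
          simp only [Finset.mem_filter] at ha hb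
          obtain ⟨⟨⟨haB, haP1⟩, haP2⟩, haw⟩ := ha
          obtain ⟨⟨⟨hbB, hbP1⟩, hbP2⟩, hbw⟩ := hb
          rw [hP2] at haP2 hbP2
          rw [hP1] at haP1 hbP1
          by_contra hne
          rcases Nat.lt_or_ge a b with hab | hab
          · -- a < b : context (L.getD b) = w and b would be within-class
            have hconv := srt_ctx_conv (i := a+1) (l := b) (j := b+1)
              (by omega) (by omega) (hn ▸ hbP2.1) (by rw [haw, hbw])
            exact hbP1 ⟨hbP2.1, by rw [hconv, haw, hbw]⟩
          · have hba : b < a := by omega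
            have hconv := srt_ctx_conv (i := b+1) (l := a) (j := a+1)
              (by omega) (by omega) (hn ▸ haP2.1) (by rw [haw, hbw])
            exact haP1 ⟨haP2.1, by rw [hconv, haw, hbw]⟩
        have hmin1 : 1 ≤ min ((S.filter fun s => context σ k s = w ∧ s ++ [c] ∈ S).card)
            ((S.filter fun s => context σ k s = w).card
              - (S.filter fun s => context σ k s = w ∧ s ++ [c] ∈ S).card) := by
          simp only [Finset.mem_filter] at hi0
          obtain ⟨⟨⟨hiB, hiP1⟩, hiP2⟩, hiw⟩ := hi0
          rw [hP2] at hiP2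
          rw [hP1] at hiP1
          obtain ⟨hin, _, hc2⟩ := hBmem i0 hiB
          have hi1 : i0 + 1 < n := hiP2.1
          have ha1 : 0 < (S.filter fun s => context σ k s = w ∧ s ++ [c] ∈ S).card := by
            rw [← hiw]; exact hiP2.2
          have hnc : L.getD (i0+1) [] ++ [c] ∉ S := by
            rcases hc2 with h | h
            · omega
            · exact h
          have hb1 : 0 < (S.filter fun s => context σ k s = w ∧ s ++ [c] ∉ S).card := by
            rw [Finset.card_pos]
            exact ⟨L.getD (i0+1) [], by
              simp only [Finset.mem_filter]
              exact ⟨srt_getD_mem (hn ▸ hi1), hiw, hnc⟩⟩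
          rw [hcompl w] at hb1
          omega
        exact le_trans hone hmin1
    -- (2b) boundary, next class c-empty: inside D
    set D : Finset ℕ := E.filter (fun i => L.getD i [] ++ [c] ∈ S ∧
      (¬(i+1 < n) ∨ (S.filter fun s =>
        context σ k s = context σ k (L.getD (i+1) []) ∧ s ++ [c] ∈ S).card = 0)) with hD
    have hB2b : ((Bc.filter (fun i => ¬ P1 i)).filter (fun i => ¬ P2 i)).card ≤ D.card := by
      apply Finset.card_le_card
      intro i hi
      simp only [Finset.mem_filter] at hi
      obtain ⟨⟨hiB, hiP1⟩, hiP2⟩ := hi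
      obtain ⟨hin, hc1, hc2⟩ := hBmem i hiB
      rw [hP1] at hiP1
      rw [hP2] at hiP2
      rw [hD, Finset.mem_filter, hE, Finset.mem_filter, Finset.mem_range]
      refine ⟨⟨hin, ?_⟩, hc1, ?_⟩
      · by_contra hcon
        push_neg at hcon
        exact hiP1 ⟨hcon.1, hcon.2⟩
      · by_contra hcon
        push_neg at hcon
        exact hiP2 ⟨hcon.1, Nat.pos_of_ne_zero hcon.2⟩
    have hDcard : D.card ≤ (E.card + 1)/2 := by
      apply card_no_adjacent E D (Finset.filter_subset _ _)
      intro d hd d' hd' hdd' hbet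
      rw [hD, Finset.mem_filter] at hd hd'
      have hd'n : d' < n := by
        have := hd'.1
        rw [hE, Finset.mem_filter, Finset.mem_range] at this
        exact this.1
      have hd1n : d + 1 < n := by omega
      have hzero : (S.filter fun s =>
          context σ k s = context σ k (L.getD (d+1) []) ∧ s ++ [c] ∈ S).card = 0 := by
        rcases hd.2.2 with h | h
        · omega
        · exact h
      -- chain : contexts constant on [d+1, d']
      have hchain : ∀ m, d + 1 ≤ m → m ≤ d' →
          context σ k (L.getD (d+1) []) = context σ k (L.getD m []) := by
        intro m
        induction m with
        | zero => intro h1 _; omega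
        | succ m ih =>
          intro h1 h2
          rcases Nat.lt_or_ge d.succ (m+1) with hlt | hge
          · have hdm : d + 1 ≤ m := by omega
            have hmid := ih hdm (by omega)
            have hmE : m ∉ E := hbet m (by omega) (by omega)
            have : context σ k (L.getD m []) = context σ k (L.getD (m+1) []) := by
              by_contra hne
              apply hmE
              rw [hE, Finset.mem_filter, Finset.mem_range]
              exact ⟨by omega, Or.inr hne⟩
            rw [hmid, this]
          · have : d + 1 = m + 1 := by omega
            rw [this]
      have hctxd' := hchain d' (by omega) (le_refl d')
      -- d' witnesses a c-parent in the class of L.getD (d+1)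
      have : 0 < (S.filter fun s =>
          context σ k s = context σ k (L.getD (d+1) []) ∧ s ++ [c] ∈ S).card := by
        rw [Finset.card_pos]
        refine ⟨L.getD d' [], ?_⟩
        simp only [Finset.mem_filter]
        exact ⟨srt_getD_mem (hn ▸ hd'n), hctxd'.symm, hd'.2.1⟩
      omega
    -- combine
    calc Bc.card
        = ((Bc.filter P1).card + ((Bc.filter (fun i => ¬ P1 i)).filter P2).card)
          + ((Bc.filter (fun i => ¬ P1 i)).filter (fun i => ¬ P2 i)).card := by omega
      _ ≤ _ := add_le_add (add_le_add hBin hB2a) (le_trans hB2b hDcard)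

  -- assemble
  rw [xbwtRuns]
  rw [← hL, ← hn]
  calc ∑ c : Fin σ, ((Finset.range n).filter fun i =>
        L.getD i [] ++ [c] ∈ S ∧ (i = n - 1 ∨ L.getD (i + 1) [] ++ [c] ∉ S)).card
      ≤ ∑ c : Fin σ, (((∑ w : Fin k → Option (Fin σ),
          min ((S.filter fun s => context σ k s = w ∧ s ++ [c] ∈ S).card)
            ((S.filter fun s => context σ k s = w).card
              - (S.filter fun s => context σ k s = w ∧ s ++ [c] ∈ S).card))
        + (∑ w : Fin k → Option (Fin σ),
          min ((S.filter fun s => context σ k s = w ∧ s ++ [c] ∈ S).card)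
            ((S.filter fun s => context σ k s = w).card
              - (S.filter fun s => context σ k s = w ∧ s ++ [c] ∈ S).card)))
        + (E.card + 1)/2) := Finset.sum_le_sum (fun c _ => main_c c)
    _ ≤ (∑ w : Fin k → Option (Fin σ), ∑ c : Fin σ,
          2 * min ((S.filter fun s => context σ k s = w ∧ s ++ [c] ∈ S).card)
            ((S.filter fun s => context σ k s = w).card
              - (S.filter fun s => context σ k s = w ∧ s ++ [c] ∈ S).card)) + σ^(k+1) := by
        rw [Finset.sum_add_distrib, Finset.sum_add_distrib, Finset.sum_const,
          Finset.card_univ, Fintype.card_fin, smul_eq_mul]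
        have hswap : ∀ (_ : True), (∑ c : Fin σ, ∑ w : Fin k → Option (Fin σ),
            min ((S.filter fun s => context σ k s = w ∧ s ++ [c] ∈ S).card)
            ((S.filter fun s => context σ k s = w).card
              - (S.filter fun s => context σ k s = w ∧ s ++ [c] ∈ S).card))
            = ∑ w : Fin k → Option (Fin σ), ∑ c : Fin σ,
            min ((S.filter fun s => context σ k s = w ∧ s ++ [c] ∈ S).card)
            ((S.filter fun s => context σ k s = w).card
              - (S.filter fun s => context σ k s = w ∧ s ++ [c] ∈ S).card) :=
          fun _ => Finset.sum_comm
        rw [hswap trivial]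
        have h2min : (∑ w : Fin k → Option (Fin σ), ∑ c : Fin σ,
            2 * min ((S.filter fun s => context σ k s = w ∧ s ++ [c] ∈ S).card)
            ((S.filter fun s => context σ k s = w).card
              - (S.filter fun s => context σ k s = w ∧ s ++ [c] ∈ S).card))
            = (∑ w : Fin k → Option (Fin σ), ∑ c : Fin σ,
            min ((S.filter fun s => context σ k s = w ∧ s ++ [c] ∈ S).card)
            ((S.filter fun s => context σ k s = w).card
              - (S.filter fun s => context σ k s = w ∧ s ++ [c] ∈ S).card))
            + (∑ w : Fin k → Option (Fin σ), ∑ c : Fin σ,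
            min ((S.filter fun s => context σ k s = w ∧ s ++ [c] ∈ S).card)
            ((S.filter fun s => context σ k s = w).card
              - (S.filter fun s => context σ k s = w ∧ s ++ [c] ∈ S).card)) := by
          rw [← Finset.sum_add_distrib]
          congr 1; funext w
          rw [← Finset.sum_add_distrib]
          congr 1; funext c
          omega
        rw [h2min]
        apply add_le_add_right
        have hdiv : (E.card + 1)/2 ≤ σ^k := by
          have := Nat.div_le_div_right (c := 2) hEcard
          rwa [Nat.mul_div_cancel_left _ (by norm_num)] at this
        calc σ * ((E.card + 1)/2) ≤ σ * σ^k := Nat.mul_le_mul_left σ hdiv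
          _ = σ^(k+1) := by ring


lemma fin1_eq_replicate (s : List (Fin 1)) : s = List.replicate s.length 0 :=
  List.eq_replicate_of_mem (fun b _ => Subsingleton.elim b 0)

lemma replicate_lex_lt {a b : ℕ} (h : a < b) :
    List.Lex (· < ·) (List.replicate a (0 : Fin 1)) (List.replicate b (0 : Fin 1)) := by
  induction a generalizing b with
  | zero =>
    obtain ⟨m, rfl⟩ : ∃ m, b = m + 1 := ⟨b - 1, by omega⟩
    exact List.Lex.nil
  | succ a ih =>
    obtain ⟨m, rfl⟩ : ∃ m, b = m + 1 := ⟨b - 1, by omega⟩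
    rw [List.replicate_succ, List.replicate_succ]
    exact List.Lex.cons (ih (by omega))

lemma colexLe_fin1_length {s t : List (Fin 1)} (h : colexLe 1 s t) : s.length ≤ t.length := by
  by_contra hlt
  push_neg at hlt
  have h1 : t.reverse < s.reverse := by
    rw [fin1_eq_replicate s.reverse, fin1_eq_replicate t.reverse]
    simp only [List.length_reverse]
    show List.Lex (· < ·) _ _
    exact replicate_lex_lt (by simpa using hlt)
  exact absurd h (not_le.2 h1)

lemma runs_le_one (S : Finset (List (Fin 1)))
    (hpc : ∀ (s : List (Fin 1)) (c : Fin 1), s ++ [c] ∈ S → s ∈ S) :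
    xbwtRuns 1 S ≤ 1 := by
  classical
  rw [xbwtRuns, Fin.sum_univ_one]
  set L := S.sort (colexLe 1) with hL
  set n := L.length with hn
  -- downward closure of replicate lengths
  have hdown : ∀ t, List.replicate (t+1) (0 : Fin 1) ∈ S → List.replicate t (0 : Fin 1) ∈ S := by
    intro t ht
    apply hpc (List.replicate t 0) 0
    rwa [← List.replicate_succ' (n := t)]
  have hdownall : ∀ t j, j ≤ t → List.replicate t (0 : Fin 1) ∈ S →
      List.replicate j (0 : Fin 1) ∈ S := by
    intro t
    induction t with
    | zero => intro j hj ht; rw [Nat.le_zero.1 hj]; exact ht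
    | succ t ih =>
      intro j hj ht
      rcases Nat.lt_or_ge j (t+1) with hlt | hge
      · exact ih j (by omega) (hdown t ht)
      · have : j = t + 1 := by omega
        rw [this]; exact ht
  rw [Finset.card_le_one]
  have main : ∀ a b, a ∈ (Finset.range n).filter (fun i =>
      L.getD i [] ++ [(0 : Fin 1)] ∈ S ∧ (i = n - 1 ∨ L.getD (i + 1) [] ++ [(0 : Fin 1)] ∉ S)) →
      b ∈ (Finset.range n).filter (fun i =>
      L.getD i [] ++ [(0 : Fin 1)] ∈ S ∧ (i = n - 1 ∨ L.getD (i + 1) [] ++ [(0 : Fin 1)] ∉ S)) →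
      a < b → False := by
    intro a b ha hb hab
    rw [Finset.mem_filter, Finset.mem_range] at ha hb
    have hbn : b < n := hb.1
    have hnot : L.getD (a+1) [] ++ [(0:Fin 1)] ∉ S := by
      rcases ha.2.2 with h | h
      · omega
      · exact h
    apply hnot
    -- lengths
    have hle : (L.getD (a+1) []).length ≤ (L.getD b []).length :=
      colexLe_fin1_length (srt_le (by omega) hbn)
    have hbS : L.getD b [] ++ [(0:Fin 1)] ∈ S := hb.2.1
    have hrw : ∀ (s : List (Fin 1)), s ++ [(0:Fin 1)] = List.replicate (s.length + 1) 0 := by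
      intro s
      conv_lhs => rw [fin1_eq_replicate s]
      rw [← List.replicate_succ']
    rw [hrw] at hbS ⊢
    exact hdownall _ _ (by omega) hbS
  intro a ha b hb
  by_contra hne
  rcases Nat.lt_or_ge a b with h | h
  · exact main a b ha hb h
  · exact main b a hb ha (by omega)


lemma term_nonneg {σ k : ℕ} (S : Finset (List (Fin σ))) (w : Fin k → Option (Fin σ)) (c : Fin σ) :
    0 ≤ ((S.filter fun s => context σ k s = w ∧ s ++ [c] ∈ S).card : ℝ) *
          Real.logb 2 (((S.filter fun s => context σ k s = w).card : ℝ) /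
            ((S.filter fun s => context σ k s = w ∧ s ++ [c] ∈ S).card : ℝ)) +
        (((S.filter fun s => context σ k s = w).card : ℝ) -
            ((S.filter fun s => context σ k s = w ∧ s ++ [c] ∈ S).card : ℝ)) *
          Real.logb 2 (((S.filter fun s => context σ k s = w).card : ℝ) /
            (((S.filter fun s => context σ k s = w).card : ℝ) -
              ((S.filter fun s => context σ k s = w ∧ s ++ [c] ∈ S).card : ℝ))) := by
  have hsub : (S.filter fun s => context σ k s = w ∧ s ++ [c] ∈ S) ⊆
      (S.filter fun s => context σ k s = w) := by
    intro s hs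
    simp only [Finset.mem_filter] at hs ⊢
    exact ⟨hs.1, hs.2.1⟩
  have key := entropy_nat ((S.filter fun s => context σ k s = w ∧ s ++ [c] ∈ S).card)
    ((S.filter fun s => context σ k s = w).card) (Finset.card_le_card hsub)
  have h0 : (0:ℝ) ≤ 2*((min ((S.filter fun s => context σ k s = w ∧ s ++ [c] ∈ S).card)
      (((S.filter fun s => context σ k s = w).card)
        - (S.filter fun s => context σ k s = w ∧ s ++ [c] ∈ S).card) : ℕ):ℝ) := by positivity
  linarith

end XB

/-- For every trie `S` over an alphabet of size `σ` with `n` nodes and every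
`k ≥ 0`, the number of XBWT runs satisfies `r ≤ n·H_k(S) + σ^{k+1}`. -/
theorem stmt14 (σ : ℕ) (S : Finset (List (Fin σ)))
    (hroot : ([] : List (Fin σ)) ∈ S)
    (hpc : ∀ (s : List (Fin σ)) (c : Fin σ), s ++ [c] ∈ S → s ∈ S) (k : ℕ) :
    (xbwtRuns σ S : ℝ) ≤ (S.card : ℝ) * trieHk σ S k + (σ : ℝ) ^ (k + 1) := by
  classical
  have hcard0 : (S.card : ℝ) ≠ 0 := by
    simp [Finset.card_ne_zero_of_mem hroot]
  have hH : (S.card : ℝ) * trieHk σ S k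
      = ∑ w : Fin k → Option (Fin σ), ∑ c : Fin σ,
      (((S.filter fun s => context σ k s = w ∧ s ++ [c] ∈ S).card : ℝ) *
          Real.logb 2 (((S.filter fun s => context σ k s = w).card : ℝ) /
            ((S.filter fun s => context σ k s = w ∧ s ++ [c] ∈ S).card : ℝ)) +
        (((S.filter fun s => context σ k s = w).card : ℝ) -
            ((S.filter fun s => context σ k s = w ∧ s ++ [c] ∈ S).card : ℝ)) *
          Real.logb 2 (((S.filter fun s => context σ k s = w).card : ℝ) /
            (((S.filter fun s => context σ k s = w).card : ℝ) -
              ((S.filter fun s => context σ k s = w ∧ s ++ [c] ∈ S).card : ℝ)))) := by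
    rw [trieHk, ← mul_assoc, mul_one_div, div_self hcard0, one_mul]
  have hsum_nonneg : (0:ℝ) ≤ ∑ w : Fin k → Option (Fin σ), ∑ c : Fin σ,
      (((S.filter fun s => context σ k s = w ∧ s ++ [c] ∈ S).card : ℝ) *
          Real.logb 2 (((S.filter fun s => context σ k s = w).card : ℝ) /
            ((S.filter fun s => context σ k s = w ∧ s ++ [c] ∈ S).card : ℝ)) +
        (((S.filter fun s => context σ k s = w).card : ℝ) -
            ((S.filter fun s => context σ k s = w ∧ s ++ [c] ∈ S).card : ℝ)) *
          Real.logb 2 (((S.filter fun s => context σ k s = w).card : ℝ) /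
            (((S.filter fun s => context σ k s = w).card : ℝ) -
              ((S.filter fun s => context σ k s = w ∧ s ++ [c] ∈ S).card : ℝ)))) := by
    apply Finset.sum_nonneg
    intro w _
    apply Finset.sum_nonneg
    intro c _
    exact XB.term_nonneg S w c
  rcases Nat.lt_or_ge σ 2 with hσ | hσ
  · interval_cases σ
    · -- σ = 0
      have h0 : xbwtRuns 0 S = 0 := by
        rw [xbwtRuns]
        simp
      rw [h0, hH]
      have hz : ((0:ℕ) : ℝ) ^ (k+1) = 0 := by
        norm_num
      rw [hz]
      push_cast
      linarith [hsum_nonneg]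
    · -- σ = 1
      have h1 : (xbwtRuns 1 S : ℝ) ≤ 1 := by
        exact_mod_cast XB.runs_le_one S hpc
      rw [hH]
      have hone : ((1:ℕ) : ℝ) ^ (k+1) = 1 := by norm_num
      rw [hone]
      linarith [hsum_nonneg]
  · -- main case σ ≥ 2
    have hsub : ∀ (w : Fin k → Option (Fin σ)) (c : Fin σ),
        (S.filter fun s => context σ k s = w ∧ s ++ [c] ∈ S) ⊆
          (S.filter fun s => context σ k s = w) := by
      intro w c s hs
      simp only [Finset.mem_filter] at hs ⊢
      exact ⟨hs.1, hs.2.1⟩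
    have key := XB.key_bound σ k hσ S
    calc (xbwtRuns σ S : ℝ)
        ≤ ((∑ w : Fin k → Option (Fin σ), ∑ c : Fin σ,
            2 * min ((S.filter fun s => context σ k s = w ∧ s ++ [c] ∈ S).card)
              ((S.filter fun s => context σ k s = w).card
                - (S.filter fun s => context σ k s = w ∧ s ++ [c] ∈ S).card)) + σ^(k+1) : ℕ) := by
          exact_mod_cast key
      _ ≤ (S.card : ℝ) * trieHk σ S k + (σ : ℝ) ^ (k + 1) := by
          rw [hH]
          push_cast [Nat.cast_sum]
          apply add_le_add_left
          apply Finset.sum_le_sum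
          intro w _
          apply Finset.sum_le_sum
          intro c _
          have h := XB.entropy_nat ((S.filter fun s => context σ k s = w ∧ s ++ [c] ∈ S).card)
            ((S.filter fun s => context σ k s = w).card)
            (Finset.card_le_card (hsub w c))
          exact_mod_cast h
end
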